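/- arXiv:1405.5446 — 9 statements merged into one kernel-verified Lean document; each statement's English description precedes it below -/
import Mathlib

section
/- Let κ > 0, α > 0 and δ < 0. For ε > 0 let ℓ_ε = ∫_δ^0 ds/(κ|s|^{1+α} + ε). Then lim_{ε→0⁺} ε^{α/(α+1)} · ℓ_ε = κ^{−1/(α+1)} · (π/(α+1))/sin(π/(α+1)). Equivalently, ℓ_ε ∼ ε^{−α/(α+1)} κ^{−1/(α+1)} (π/(α+1))/sin(π/(α+1)) as ε → 0⁺. -/
open Set MeasureTheory Real Filter

lemma contOn_aux {p : ℝ} (hp : 1 < p) {s : Set ℝ} (hs : ∀ x ∈ s, (0:ℝ) < x) :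
    ContinuousOn (fun u : ℝ => 1 / (1 + u ^ p)) s := by
  intro x hx
  have hx0 := hs x hx
  have h1 : ContinuousAt (fun u : ℝ => u ^ p) x :=
    Real.continuousAt_rpow_const x p (Or.inl (ne_of_gt hx0))
  have h2 : ContinuousAt (fun u : ℝ => 1 + u ^ p) x := continuousAt_const.add h1
  have h3 : (1 : ℝ) + x ^ p ≠ 0 := by positivity
  exact ((continuousAt_const.div h2 h3)).continuousWithinAt

lemma integrableOn_aux {p : ℝ} (hp : 1 < p) :
    IntegrableOn (fun u : ℝ => 1 / (1 + u ^ p)) (Ioi 0) := by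
  rw [show Ioi (0:ℝ) = Ioc 0 1 ∪ Ioi 1 from (Ioc_union_Ioi_eq_Ioi zero_le_one).symm]
  apply IntegrableOn.union
  · have hc : IntegrableOn (fun _ : ℝ => (1:ℝ)) (Ioc 0 1) := by
      exact integrableOn_const (by simp) (by simp)
    apply Integrable.mono' hc
    · exact (contOn_aux hp (fun x hx => hx.1)).aestronglyMeasurable measurableSet_Ioc
    · filter_upwards [ae_restrict_mem measurableSet_Ioc] with x hx
      have h0 : (0:ℝ) < x ^ p := Real.rpow_pos_of_pos hx.1 p
      rw [Real.norm_eq_abs, abs_of_nonneg (by positivity)]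
      rw [div_le_one (by linarith)]
      linarith
  · apply Integrable.mono' (integrableOn_Ioi_rpow_of_lt (by linarith : -p < -1) one_pos)
    · exact (contOn_aux hp (fun x hx => lt_trans one_pos hx)).aestronglyMeasurable
        measurableSet_Ioi
    · filter_upwards [ae_restrict_mem measurableSet_Ioi] with x hx
      have hx0 : (0:ℝ) < x := lt_trans one_pos hx
      have h0 : (0:ℝ) < x ^ p := Real.rpow_pos_of_pos hx0 p
      rw [Real.norm_eq_abs, abs_of_nonneg (by positivity), Real.rpow_neg hx0.le, ← one_div]
      apply div_le_div_of_nonneg_left one_pos.le h0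
      linarith

lemma real_beta_reflection {a : ℝ} (h0 : 0 < a) (h1 : a < 1) :
    ∫ t in (0:ℝ)..1, t ^ (a - 1) * (1 - t) ^ (-a) = π / Real.sin (π * a) := by
  have key : Complex.betaIntegral a (1 - a) = ((π / Real.sin (π * a) : ℝ) : ℂ) := by
    have h2 := Complex.Gamma_mul_Gamma_eq_betaIntegral (s := (a : ℂ)) (t := 1 - (a : ℂ))
      (by simpa using h0) (by simp [Complex.sub_re]; linarith)
    rw [add_sub_cancel, Complex.Gamma_one, one_mul] at h2
    rw [← h2, Complex.Gamma_mul_Gamma_one_sub]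
    push_cast
    ring_nf
  have hexp : Complex.betaIntegral a (1 - a)
      = ((∫ t in (0:ℝ)..1, t ^ (a - 1) * (1 - t) ^ (-a) : ℝ) : ℂ) := by
    rw [Complex.betaIntegral, ← intervalIntegral.integral_ofReal]
    apply intervalIntegral.integral_congr
    intro x hx
    rw [uIcc_of_le (by norm_num : (0:ℝ) ≤ 1)] at hx
    have h1x : (0:ℝ) ≤ 1 - x := by linarith [hx.2]
    simp only [Complex.ofReal_mul, Complex.ofReal_cpow hx.1, Complex.ofReal_cpow h1x]
    push_cast
    ring_nf
  rw [hexp] at key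
  exact_mod_cast key

lemma integral_ioi_aux {p : ℝ} (hp : 1 < p) :
    ∫ u in Ioi (0:ℝ), 1 / (1 + u ^ p) = (π / p) / Real.sin (π / p) := by
  have hp0 : (0:ℝ) < p := lt_trans one_pos hp
  set a : ℝ := 1 / p with ha
  have ha0 : 0 < a := by positivity
  have ha1 : a < 1 := by rw [ha, div_lt_one hp0]; exact hp
  -- the substitution map
  set f : ℝ → ℝ := fun t => (t / (1 - t)) ^ a with hf
  set f' : ℝ → ℝ := fun t => a * (t / (1 - t)) ^ (a - 1) * ((1 - t) ^ 2)⁻¹ with hf'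
  have hr : ∀ t ∈ Ioo (0:ℝ) 1, (0:ℝ) < t / (1 - t) := fun t ht =>
    div_pos ht.1 (by linarith [ht.2])
  have hderiv : ∀ t ∈ Ioo (0:ℝ) 1, HasDerivAt f (f' t) t := by
    intro t ht
    have h1t : (0:ℝ) < 1 - t := by linarith [ht.2]
    have hinner : HasDerivAt (fun t : ℝ => t / (1 - t)) (((1 - t) ^ 2)⁻¹) t := by
      have := (hasDerivAt_id t).div ((hasDerivAt_id t).const_sub 1) (ne_of_gt h1t)
      refine this.congr_deriv ?_
      simp only [id]
      ring
    have := hinner.rpow_const (p := a) (Or.inl (ne_of_gt (hr t ht)))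
    simpa [hf', mul_comm, mul_assoc, mul_left_comm] using this
  have hinj : InjOn f (Ioo 0 1) := by
    intro x hx y hy hxy
    have hx1 : (0:ℝ) < 1 - x := by linarith [hx.2]
    have hy1 : (0:ℝ) < 1 - y := by linarith [hy.2]
    have h2 : x / (1 - x) = y / (1 - y) := by
      have h3 := congrArg (fun z : ℝ => z ^ (p : ℝ)) hxy
      simpa [hf, ← Real.rpow_natCast, ← Real.rpow_mul (hr x hx).le,
        ← Real.rpow_mul (hr y hy).le, ha, one_div_mul_cancel (ne_of_gt hp0), inv_mul_cancel₀ (ne_of_gt hp0)] using h3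
    rw [div_eq_div_iff (ne_of_gt hx1) (ne_of_gt hy1)] at h2
    nlinarith
  have himg : f '' Ioo 0 1 = Ioi 0 := by
    apply Subset.antisymm
    · rintro _ ⟨t, ht, rfl⟩
      exact Real.rpow_pos_of_pos (hr t ht) a
    · intro u hu
      have hu0 : (0:ℝ) < u := hu
      have hup : (0:ℝ) < u ^ p := Real.rpow_pos_of_pos hu0 p
      refine ⟨u ^ p / (1 + u ^ p), ⟨by positivity, by rw [div_lt_one (by linarith)]; linarith⟩, ?_⟩
      have h1 : 1 - u ^ p / (1 + u ^ p) = 1 / (1 + u ^ p) := by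
        field_simp
        ring
      have h2 : u ^ p / (1 + u ^ p) / (1 / (1 + u ^ p)) = u ^ p := by
        field_simp
      rw [hf]
      simp only [h1, h2]
      rw [← Real.rpow_mul hu0.le, ha, mul_one_div, div_self (ne_of_gt hp0), Real.rpow_one]
  calc ∫ u in Ioi (0:ℝ), 1 / (1 + u ^ p)
      = ∫ t in Ioo (0:ℝ) 1, |f' t| • (1 / (1 + (f t) ^ p)) := by
        rw [← himg]
        exact integral_image_eq_integral_abs_deriv_smul measurableSet_Ioo
          (fun x hx => (hderiv x hx).hasDerivWithinAt) hinj _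
    _ = ∫ t in Ioo (0:ℝ) 1, a * (t ^ (a - 1) * (1 - t) ^ (-a)) := by
        apply setIntegral_congr_fun measurableSet_Ioo
        intro t ht
        have h1t : (0:ℝ) < 1 - t := by linarith [ht.2]
        have hrt := hr t ht
        have hftp : f t ^ p = t / (1 - t) := by
          rw [hf]; dsimp only
          rw [← Real.rpow_mul hrt.le, ha, one_div, inv_mul_cancel₀ (ne_of_gt hp0), Real.rpow_one]
        have hsum : 1 + f t ^ p = (1 - t)⁻¹ := by
          rw [hftp]; field_simp; ring
        have habs : |f' t| = f' t := abs_of_nonneg (by rw [hf']; positivity)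
        dsimp only
        rw [smul_eq_mul, habs, hsum, hf']
        dsimp only
        rw [one_div, inv_inv, Real.div_rpow ht.1.le h1t.le]
        have hkey : ((1 - t) ^ (a - 1))⁻¹ * (1 - t)⁻¹ = (1 - t) ^ (-a) := by
          rw [← Real.rpow_neg h1t.le, ← Real.rpow_neg_one (1 - t), ← Real.rpow_add h1t]
          ring_nf
        rw [div_eq_mul_inv, ← hkey]
        have hY : (1 - t) ^ (a - 1) ≠ 0 := (Real.rpow_pos_of_pos h1t _).ne'
        field_simp
    _ = a * ∫ t in (0:ℝ)..1, t ^ (a - 1) * (1 - t) ^ (-a) := by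
        rw [MeasureTheory.integral_const_mul, intervalIntegral.integral_of_le zero_le_one,
          integral_Ioc_eq_integral_Ioo]
    _ = (π / p) / Real.sin (π / p) := by
        rw [real_beta_reflection ha0 ha1, ha, mul_one_div π p]
        ring

/-- with ℓ_ε = ∫_δ^0 ds/(κ|s|^{1+α} + ε) one has
ε^{α/(α+1)} ℓ_ε → κ^{−1/(α+1)} (π/(α+1))/sin(π/(α+1)) as ε → 0⁺. -/
theorem stmt_2 (κ α δ : ℝ) (hκ : 0 < κ) (hα : 0 < α) (hδ : δ < 0)
    (ℓ : ℝ → ℝ)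
    (hℓ : ∀ ε, 0 < ε → ℓ ε = ∫ s in δ..(0 : ℝ), 1 / (κ * |s| ^ (1 + α) + ε)) :
    Tendsto (fun ε : ℝ => ε ^ (α / (α + 1)) * ℓ ε) (nhdsWithin 0 (Ioi 0))
      (nhds (κ ^ (-(1 / (α + 1))) * ((π / (α + 1)) / Real.sin (π / (α + 1))))) := by
  have hp : (1:ℝ) < α + 1 := by linarith
  have hp0 : (0:ℝ) < α + 1 := by linarith
  simp only [show (1:ℝ) + α = α + 1 from add_comm 1 α] at hℓ
  set q : ℝ := 1 / (α + 1) with hq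
  have hq0 : 0 < q := by positivity
  have hq1 : q * (α + 1) = 1 := by rw [hq]; field_simp
  set T : ℝ → ℝ := fun ε => -δ / (ε / κ) ^ q with hT
  have hTend : Tendsto T (nhdsWithin 0 (Ioi 0)) atTop := by
    have t1 : Tendsto (fun ε : ℝ => κ * ε⁻¹) (nhdsWithin 0 (Ioi 0)) atTop :=
      tendsto_inv_nhdsGT_zero.const_mul_atTop hκ
    have t2 : Tendsto (fun ε : ℝ => (κ * ε⁻¹) ^ q) (nhdsWithin 0 (Ioi 0)) atTop :=
      (tendsto_rpow_atTop hq0).comp t1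
    have t3 := t2.const_mul_atTop (neg_pos.2 hδ)
    apply t3.congr'
    filter_upwards [self_mem_nhdsWithin] with ε (hε : 0 < ε)
    rw [hT]
    dsimp only
    rw [div_eq_mul_inv (-δ), ← Real.inv_rpow (by positivity), inv_div, div_eq_mul_inv κ]
  have hJ : Tendsto
      (fun ε => κ ^ (-q) * ∫ u in (0:ℝ)..(T ε), 1 / (1 + u ^ (α + 1)))
      (nhdsWithin 0 (Ioi 0))
      (nhds (κ ^ (-q) * ((π / (α + 1)) / Real.sin (π / (α + 1))))) := by
    have h1 := MeasureTheory.intervalIntegral_tendsto_integral_Ioi 0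
      (integrableOn_aux hp) hTend
    rw [integral_ioi_aux hp] at h1
    exact h1.const_mul _
  apply Filter.Tendsto.congr' _ hJ
  filter_upwards [self_mem_nhdsWithin] with ε (hε : 0 < ε)
  set J : ℝ := ∫ u in (0:ℝ)..(T ε), 1 / (1 + u ^ (α + 1)) with hJdef
  set c : ℝ := (ε / κ) ^ q with hcdef
  have hc : 0 < c := Real.rpow_pos_of_pos (div_pos hε hκ) q
  have hTpos : 0 < T ε := by rw [hT]; exact div_pos (by linarith) hc
  have hcp : κ * c ^ (α + 1) = ε := by
    rw [hcdef, ← Real.rpow_mul (div_nonneg hε.le hκ.le), hq1, Real.rpow_one,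
      mul_div_cancel₀ _ hκ.ne']
  have hA : (∫ x in (0:ℝ)..(-δ), 1 / (κ * |(-x)| ^ (α + 1) + ε))
      = ∫ s in δ..(0:ℝ), 1 / (κ * |s| ^ (α + 1) + ε) := by
    simpa using intervalIntegral.integral_comp_neg
      (a := 0) (b := -δ) (fun s => 1 / (κ * |s| ^ (α + 1) + ε))
  have hB : (∫ x in (0:ℝ)..(-δ), 1 / (κ * |(-x)| ^ (α + 1) + ε))
      = ∫ x in (0:ℝ)..(-δ), 1 / (κ * x ^ (α + 1) + ε) := by
    apply intervalIntegral.integral_congr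
    intro x hx
    rw [uIcc_of_le (by linarith : (0:ℝ) ≤ -δ)] at hx
    dsimp only
    rw [abs_neg, abs_of_nonneg hx.1]
  have hC : (∫ x in (0:ℝ)..(-δ), 1 / (κ * x ^ (α + 1) + ε))
      = c * ∫ u in (0:ℝ)..(T ε), 1 / (κ * (c * u) ^ (α + 1) + ε) := by
    have h2 := intervalIntegral.smul_integral_comp_mul_left (a := 0) (b := T ε)
      (fun x => 1 / (κ * x ^ (α + 1) + ε)) c
    have hcT : c * T ε = -δ := by
      rw [hT]; dsimp only; rw [mul_comm, div_mul_cancel₀ _ hc.ne']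
    rw [mul_zero, hcT, smul_eq_mul] at h2
    exact h2.symm
  have hD : (∫ u in (0:ℝ)..(T ε), 1 / (κ * (c * u) ^ (α + 1) + ε))
      = ε⁻¹ * J := by
    rw [hJdef, ← intervalIntegral.integral_const_mul]
    apply intervalIntegral.integral_congr
    intro u hu
    rw [uIcc_of_le hTpos.le] at hu
    dsimp only
    have hX : (0:ℝ) ≤ u ^ (α + 1) := Real.rpow_nonneg hu.1 _
    rw [Real.mul_rpow hc.le hu.1, show κ * (c ^ (α+1) * u ^ (α+1)) + ε
        = (κ * c ^ (α+1)) * u ^ (α+1) + ε by ring, hcp]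
    rw [show ε * u ^ (α+1) + ε = ε * (1 + u ^ (α+1)) by ring]
    rw [one_div, mul_inv, one_div]
  have hcoef : ε ^ (α / (α + 1)) * c * ε⁻¹ = κ ^ (-q) := by
    rw [hcdef, Real.div_rpow hε.le hκ.le]
    rw [show ε ^ (α / (α + 1)) * (ε ^ q / κ ^ q) * ε⁻¹
        = (ε ^ (α / (α + 1)) * ε ^ q) * ε⁻¹ / κ ^ q by ring]
    rw [← Real.rpow_add hε, hq, ← add_div, div_self hp0.ne', Real.rpow_one,
      mul_inv_cancel₀ hε.ne', Real.rpow_neg hκ.le, one_div]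
  have hl : ℓ ε = c * (ε⁻¹ * J) := by
    rw [hℓ ε hε, ← hA, hB, hC, hD]
  rw [hl, ← hcoef]
  ring
end

section
/- Let κ > 0, α > 0 and δ < 0. For every ε > 0, sup_{x₁ ∈ [0, ℓ_ε)} |μ_ε(x₁) − μ₀(x₁)| ≤ |μ₀(ℓ_ε)|, and consequently sup_{x₁ ∈ [0, ℓ_ε)} |μ_ε(x₁) − μ₀(x₁)| → 0 as ε → 0⁺ (note μ₀(ℓ_ε) → 0 as ε → 0⁺ since ℓ_ε → +∞). -/
open Set MeasureTheory intervalIntegral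

private lemma stmt3_psi_mono {c pp : ℝ} (hc : 0 ≤ c) (hp : 1 ≤ pp) :
    MonotoneOn (fun x : ℝ => (x + c) ^ pp - x ^ pp) (Ici 0) := by
  have hpp : (0:ℝ) ≤ pp := by linarith
  apply monotoneOn_of_deriv_nonneg (convex_Ici 0)
  · exact ((Real.continuous_rpow_const hpp).comp
      (continuous_id.add continuous_const)).continuousOn.sub
      (Real.continuous_rpow_const hpp).continuousOn
  · intro x hx
    rw [interior_Ici] at hx
    have hx0 : (0:ℝ) < x := hx
    have h1 : HasDerivAt (fun x : ℝ => (x + c) ^ pp) (pp * (x + c) ^ (pp - 1) * 1) x := by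
      exact (Real.hasDerivAt_rpow_const (Or.inl (by positivity))).comp x
        ((hasDerivAt_id x).add_const c)
    have h2 : HasDerivAt (fun x : ℝ => x ^ pp) (pp * x ^ (pp - 1)) x :=
      Real.hasDerivAt_rpow_const (Or.inl (ne_of_gt hx0))
    exact (h1.sub h2).differentiableAt.differentiableWithinAt
  · intro x hx
    rw [interior_Ici] at hx
    have hx0 : (0:ℝ) < x := hx
    have h1 : HasDerivAt (fun x : ℝ => (x + c) ^ pp) (pp * (x + c) ^ (pp - 1) * 1) x := by
      exact (Real.hasDerivAt_rpow_const (Or.inl (by positivity))).comp x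
        ((hasDerivAt_id x).add_const c)
    have h2 : HasDerivAt (fun x : ℝ => x ^ pp) (pp * x ^ (pp - 1)) x :=
      Real.hasDerivAt_rpow_const (Or.inl (ne_of_gt hx0))
    rw [show deriv (fun x : ℝ => (x + c) ^ pp - x ^ pp) x = _ from (h1.sub h2).deriv]
    have : x ^ (pp - 1) ≤ (x + c) ^ (pp - 1) :=
      Real.rpow_le_rpow hx0.le (by linarith) (by linarith)
    nlinarith

private lemma stmt3_ftc {κ α p q : ℝ} (hκ : 0 < κ) (hα : 0 < α) (hp : 0 < p) (hpq : p ≤ q) :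
    ∫ t in p..q, 1 / (κ * t ^ (1 + α)) = (α * κ)⁻¹ * (p ^ (-α) - q ^ (-α)) := by
  have h0 : (0:ℝ) ∉ (Set.uIcc p q) := by
    rw [uIcc_of_le hpq]
    intro h
    exact absurd h.1 (by linarith)
  have hcongr : EqOn (fun t : ℝ => 1 / (κ * t ^ (1 + α)))
      (fun t : ℝ => κ⁻¹ * t ^ (-(1 + α))) (Set.uIcc p q) := by
    intro t ht
    rw [uIcc_of_le hpq] at ht
    have ht0 : 0 < t := lt_of_lt_of_le hp ht.1
    simp only
    rw [Real.rpow_neg ht0.le]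
    field_simp
  rw [integral_congr hcongr, intervalIntegral.integral_const_mul,
    integral_rpow (Or.inr ⟨by intro h; nlinarith [h ▸ (rfl : (-1:ℝ) = -1)], h0⟩)]
  have he : -(1 + α) + 1 = -α := by ring
  rw [he]
  have hα' : α ≠ 0 := ne_of_gt hα
  field_simp
  ring

private lemma stmt3_contOn_fe {κ α ε : ℝ} (hκ : 0 < κ) (hα : 0 < α) (hε : 0 < ε) :
    ContinuousOn (fun t : ℝ => 1 / (κ * t ^ (1 + α) + ε)) (Ici 0) := by
  apply ContinuousOn.div continuousOn_const
  · exact ((continuous_const.mul (Real.continuous_rpow_const (by linarith))).add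
      continuous_const).continuousOn
  · intro t ht
    have : (0:ℝ) ≤ t ^ (1 + α) := Real.rpow_nonneg ht _
    positivity

private lemma stmt3_contOn_f0c {κ α c : ℝ} (hκ : 0 < κ) (hα : 0 < α) (hc : 0 < c) :
    ContinuousOn (fun t : ℝ => 1 / (κ * (t + c) ^ (1 + α))) (Ici 0) := by
  apply ContinuousOn.div continuousOn_const
  · exact (continuous_const.mul ((Real.continuous_rpow_const (by linarith)).comp
      (continuous_id.add continuous_const))).continuousOn
  · intro t ht
    have htc : (0:ℝ) < t + c := by
      have : (0:ℝ) ≤ t := ht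
      linarith
    have : (0:ℝ) < (t + c) ^ (1 + α) := Real.rpow_pos_of_pos htc _
    positivity

private lemma stmt3_key {κ α ε d c a : ℝ} (hκ : 0 < κ) (hα : 0 < α) (hε : 0 < ε)
    (hd : 0 < d) (hc : 0 < c) (ha : 0 < a) (had : a ≤ d) (hacd : a + c ≤ d)
    (hcdef : (∫ t in c..d, 1 / (κ * t ^ (1 + α)))
      = ∫ t in (0:ℝ)..d, 1 / (κ * t ^ (1 + α) + ε)) :
    (∫ t in (a + c)..d, 1 / (κ * t ^ (1 + α)))
      ≤ ∫ t in a..d, 1 / (κ * t ^ (1 + α) + ε) := by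
  set fε : ℝ → ℝ := fun t => 1 / (κ * t ^ (1 + α) + ε) with hfε
  set g : ℝ → ℝ := fun t => 1 / (κ * (t + c) ^ (1 + α)) with hg
  have hfεc := stmt3_contOn_fe hκ hα hε
  have hgc := stmt3_contOn_f0c hκ hα hc
  -- integrability helpers
  have hInt : ∀ u v : ℝ, 0 ≤ u → u ≤ v → IntervalIntegrable fε volume u v := by
    intro u v hu huv
    exact (hfεc.mono (by rw [uIcc_of_le huv]; intro z hz; exact le_trans hu hz.1)).intervalIntegrable
  have hIntg : ∀ u v : ℝ, 0 ≤ u → u ≤ v → IntervalIntegrable g volume u v := by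
    intro u v hu huv
    exact (hgc.mono (by rw [uIcc_of_le huv]; intro z hz; exact le_trans hu hz.1)).intervalIntegrable
  -- pointwise positivity of denominators
  have hden : ∀ t : ℝ, 0 ≤ t → (0:ℝ) < κ * t ^ (1 + α) + ε := by
    intro t ht
    have : (0:ℝ) ≤ t ^ (1 + α) := Real.rpow_nonneg ht _
    positivity
  have hdeng : ∀ t : ℝ, 0 ≤ t → (0:ℝ) < κ * (t + c) ^ (1 + α) := by
    intro t ht
    have : (0:ℝ) < (t + c) ^ (1 + α) := Real.rpow_pos_of_pos (by linarith) _
    positivity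
  have hM := stmt3_psi_mono (le_of_lt hc) (by linarith : (1:ℝ) ≤ 1 + α)
  by_cases hψ : κ * (a + c) ^ (1 + α) ≤ κ * a ^ (1 + α) + ε
  · -- case 1: increasing region, compare from the left
    have hcomp : ∀ t ∈ Icc (0:ℝ) a, fε t ≤ g t := by
      intro t ht
      have hmono : (t + c) ^ (1 + α) - t ^ (1 + α) ≤ (a + c) ^ (1 + α) - a ^ (1 + α) :=
        hM ht.1 (le_of_lt ha) ht.2
      have h1 : κ * (t + c) ^ (1 + α) ≤ κ * t ^ (1 + α) + ε := by nlinarith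
      rw [hfε, hg]
      exact one_div_le_one_div_of_le (hdeng t ht.1) (by nlinarith [hdeng t ht.1])
    have hcmp : (∫ t in (0:ℝ)..a, fε t) ≤ ∫ t in (0:ℝ)..a, g t :=
      integral_mono_on (le_of_lt ha) (hInt 0 a le_rfl (le_of_lt ha))
        (hIntg 0 a le_rfl (le_of_lt ha)) hcomp
    have hshift : (∫ t in (0:ℝ)..a, g t) = ∫ t in c..(a + c), 1 / (κ * t ^ (1 + α)) := by
      have h2 := integral_comp_add_right (a := (0:ℝ)) (b := a)
        (f := fun t => 1 / (κ * t ^ (1 + α))) c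
      rw [zero_add] at h2
      exact h2
    have hIi0 : ∀ u v : ℝ, c ≤ u → u ≤ v →
        IntervalIntegrable (fun t : ℝ => 1 / (κ * t ^ (1 + α))) volume u v := by
      intro u v hu huv
      apply ContinuousOn.intervalIntegrable
      apply ContinuousOn.div continuousOn_const
      · exact (continuous_const.mul (Real.continuous_rpow_const (by linarith))).continuousOn
      · intro t ht
        rw [uIcc_of_le huv] at ht
        have ht0 : (0:ℝ) < t := by have := ht.1; linarith
        have : (0:ℝ) < t ^ (1 + α) := Real.rpow_pos_of_pos ht0 _
        positivity
    have hsplit0 : (∫ t in c..(a + c), 1 / (κ * t ^ (1 + α)))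
        + (∫ t in (a + c)..d, 1 / (κ * t ^ (1 + α)))
        = ∫ t in c..d, 1 / (κ * t ^ (1 + α)) :=
      integral_add_adjacent_intervals (hIi0 c (a + c) le_rfl (by linarith))
        (hIi0 (a + c) d (by linarith) hacd)
    have hsplitε : (∫ t in (0:ℝ)..a, fε t) + (∫ t in a..d, fε t) = ∫ t in (0:ℝ)..d, fε t :=
      integral_add_adjacent_intervals (hInt 0 a le_rfl (le_of_lt ha)) (hInt a d (le_of_lt ha) had)
    have : (∫ t in c..(a+c), 1 / (κ * t ^ (1 + α))) ≥ ∫ t in (0:ℝ)..a, fε t := by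
      rw [← hshift]; exact hcmp
    linarith [hcdef, hsplit0, hsplitε, this]
  · -- case 2: decreasing region, compare from the right
    push_neg at hψ
    have hadc : a ≤ d - c := by linarith
    have hcomp : ∀ t ∈ Icc a (d - c), g t ≤ fε t := by
      intro t ht
      have hmono : (a + c) ^ (1 + α) - a ^ (1 + α) ≤ (t + c) ^ (1 + α) - t ^ (1 + α) :=
        hM (le_of_lt ha) (le_trans (le_of_lt ha) ht.1) ht.1
      have ht0 : (0:ℝ) ≤ t := le_trans (le_of_lt ha) ht.1
      have h1 : κ * t ^ (1 + α) + ε ≤ κ * (t + c) ^ (1 + α) := by nlinarith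
      rw [hfε, hg]
      exact one_div_le_one_div_of_le (hden t ht0) h1
    have hcmp : (∫ t in a..(d - c), g t) ≤ ∫ t in a..(d - c), fε t :=
      integral_mono_on hadc (hIntg a (d - c) (le_of_lt ha) hadc)
        (hInt a (d - c) (le_of_lt ha) hadc) hcomp
    have hshift : (∫ t in a..(d - c), g t) = ∫ t in (a + c)..d, 1 / (κ * t ^ (1 + α)) := by
      have h2 := integral_comp_add_right (a := a) (b := d - c)
        (f := fun t => 1 / (κ * t ^ (1 + α))) c
      rw [sub_add_cancel] at h2
      exact h2
    have hsplitε : (∫ t in a..(d - c), fε t) + (∫ t in (d - c)..d, fε t)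
        = ∫ t in a..d, fε t :=
      integral_add_adjacent_intervals (hInt a (d - c) (le_of_lt ha) hadc)
        (hInt (d - c) d (by linarith) (by linarith))
    have hnn : (0:ℝ) ≤ ∫ t in (d - c)..d, fε t := by
      apply integral_nonneg (by linarith)
      intro u hu
      have := hden u (by linarith [hu.1])
      rw [hfε]
      positivity
    linarith [hcmp, hshift, hsplitε, hnn]

private lemma stmt3_conv {κ α ε δ m : ℝ} (hδ : δ < 0) (hm : m ≤ 0) :
    (∫ s in δ..m, 1 / (κ * |s| ^ (1 + α) + ε))
      = ∫ t in (-m)..(-δ), 1 / (κ * t ^ (1 + α) + ε) := by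
  have h1 : (∫ s in δ..m, 1 / (κ * |s| ^ (1 + α) + ε))
      = ∫ s in δ..m, (fun t : ℝ => 1 / (κ * |t| ^ (1 + α) + ε)) (-s) := by
    apply integral_congr
    intro s _
    simp [abs_neg]
  rw [h1, integral_comp_neg (fun t : ℝ => 1 / (κ * |t| ^ (1 + α) + ε))]
  apply integral_congr
  intro t ht
  have ht0 : 0 ≤ t := by
    rcases Set.mem_uIcc.mp ht with h | h
    · linarith [h.1]
    · linarith [h.1]
  simp only
  rw [abs_of_nonneg ht0]

private lemma stmt3_int_fe {κ α ε u v : ℝ} (hκ : 0 < κ) (hα : 0 < α) (hε : 0 < ε)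
    (hu : 0 ≤ u) (huv : u ≤ v) :
    IntervalIntegrable (fun t : ℝ => 1 / (κ * t ^ (1 + α) + ε)) volume u v :=
  ((stmt3_contOn_fe hκ hα hε).mono
    (by rw [uIcc_of_le huv]; intro z hz; exact le_trans hu hz.1)).intervalIntegrable

private lemma stmt3_int_f0 {κ α u v : ℝ} (hκ : 0 < κ) (hα : 0 < α)
    (hu : 0 < u) (huv : u ≤ v) :
    IntervalIntegrable (fun t : ℝ => 1 / (κ * t ^ (1 + α))) volume u v := by
  apply ContinuousOn.intervalIntegrable
  apply ContinuousOn.div continuousOn_const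
  · exact (continuous_const.mul (Real.continuous_rpow_const (by linarith))).continuousOn
  · intro t ht
    rw [uIcc_of_le huv] at ht
    have ht0 : (0:ℝ) < t := lt_of_lt_of_le hu ht.1
    have : (0:ℝ) < t ^ (1 + α) := Real.rpow_pos_of_pos ht0 _
    positivity

set_option maxHeartbeats 1600000 in
/-- sup_{x₁ ∈ [0,ℓ_ε)} |μ_ε(x₁) − μ₀(x₁)| ≤ |μ₀(ℓ_ε)|, and this sup tends
to 0 as ε → 0⁺. Here μ_ε is the inverse of ρ_ε(ξ₁) = ∫_δ^{ξ₁} ds/(κ|s|^{1+α}+ε) on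
[0, ℓ_ε), and μ₀ is given by the explicit formula. -/
theorem stmt_3 (κ α δ : ℝ) (hκ : 0 < κ) (hα : 0 < α) (hδ : δ < 0)
    (xhat : ℝ) (hxhat : xhat = (α * κ)⁻¹ * |δ| ^ (-α))
    (ℓ : ℝ → ℝ)
    (hℓ : ∀ ε, 0 < ε → ℓ ε = ∫ s in δ..(0 : ℝ), 1 / (κ * |s| ^ (1 + α) + ε))
    (μ : ℝ → ℝ → ℝ)
    (hμ0 : ∀ x₁, μ 0 x₁ = -((α * κ) ^ (-(1 / α)) * (x₁ + xhat) ^ (-(1 / α))))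
    (hμ : ∀ ε, 0 < ε → ∀ x₁ ∈ Ico (0 : ℝ) (ℓ ε),
      μ ε x₁ ∈ Ico δ 0 ∧ (∫ s in δ..(μ ε x₁), 1 / (κ * |s| ^ (1 + α) + ε)) = x₁) :
    (∀ ε, 0 < ε → ∀ x₁ ∈ Ico (0 : ℝ) (ℓ ε), |μ ε x₁ - μ 0 x₁| ≤ |μ 0 (ℓ ε)|) ∧
    (∀ η > (0 : ℝ), ∃ ε₀ > (0 : ℝ), ∀ ε, 0 < ε → ε < ε₀ →
      ∀ x₁ ∈ Ico (0 : ℝ) (ℓ ε), |μ ε x₁ - μ 0 x₁| < η) := by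
  have hα0 : α ≠ 0 := ne_of_gt hα
  have hd : (0:ℝ) < -δ := by linarith
  have hA : (0:ℝ) < α * κ := by positivity
  have habsδ : |δ| = -δ := abs_of_neg hδ
  have hxh : xhat = (α * κ)⁻¹ * (-δ) ^ (-α) := by rw [hxhat, habsδ]
  have hdα : (0:ℝ) < (-δ) ^ (-α) := Real.rpow_pos_of_pos hd _
  have hxh0 : 0 < xhat := by rw [hxh]; positivity
  have hAxh : α * κ * xhat = (-δ) ^ (-α) := by
    rw [hxh, ← mul_assoc, mul_inv_cancel₀ (ne_of_gt hA), one_mul]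
  -- the core estimate
  have hcore : ∀ ε, 0 < ε → ∀ x₁ ∈ Ico (0 : ℝ) (ℓ ε),
      |μ ε x₁ - μ 0 x₁| ≤ (α * κ * (ℓ ε + xhat)) ^ (-(1 / α)) ∧
      |μ 0 (ℓ ε)| = (α * κ * (ℓ ε + xhat)) ^ (-(1 / α)) := by
    intro ε hε x₁ hx₁
    obtain ⟨hmem, hint⟩ := hμ ε hε x₁ hx₁
    obtain ⟨hx0, hxl⟩ := hx₁
    have hlp : 0 < ℓ ε := lt_of_le_of_lt hx0 hxl
    have ha : 0 < -(μ ε x₁) := by linarith [hmem.2]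
    have had : -(μ ε x₁) ≤ -δ := by linarith [hmem.1]
    have hx : (∫ t in (-(μ ε x₁))..(-δ), 1 / (κ * t ^ (1 + α) + ε)) = x₁ := by
      rw [← stmt3_conv hδ (le_of_lt hmem.2)]; exact hint
    have hle : ℓ ε = ∫ t in (0:ℝ)..(-δ), 1 / (κ * t ^ (1 + α) + ε) := by
      rw [hℓ ε hε, stmt3_conv hδ le_rfl, neg_zero]
    have hXb : (0:ℝ) < α * κ * (x₁ + xhat) := by positivity
    have hXc : (0:ℝ) < α * κ * (ℓ ε + xhat) := by positivity
    set a := -(μ ε x₁) with ha_def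
    set b := (α * κ * (x₁ + xhat)) ^ (-(1 / α)) with hbdef
    set c := (α * κ * (ℓ ε + xhat)) ^ (-(1 / α)) with hcdef
    have hb : 0 < b := Real.rpow_pos_of_pos hXb _
    have hc : 0 < c := Real.rpow_pos_of_pos hXc _
    have hexp : (-(1 / α)) * (-α) = 1 := by field_simp
    have hbpow : b ^ (-α) = α * κ * x₁ + (-δ) ^ (-α) := by
      rw [hbdef, ← Real.rpow_mul hXb.le, hexp, Real.rpow_one, mul_add, hAxh]
    have hcpow : c ^ (-α) = α * κ * ℓ ε + (-δ) ^ (-α) := by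
      rw [hcdef, ← Real.rpow_mul hXc.le, hexp, Real.rpow_one, mul_add, hAxh]
    have hμ0x : μ 0 x₁ = -b := by
      rw [hμ0 x₁, hbdef, Real.mul_rpow (le_of_lt hA) (by linarith : (0:ℝ) ≤ x₁ + xhat)]
    have hμ0l : μ 0 (ℓ ε) = -c := by
      rw [hμ0 (ℓ ε), hcdef, Real.mul_rpow (le_of_lt hA) (by linarith : (0:ℝ) ≤ ℓ ε + xhat)]
    have habs : |μ 0 (ℓ ε)| = c := by rw [hμ0l, abs_neg, abs_of_nonneg hc.le]
    -- lower bound : a ≤ b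
    have hfled : x₁ ≤ (α * κ)⁻¹ * (a ^ (-α) - (-δ) ^ (-α)) := by
      rw [← hx, ← stmt3_ftc hκ hα ha had]
      apply integral_mono_on had (stmt3_int_fe hκ hα hε ha.le had) (stmt3_int_f0 hκ hα ha had)
      intro t ht
      have ht0 : 0 < t := lt_of_lt_of_le ha ht.1
      have htp : (0:ℝ) < κ * t ^ (1 + α) := by
        have := Real.rpow_pos_of_pos ht0 (1 + α); positivity
      exact one_div_le_one_div_of_le htp (by linarith)
    have hfled' : α * κ * x₁ ≤ a ^ (-α) - (-δ) ^ (-α) := by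
      have h := mul_le_mul_of_nonneg_left hfled hA.le
      rwa [← mul_assoc, mul_inv_cancel₀ (ne_of_gt hA), one_mul] at h
    have hab : a ≤ b := by
      have h1 : b ^ (-α) ≤ a ^ (-α) := by rw [hbpow]; linarith
      exact (Real.rpow_le_rpow_iff_of_neg hb ha (by linarith : -α < 0)).mp h1
    -- c ≤ -δ
    have hcd : c ≤ -δ := by
      have h1 : (-δ) ^ (-α) ≤ c ^ (-α) := by rw [hcpow]; nlinarith
      exact (Real.rpow_le_rpow_iff_of_neg hd hc (by linarith : -α < 0)).mp h1
    -- upper bound : b ≤ a + c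
    have hbc : b ≤ a + c := by
      by_cases hcase : a + c ≤ -δ
      · have hcint : (∫ t in c..(-δ), 1 / (κ * t ^ (1 + α)))
            = ∫ t in (0:ℝ)..(-δ), 1 / (κ * t ^ (1 + α) + ε) := by
          rw [stmt3_ftc hκ hα hc hcd, ← hle, hcpow]
          field_simp
          ring
        have hkey := stmt3_key hκ hα hε hd hc ha had hcase hcint
        rw [stmt3_ftc hκ hα (by linarith : (0:ℝ) < a + c) hcase, hx] at hkey
        have h2 : (a + c) ^ (-α) - (-δ) ^ (-α) ≤ α * κ * x₁ := by
          have h := mul_le_mul_of_nonneg_left hkey hA.le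
          rwa [← mul_assoc, mul_inv_cancel₀ (ne_of_gt hA), one_mul] at h
        have h3 : (a + c) ^ (-α) ≤ b ^ (-α) := by rw [hbpow]; linarith
        exact (Real.rpow_le_rpow_iff_of_neg (by linarith : (0:ℝ) < a + c) hb
          (by linarith : -α < 0)).mp h3
      · have hbd : b ≤ -δ := by
          have h1 : (-δ) ^ (-α) ≤ b ^ (-α) := by rw [hbpow]; nlinarith
          exact (Real.rpow_le_rpow_iff_of_neg hd hb (by linarith : -α < 0)).mp h1
        linarith
    refine ⟨?_, habs⟩
    rw [hμ0x]
    have hma : μ ε x₁ = -a := by rw [ha_def, neg_neg]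
    rw [hma, show -a - -b = b - a by ring, abs_of_nonneg (by linarith)]
    linarith
  constructor
  · intro ε hε x₁ hx₁
    obtain ⟨h1, h2⟩ := hcore ε hε x₁ hx₁
    rw [h2]; exact h1
  · intro η hη
    set L' : ℝ := max ((α * κ)⁻¹ * η ^ (-α)) 1 with hL'def
    have hL'1 : (1:ℝ) ≤ L' := le_max_right _ _
    have hL'0 : (0:ℝ) < L' := by linarith
    have h2κL' : (0:ℝ) < 2 * κ * L' := mul_pos (by linarith : (0:ℝ) < 2 * κ) hL'0
    set r : ℝ := min (-δ) ((2 * κ * L') ^ (-(1 / α))) with hrdef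
    have hr0 : 0 < r := lt_min hd (Real.rpow_pos_of_pos h2κL' _)
    have hrd : r ≤ -δ := min_le_left _ _
    have hu : (0:ℝ) < r ^ α := Real.rpow_pos_of_pos hr0 _
    have hru : 2 * κ * L' * r ^ α ≤ 1 := by
      have h1 : r ≤ (2 * κ * L') ^ (-(1 / α)) := min_le_right _ _
      have h2 : ((2 * κ * L') ^ (-(1 / α))) ^ (-α) ≤ r ^ (-α) :=
        Real.rpow_le_rpow_of_nonpos hr0 h1 (by linarith)
      rw [← Real.rpow_mul h2κL'.le, show (-(1 / α)) * (-α) = 1 by field_simp,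
        Real.rpow_one, Real.rpow_neg hr0.le] at h2
      have h3 := mul_le_mul_of_nonneg_right h2 hu.le
      rwa [inv_mul_cancel₀ (ne_of_gt hu)] at h3
    refine ⟨κ * r ^ (1 + α), by positivity, ?_⟩
    intro ε hε hεlt x₁ hx₁
    obtain ⟨h1, _⟩ := hcore ε hε x₁ hx₁
    refine lt_of_le_of_lt h1 ?_
    -- lower bound on ℓ ε
    have hle : ℓ ε = ∫ t in (0:ℝ)..(-δ), 1 / (κ * t ^ (1 + α) + ε) := by
      rw [hℓ ε hε, stmt3_conv hδ le_rfl, neg_zero]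
    have hrp : r ^ (1 + α) = r * r ^ α := by
      rw [Real.rpow_add hr0, Real.rpow_one]
    have hDpos : (0:ℝ) < κ * r ^ (1 + α) + ε := by positivity
    have hconstle : (∫ _t in (0:ℝ)..r, 1 / (κ * r ^ (1 + α) + ε))
        ≤ ∫ t in (0:ℝ)..r, 1 / (κ * t ^ (1 + α) + ε) := by
      apply integral_mono_on hr0.le intervalIntegrable_const
        (stmt3_int_fe hκ hα hε le_rfl hr0.le)
      intro t ht
      have htp : (0:ℝ) < κ * t ^ (1 + α) + ε := by
        have := Real.rpow_nonneg ht.1 (1 + α); positivity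
      apply one_div_le_one_div_of_le htp
      have := Real.rpow_le_rpow ht.1 ht.2 (by linarith : (0:ℝ) ≤ 1 + α)
      nlinarith
    have hconstval : (∫ _t in (0:ℝ)..r, 1 / (κ * r ^ (1 + α) + ε))
        = r * (1 / (κ * r ^ (1 + α) + ε)) := by
      rw [intervalIntegral.integral_const, smul_eq_mul, sub_zero]
    have hsplit : (∫ t in (0:ℝ)..r, 1 / (κ * t ^ (1 + α) + ε))
        + (∫ t in r..(-δ), 1 / (κ * t ^ (1 + α) + ε))
        = ∫ t in (0:ℝ)..(-δ), 1 / (κ * t ^ (1 + α) + ε) :=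
      integral_add_adjacent_intervals (stmt3_int_fe hκ hα hε le_rfl hr0.le)
        (stmt3_int_fe hκ hα hε hr0.le hrd)
    have hnn : (0:ℝ) ≤ ∫ t in r..(-δ), 1 / (κ * t ^ (1 + α) + ε) := by
      apply integral_nonneg hrd
      intro t ht
      have := Real.rpow_nonneg (le_trans hr0.le ht.1) (1 + α)
      positivity
    have hL'r : L' ≤ r * (1 / (κ * r ^ (1 + α) + ε)) := by
      rw [mul_one_div, le_div_iff₀ hDpos]
      nlinarith [hru, hεlt, hrp, hu, hr0, hL'0,
        mul_le_mul_of_nonneg_right hru hr0.le,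
        mul_lt_mul_of_pos_left hεlt hL'0]
    have hlge : L' ≤ ℓ ε := by
      rw [hle]; linarith [hconstle, hconstval, hsplit, hnn, hL'r]
    have hLle : (α * κ)⁻¹ * η ^ (-α) ≤ L' := le_max_left _ _
    have hηα : (0:ℝ) < η ^ (-α) := Real.rpow_pos_of_pos hη _
    have hid : α * κ * ((α * κ)⁻¹ * η ^ (-α)) = η ^ (-α) := by
      rw [← mul_assoc, mul_inv_cancel₀ (ne_of_gt hA), one_mul]
    have h4 : η ^ (-α) < α * κ * (ℓ ε + xhat) := by
      have h5 := mul_le_mul_of_nonneg_left (le_trans hLle hlge) hA.le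
      rw [hid] at h5
      nlinarith [hxh0, hA]
    have h6 : (α * κ * (ℓ ε + xhat)) ^ (-(1 / α)) < (η ^ (-α)) ^ (-(1 / α)) :=
      Real.rpow_lt_rpow_of_neg hηα h4 (by
        have : (0:ℝ) < 1 / α := by positivity
        linarith)
    rw [← Real.rpow_mul hη.le, show (-α) * (-(1 / α)) = 1 by field_simp,
      Real.rpow_one] at h6
    exact h6
end

section
/- Let κ > 0, α > 0 and δ < 0. For every ε > 0 and every x₁ ∈ [0, ℓ_ε): μ₀(x₁) ≤ μ_ε(x₁) < 0 (equivalently |μ_ε(x₁)| ≤ |μ₀(x₁)|), and moreover the difference function x₁ ↦ μ_ε(x₁) − μ₀(x₁) is nonnegative and nondecreasing on [0, ℓ_ε). -/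
open Set MeasureTheory intervalIntegral


lemma aux_cont {κ α ε : ℝ} (hκ : 0 < κ) (hα : 0 < α) (hε : 0 < ε) :
    Continuous fun s : ℝ => 1 / (κ * |s| ^ (1 + α) + ε) := by
  have hb : Continuous fun s : ℝ => κ * |s| ^ (1 + α) + ε := by
    have : Continuous fun s : ℝ => |s| ^ (1 + α) :=
      continuous_abs.rpow_const (fun x => Or.inr (by positivity))
    continuity
  refine Continuous.div continuous_const hb (fun s => ?_)
  have : (0:ℝ) ≤ κ * |s| ^ (1 + α) := by positivity
  positivity

lemma aux_contOn {κ α : ℝ} (hκ : 0 < κ) (hα : 0 < α) {p q : ℝ} (hq : q < 0) :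
    ContinuousOn (fun s : ℝ => 1 / (κ * |s| ^ (1 + α))) (Icc p q) := by
  have hb : Continuous fun s : ℝ => κ * |s| ^ (1 + α) := by
    have : Continuous fun s : ℝ => |s| ^ (1 + α) :=
      continuous_abs.rpow_const (fun x => Or.inr (by positivity))
    continuity
  refine ContinuousOn.div continuousOn_const hb.continuousOn (fun s hs => ?_)
  have hs0 : s < 0 := lt_of_le_of_lt hs.2 hq
  have : |s| = -s := abs_of_neg hs0
  have : (0:ℝ) < |s| ^ (1+α) := by
    rw [this]; exact Real.rpow_pos_of_pos (by linarith) _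
  positivity

lemma rho0_eq {κ α : ℝ} (hκ : 0 < κ) (hα : 0 < α) {δ ζ : ℝ} (h1 : δ ≤ ζ) (h2 : ζ < 0) :
    (∫ s in δ..ζ, 1 / (κ * |s| ^ (1 + α))) =
      (α * κ)⁻¹ * ((-ζ) ^ (-α) - (-δ) ^ (-α)) := by
  have hδ : δ < 0 := lt_of_le_of_lt h1 h2
  have key : ∀ s ∈ uIcc δ ζ, HasDerivAt (fun t => (α * κ)⁻¹ * (-t) ^ (-α))
      (1 / (κ * |s| ^ (1 + α))) s := by
    intro s hs
    rw [uIcc_of_le h1] at hs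
    have hs0 : s < 0 := lt_of_le_of_lt hs.2 h2
    have hneg : HasDerivAt (fun t : ℝ => -t) (-1) s := (hasDerivAt_id s).neg
    have h1' : HasDerivAt (fun t : ℝ => (-t) ^ (-α)) ((-1) * (-α) * (-s) ^ (-α - 1)) s :=
      hneg.rpow_const (Or.inl (by intro h; linarith))
    have := h1'.const_mul ((α * κ)⁻¹)
    refine this.congr_deriv ?_
    have habs : |s| = -s := abs_of_neg hs0
    have hsp : (0:ℝ) < -s := by linarith
    have e1 : (-s:ℝ) ^ (-α - 1) = ((-s) ^ (1+α))⁻¹ := by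
      rw [show (-α - 1 : ℝ) = -(1+α) by ring, Real.rpow_neg hsp.le]
    rw [habs, e1]
    have h2' : ((-s):ℝ) ^ (1+α) ≠ 0 := ne_of_gt (Real.rpow_pos_of_pos hsp _)
    field_simp
  rw [intervalIntegral.integral_eq_sub_of_hasDerivAt key
    (((aux_contOn hκ hα h2).mono (by rw [uIcc_of_le h1])).intervalIntegrable)]
  ring


lemma shift_mono {α : ℝ} (hα : 0 < α) {c : ℝ} (hc : 0 ≤ c) :
    MonotoneOn (fun x : ℝ => x ^ (1 + α) - (x - c) ^ (1 + α)) (Ici c) := by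
  have hder : ∀ x : ℝ, HasDerivAt (fun x : ℝ => x ^ (1 + α) - (x - c) ^ (1 + α))
      ((1+α) * x ^ α - (1+α) * (x - c) ^ α) x := by
    intro x
    have h1 : HasDerivAt (fun x : ℝ => x ^ (1+α)) ((1+α) * x ^ ((1+α)-1)) x :=
      Real.hasDerivAt_rpow_const (Or.inr (by linarith))
    have hsub : HasDerivAt (fun x : ℝ => x - c) 1 x := (hasDerivAt_id x).sub_const c
    have h2 : HasDerivAt (fun x : ℝ => (x - c) ^ (1+α)) (1 * (1+α) * (x - c) ^ ((1+α)-1)) x :=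
      hsub.rpow_const (Or.inr (by linarith))
    have := h1.sub h2
    refine this.congr_deriv ?_
    rw [show ((1+α)-1 : ℝ) = α by ring]
    ring
  apply monotoneOn_of_deriv_nonneg (convex_Ici c)
  · exact fun x _ => (hder x).continuousAt.continuousWithinAt
  · exact fun x _ => (hder x).differentiableAt.differentiableWithinAt
  · intro x hx
    rw [interior_Ici] at hx
    rw [(hder x).deriv]
    have hx0 : 0 ≤ x - c := by simp at hx; linarith
    have : (x - c) ^ α ≤ x ^ α := Real.rpow_le_rpow hx0 (by linarith) hα.le
    nlinarith




lemma key_ineq {κ α δ ε : ℝ} (hκ : 0 < κ) (hα : 0 < α) (hδ : δ < 0) (hε : 0 < ε)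
    {η ξ : ℝ} (hδη : δ ≤ η) (hηξ : η ≤ ξ) (hξ : ξ < 0)
    (heq : (∫ s in δ..η, 1 / (κ * |s| ^ (1 + α))) =
      ∫ s in δ..ξ, 1 / (κ * |s| ^ (1 + α) + ε)) :
    κ * (-η) ^ (1 + α) ≤ κ * (-ξ) ^ (1 + α) + ε := by
  have hη : η < 0 := lt_of_le_of_lt hηξ hξ
  have hηpos : (0:ℝ) < -η := by linarith
  have hξpos : (0:ℝ) < -ξ := by linarith
  have hδpos : (0:ℝ) < -δ := by linarith
  set p : ℝ := 1 + α with hp_def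
  have hp : (0:ℝ) < p := by simp [hp_def]; linarith
  by_cases hcase : κ * (-δ) ^ p ≤ κ * (-ξ) ^ p + ε
  · have h1 : (-η) ^ p ≤ (-δ) ^ p :=
      Real.rpow_le_rpow hηpos.le (by linarith) hp.le
    nlinarith
  push_neg at hcase
  -- setup
  set q : ℝ := -(α / p) with hq_def
  have hq : q < 0 := by
    rw [hq_def]; simp; positivity
  set u : ℝ → ℝ := fun t => (-t) ^ p + ε / κ with hu_def
  have hεκ : (0:ℝ) < ε / κ := by positivity
  have hupos : ∀ t : ℝ, t < 0 → 0 < u t := by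
    intro t ht
    have : (0:ℝ) < (-t) ^ p := Real.rpow_pos_of_pos (by linarith) _
    simp only [hu_def]; positivity
  -- t₀
  have hd : (0:ℝ) < (-δ) ^ p - ε / κ := by
    have h2 : (0:ℝ) ≤ (-ξ) ^ p := (Real.rpow_pos_of_pos hξpos _).le
    have := hcase
    have : ε / κ + (-ξ) ^ p < (-δ) ^ p := by
      rw [div_add' _ _ _ hκ.ne', div_lt_iff₀ hκ]
      nlinarith
    linarith
  set t₀ : ℝ := -(((-δ) ^ p - ε / κ) ^ p⁻¹) with ht₀_def
  have ht₀pos : (0:ℝ) < -t₀ := by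
    rw [ht₀_def, neg_neg]; exact Real.rpow_pos_of_pos hd _
  have ht₀pow : (-t₀) ^ p = (-δ) ^ p - ε / κ := by
    rw [ht₀_def, neg_neg]; exact Real.rpow_inv_rpow hd.le hp.ne'
  have hδt₀ : δ ≤ t₀ := by
    have h1 : (-t₀) ^ p ≤ (-δ) ^ p := by rw [ht₀pow]; linarith
    have := (Real.rpow_le_rpow_iff ht₀pos.le hδpos.le hp).mp h1
    linarith
  have ht₀ξ : t₀ < ξ := by
    have h1 : (-ξ) ^ p < (-t₀) ^ p := by
      rw [ht₀pow]
      rw [show ((-δ):ℝ) ^ p - ε/κ = ((-δ)^p * κ - ε)/κ by field_simp]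
      rw [lt_div_iff₀ hκ]
      nlinarith
    have := (Real.rpow_lt_rpow_iff hξpos.le ht₀pos.le hp).mp h1
    linarith
  -- Φ and its monotonicity
  set f : ℝ → ℝ := fun s => 1 / (κ * |s| ^ p + ε) with hf_def
  have hfc : Continuous f := aux_cont hκ hα hε
  set Φ : ℝ → ℝ := fun t => (∫ s in δ..t, f s) - (α * κ)⁻¹ * (u t) ^ q with hΦ_def
  have hder : ∀ t : ℝ, t < 0 →
      HasDerivAt Φ (f t - (α * κ)⁻¹ * ((-1 * p * (-t) ^ (p - 1)) * q * (u t) ^ (q - 1))) t := by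
    intro t ht
    have hint : HasDerivAt (fun t => ∫ s in δ..t, f s) (f t) t :=
      (hfc.integral_hasStrictDerivAt δ t).hasDerivAt
    have hneg : HasDerivAt (fun t : ℝ => -t) (-1) t := (hasDerivAt_id t).neg
    have h1 : HasDerivAt (fun t : ℝ => (-t) ^ p) (-1 * p * (-t) ^ (p - 1)) t :=
      hneg.rpow_const (Or.inl (by intro h; linarith))
    have h2 : HasDerivAt u (-1 * p * (-t) ^ (p - 1)) t := h1.add_const _
    have h3 : HasDerivAt (fun t => (u t) ^ q)
        ((-1 * p * (-t) ^ (p - 1)) * q * (u t) ^ (q - 1)) t :=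
      h2.rpow_const (Or.inl (hupos t ht).ne')
    exact hint.sub (h3.const_mul _)
  have hdnn : ∀ t : ℝ, t₀ < t → t < ξ →
      0 ≤ f t - (α * κ)⁻¹ * ((-1 * p * (-t) ^ (p - 1)) * q * (u t) ^ (q - 1)) := by
    intro t h1 h2
    have ht : t < 0 := lt_trans h2 hξ
    have htpos : (0:ℝ) < -t := by linarith
    have hut : 0 < u t := hupos t ht
    have e1 : (-1 * p * (-t) ^ (p - 1)) * q * (u t) ^ (q - 1)
        = α * ((-t) ^ (p-1) * (u t) ^ (q - 1)) := by
      rw [hq_def]; field_simp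
    rw [e1]
    have hft : f t = (κ * u t)⁻¹ := by
      simp only [hf_def, hu_def, one_div]
      congr 1
      rw [abs_of_neg ht]
      field_simp
    rw [hft]
    have key : (-t) ^ (p-1) * (u t) ^ (q - 1) ≤ (u t)⁻¹ := by
      have e2 : (-t) ^ (p-1) = ((-t) ^ p) ^ (α / p) := by
        rw [← Real.rpow_mul htpos.le]
        congr 1
        field_simp
        ring
      have e3 : ((-t) ^ p) ^ (α / p) ≤ (u t) ^ (α / p) := by
        apply Real.rpow_le_rpow (Real.rpow_pos_of_pos htpos _).le _ (by positivity)
        simp only [hu_def]; linarith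
      have e4 : (u t) ^ (q - 1) = ((u t) ^ (α / p))⁻¹ * (u t)⁻¹ := by
        rw [show q - 1 = -(α/p) + -1 by rw [hq_def]; ring, Real.rpow_add hut,
          Real.rpow_neg hut.le, show ((-1:ℝ)) = -(1:ℝ) from rfl, Real.rpow_neg hut.le,
          Real.rpow_one]
      rw [e4, ← mul_assoc]
      have e5 : (-t) ^ (p-1) * ((u t) ^ (α / p))⁻¹ ≤ 1 := by
        rw [e2]
        have hru : (0:ℝ) < (u t) ^ (α/p) := Real.rpow_pos_of_pos hut _
        have := mul_le_mul_of_nonneg_right e3 (inv_nonneg.mpr hru.le)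
        rwa [mul_inv_cancel₀ hru.ne'] at this
      calc (-t) ^ (p-1) * ((u t) ^ (α / p))⁻¹ * (u t)⁻¹ ≤ 1 * (u t)⁻¹ := by
            apply mul_le_mul_of_nonneg_right e5 (by positivity)
        _ = (u t)⁻¹ := one_mul _
    have hαk : (0:ℝ) < (α * κ)⁻¹ := by positivity
    have : (α * κ)⁻¹ * (α * ((-t) ^ (p-1) * (u t) ^ (q - 1))) ≤ (α * κ)⁻¹ * (α * (u t)⁻¹) := by
      apply mul_le_mul_of_nonneg_left _ hαk.le
      exact mul_le_mul_of_nonneg_left key hα.le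
    have e6 : (α * κ)⁻¹ * (α * (u t)⁻¹) = (κ * u t)⁻¹ := by
      field_simp
    rw [e6] at this
    linarith
  have hmono : MonotoneOn Φ (Icc t₀ ξ) := by
    apply monotoneOn_of_deriv_nonneg (convex_Icc t₀ ξ)
    · intro t ht
      have ht0 : t < 0 := lt_of_le_of_lt ht.2 hξ
      exact (hder t ht0).continuousAt.continuousWithinAt
    · intro t ht
      rw [interior_Icc] at ht
      exact (hder t (lt_trans ht.2 hξ)).differentiableAt.differentiableWithinAt
    · intro t ht
      rw [interior_Icc] at ht
      rw [(hder t (lt_trans ht.2 hξ)).deriv]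
      exact hdnn t ht.1 ht.2
  have hΦle := hmono (left_mem_Icc.mpr ht₀ξ.le) (right_mem_Icc.mpr ht₀ξ.le) ht₀ξ.le
  -- evaluate Φ t₀
  have hut₀ : u t₀ = (-δ) ^ p := by
    simp only [hu_def]; rw [ht₀pow]; ring
  have hΦt₀ : -((α * κ)⁻¹ * (-δ) ^ (-α)) ≤ Φ t₀ := by
    have hnn : 0 ≤ ∫ s in δ..t₀, f s := by
      apply intervalIntegral.integral_nonneg hδt₀
      intro s _
      have h1 : (0:ℝ) ≤ κ * |s| ^ p := by positivity
      simp only [hf_def]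
      positivity
    have e7 : ((-δ) ^ p) ^ q = (-δ) ^ (-α) := by
      rw [← Real.rpow_mul hδpos.le]
      congr 1
      rw [hq_def]; field_simp
    simp only [hΦ_def, hut₀, e7]
    linarith
  -- evaluate Φ ξ and conclude
  have hρη : (∫ s in δ..ξ, f s) = (α * κ)⁻¹ * ((-η) ^ (-α) - (-δ) ^ (-α)) := by
    rw [← heq, rho0_eq hκ hα hδη hη]
  have hΦξ : Φ ξ = (α * κ)⁻¹ * ((-η) ^ (-α) - (-δ) ^ (-α)) - (α * κ)⁻¹ * (u ξ) ^ q := by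
    simp only [hΦ_def, hρη]
  have hcore : (u ξ) ^ q ≤ (-η) ^ (-α) := by
    have := le_trans hΦt₀ hΦle
    rw [hΦξ] at this
    have hαk : (0:ℝ) < (α * κ)⁻¹ := by positivity
    nlinarith [this]
  -- convert hcore
  have huξ : 0 < u ξ := hupos ξ hξ
  have e8 : (u ξ) ^ q = ((u ξ) ^ p⁻¹) ^ (-α) := by
    rw [← Real.rpow_mul huξ.le]
    congr 1
    rw [hq_def]; field_simp
  rw [e8] at hcore
  have hroot : (0:ℝ) < (u ξ) ^ p⁻¹ := Real.rpow_pos_of_pos huξ _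
  have h9 : -η ≤ (u ξ) ^ p⁻¹ :=
    (Real.rpow_le_rpow_iff_of_neg hroot hηpos (by linarith : -α < 0)).mp hcore
  have h10 : (-η) ^ p ≤ u ξ := by
    calc (-η) ^ p ≤ ((u ξ) ^ p⁻¹) ^ p := Real.rpow_le_rpow hηpos.le h9 hp.le
      _ = u ξ := Real.rpow_inv_rpow huξ.le hp.ne'
  have : κ * (-η) ^ p ≤ κ * u ξ := mul_le_mul_of_nonneg_left h10 hκ.le
  have e10 : κ * u ξ = κ * (-ξ) ^ p + ε := by
    simp only [hu_def]; field_simp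
  linarith







set_option maxHeartbeats 1000000 in
/-- for every ε > 0 and x₁ ∈ [0, ℓ_ε), μ₀(x₁) ≤ μ_ε(x₁) < 0, and the
difference x₁ ↦ μ_ε(x₁) − μ₀(x₁) is nonnegative and nondecreasing on [0, ℓ_ε). -/
theorem stmt_4 (κ α δ : ℝ) (hκ : 0 < κ) (hα : 0 < α) (hδ : δ < 0)
    (xhat : ℝ) (hxhat : xhat = (α * κ)⁻¹ * |δ| ^ (-α))
    (ℓ : ℝ → ℝ)
    (hℓ : ∀ ε, 0 < ε → ℓ ε = ∫ s in δ..(0 : ℝ), 1 / (κ * |s| ^ (1 + α) + ε))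
    (μ : ℝ → ℝ → ℝ)
    (hμ0 : ∀ x₁, μ 0 x₁ = -((α * κ) ^ (-(1 / α)) * (x₁ + xhat) ^ (-(1 / α))))
    (hμ : ∀ ε, 0 < ε → ∀ x₁ ∈ Ico (0 : ℝ) (ℓ ε),
      μ ε x₁ ∈ Ico δ 0 ∧ (∫ s in δ..(μ ε x₁), 1 / (κ * |s| ^ (1 + α) + ε)) = x₁) :
    ∀ ε, 0 < ε →
      (∀ x₁ ∈ Ico (0 : ℝ) (ℓ ε),
        μ 0 x₁ ≤ μ ε x₁ ∧ μ ε x₁ < 0 ∧ 0 ≤ μ ε x₁ - μ 0 x₁) ∧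
      MonotoneOn (fun x₁ => μ ε x₁ - μ 0 x₁) (Ico (0 : ℝ) (ℓ ε)) := by
  intro ε hε
  have hδabs : (0:ℝ) < |δ| := abs_pos.mpr (ne_of_lt hδ)
  have hxhat_pos : 0 < xhat := by
    rw [hxhat]
    have : (0:ℝ) < |δ| ^ (-α) := Real.rpow_pos_of_pos hδabs _
    positivity
  have hA : (0:ℝ) < α * κ := by positivity
  have hfc : Continuous fun s : ℝ => 1 / (κ * |s| ^ (1 + α) + ε) := aux_cont hκ hα hε
  have hfint : ∀ u v : ℝ, IntervalIntegrable (fun s : ℝ => 1 / (κ * |s| ^ (1 + α) + ε)) volume u v :=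
    fun u v => hfc.intervalIntegrable u v
  have hfpos : ∀ s : ℝ, 0 < 1 / (κ * |s| ^ (1 + α) + ε) := by
    intro s
    have : (0:ℝ) ≤ κ * |s| ^ (1+α) := by positivity
    positivity
  have hδpow : (-δ) ^ (-α) = α * κ * xhat := by
    rw [hxhat, abs_of_neg hδ]; field_simp
  -- properties of μ 0
  have hprop : ∀ x₁ ∈ Ico (0:ℝ) (ℓ ε),
      δ ≤ μ 0 x₁ ∧ μ 0 x₁ < 0 ∧ μ 0 x₁ ≤ μ ε x₁ ∧
        (∫ s in δ..(μ 0 x₁), 1 / (κ * |s| ^ (1 + α))) = x₁ := by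
    intro x hx
    obtain ⟨hmem, hint⟩ := hμ ε hε x hx
    have hx0 : 0 ≤ x := hx.1
    have hxp : 0 < x + xhat := by linarith
    have hξδ : δ ≤ μ ε x := hmem.1
    have hξ0 : μ ε x < 0 := hmem.2
    have hηval : -(μ 0 x) = (α * κ) ^ (-(1 / α)) * (x + xhat) ^ (-(1 / α)) := by
      rw [hμ0]; ring
    have hηpos : (0:ℝ) < -(μ 0 x) := by
      rw [hηval]
      have h1 : (0:ℝ) < (α * κ) ^ (-(1/α)) := Real.rpow_pos_of_pos hA _
      have h2 : (0:ℝ) < (x + xhat) ^ (-(1/α)) := Real.rpow_pos_of_pos hxp _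
      positivity
    have hη0 : μ 0 x < 0 := by linarith
    have hpow : (-(μ 0 x)) ^ (-α) = α * κ * (x + xhat) := by
      rw [hηval, Real.mul_rpow (Real.rpow_pos_of_pos hA _).le (Real.rpow_pos_of_pos hxp _).le,
        ← Real.rpow_mul hA.le, ← Real.rpow_mul hxp.le,
        show (-(1/α)) * (-α) = 1 by field_simp, Real.rpow_one, Real.rpow_one]
    have hδη : δ ≤ μ 0 x := by
      have h1 : (-δ) ^ (-α) ≤ (-(μ 0 x)) ^ (-α) := by
        rw [hpow, hδpow]
        nlinarith
      have h2 := (Real.rpow_le_rpow_iff_of_neg (by linarith : (0:ℝ) < -δ) hηpos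
        (by linarith : -α < 0)).mp h1
      linarith
    have hρη : (∫ s in δ..(μ 0 x), 1 / (κ * |s| ^ (1 + α))) = x := by
      rw [rho0_eq hκ hα hδη hη0, hpow, hδpow]
      field_simp
      ring
    refine ⟨hδη, hη0, ?_, hρη⟩
    -- η ≤ ξ
    have hcomp : (∫ s in δ..(μ ε x), 1 / (κ * |s| ^ (1 + α) + ε))
        ≤ ∫ s in δ..(μ ε x), 1 / (κ * |s| ^ (1 + α)) := by
      apply intervalIntegral.integral_mono_on hξδ
        (hfint _ _)
        ((aux_contOn hκ hα hξ0).intervalIntegrable_of_Icc hξδ)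
      intro s hs
      have hs0 : s < 0 := lt_of_le_of_lt hs.2 hξ0
      have hb : (0:ℝ) < κ * |s| ^ (1+α) := by
        have : (0:ℝ) < |s| := abs_pos.mpr (ne_of_lt hs0)
        positivity
      apply one_div_le_one_div_of_le hb
      linarith
    have hρξ := rho0_eq hκ hα hξδ hξ0
    have h6 : x ≤ (α * κ)⁻¹ * ((-(μ ε x)) ^ (-α) - (-δ) ^ (-α)) := by
      calc x = ∫ s in δ..(μ ε x), 1 / (κ * |s| ^ (1 + α) + ε) := hint.symm
        _ ≤ ∫ s in δ..(μ ε x), 1 / (κ * |s| ^ (1 + α)) := hcomp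
        _ = (α * κ)⁻¹ * ((-(μ ε x)) ^ (-α) - (-δ) ^ (-α)) := hρξ
    have h7 : α * κ * x ≤ (-(μ ε x)) ^ (-α) - (-δ) ^ (-α) := by
      have h6' := mul_le_mul_of_nonneg_left h6 hA.le
      calc α * κ * x ≤ α * κ * ((α * κ)⁻¹ * ((-(μ ε x)) ^ (-α) - (-δ) ^ (-α))) := h6'
        _ = (-(μ ε x)) ^ (-α) - (-δ) ^ (-α) := by field_simp
    have h3 : (-(μ 0 x)) ^ (-α) ≤ (-(μ ε x)) ^ (-α) := by
      rw [hpow]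
      nlinarith [h7, hδpow]
    have h5 := (Real.rpow_le_rpow_iff_of_neg hηpos
      (by linarith : (0:ℝ) < -(μ ε x)) (by linarith : -α < 0)).mp h3
    linarith
  constructor
  · intro x hx
    obtain ⟨h1, h2, h3, _⟩ := hprop x hx
    obtain ⟨hmem, _⟩ := hμ ε hε x hx
    exact ⟨h3, hmem.2, by linarith⟩
  · intro x hx y hy hxy
    simp only
    obtain ⟨hδa, ha0, hab, hρa⟩ := hprop x hx
    obtain ⟨hδc, hc0, hcd, hρc⟩ := hprop y hy
    obtain ⟨hmemb, hib⟩ := hμ ε hε x hx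
    obtain ⟨hmemd, hid⟩ := hμ ε hε y hy
    set a := μ 0 x with ha_def
    set b := μ ε x with hb_def
    set c := μ 0 y with hc_def
    set d := μ ε y with hd_def
    have hb0 : b < 0 := hmemb.2
    have hd0 : d < 0 := hmemd.2
    have hδb : δ ≤ b := hmemb.1
    have hδd : δ ≤ d := hmemd.1
    -- a ≤ c
    have hac : a ≤ c := by
      have h1 : (y + xhat) ^ (-(1/α)) ≤ (x + xhat) ^ (-(1/α)) := by
        apply Real.rpow_le_rpow_of_nonpos (by linarith [hx.1]) (by linarith)
        simp
        positivity
      have h2 : (α * κ) ^ (-(1/α)) * (y + xhat) ^ (-(1/α))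
          ≤ (α * κ) ^ (-(1/α)) * (x + xhat) ^ (-(1/α)) :=
        mul_le_mul_of_nonneg_left h1 (Real.rpow_pos_of_pos hA _).le
      rw [ha_def, hc_def, hμ0, hμ0]
      linarith
    -- b ≤ d
    have hbd : b ≤ d := by
      by_contra hcon
      push_neg at hcon
      have hsplit := intervalIntegral.integral_add_adjacent_intervals
        (hfint δ d) (hfint d b)
      have hpos := intervalIntegral.intervalIntegral_pos_of_pos
        (hfint d b) hfpos hcon
      rw [hid] at hsplit
      rw [hib] at hsplit
      linarith
    -- main contradiction
    by_contra hcon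
    push_neg at hcon
    set c' := b - a with hc'_def
    have hc'0 : 0 ≤ c' := by rw [hc'_def]; linarith
    have hdc : d - c' < c := by linarith
    have had : a ≤ d - c' := by rw [hc'_def]; linarith
    have hdc'0 : d - c' < 0 := by linarith
    -- y - x = ∫_b^d f
    have hbdint : (∫ s in b..d, 1 / (κ * |s| ^ (1 + α) + ε)) = y - x := by
      have hsplit := intervalIntegral.integral_add_adjacent_intervals
        (hfint δ b) (hfint b d)
      rw [hib, hid] at hsplit
      linarith
    -- y - x = ∫_a^c g
    have hgint1 : IntervalIntegrable (fun s : ℝ => 1 / (κ * |s| ^ (1 + α))) volume δ a :=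
      (aux_contOn hκ hα ha0).intervalIntegrable_of_Icc hδa
    have hgint2 : IntervalIntegrable (fun s : ℝ => 1 / (κ * |s| ^ (1 + α))) volume a c :=
      (aux_contOn hκ hα hc0).intervalIntegrable_of_Icc hac
    have hacint : (∫ s in a..c, 1 / (κ * |s| ^ (1 + α))) = y - x := by
      have hsplit := intervalIntegral.integral_add_adjacent_intervals hgint1 hgint2
      rw [hρa, hρc] at hsplit
      linarith
    -- key inequality at x
    have hkey : κ * (-a) ^ (1 + α) ≤ κ * (-b) ^ (1 + α) + ε :=
      key_ineq hκ hα hδ hε hδa hab hb0 (hρa.trans hib.symm)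
    -- shift
    have hshift : (∫ t in a..(d - c'), 1 / (κ * |t + c'| ^ (1 + α) + ε))
        = ∫ s in b..d, 1 / (κ * |s| ^ (1 + α) + ε) := by
      rw [intervalIntegral.integral_comp_add_right (fun s => 1 / (κ * |s| ^ (1 + α) + ε)) c']
      congr 1 <;> rw [hc'_def] <;> ring
    -- pointwise bound on [a, d - c']
    have hptwise : ∀ t ∈ Icc a (d - c'),
        1 / (κ * |t + c'| ^ (1 + α) + ε) ≤ 1 / (κ * |t| ^ (1 + α)) := by
      intro t ht
      have ht0 : t < 0 := lt_of_le_of_lt ht.2 hdc'0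
      have htc0 : t + c' < 0 := by
        have := ht.2; linarith
      have hTmem : -a ∈ Ici c' := by
        simp only [mem_Ici, hc'_def]; linarith
      have htmem : -t ∈ Ici c' := by
        simp only [mem_Ici]; linarith
      have hmono := shift_mono hα hc'0 htmem hTmem (by linarith [ht.1] : -t ≤ -a)
      simp only at hmono
      have hrw1 : -t - c' = -(t + c') := by ring
      have hrw2 : -a - c' = -b := by rw [hc'_def]; ring
      rw [hrw1, hrw2] at hmono
      -- hmono : (-t)^(1+α) - (-(t+c'))^(1+α) ≤ (-a)^(1+α) - (-b)^(1+α)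
      have hineq : κ * (-t) ^ (1+α) ≤ κ * (-(t + c')) ^ (1+α) + ε := by nlinarith
      rw [abs_of_neg ht0, abs_of_neg htc0]
      have hb2 : (0:ℝ) < κ * (-t) ^ (1+α) := by
        have : (0:ℝ) < -t := by linarith
        have := Real.rpow_pos_of_pos this (1+α)
        positivity
      apply one_div_le_one_div_of_le hb2
      exact hineq
    -- assemble
    have hstep1 : (∫ t in a..(d - c'), 1 / (κ * |t + c'| ^ (1 + α) + ε))
        ≤ ∫ t in a..(d - c'), 1 / (κ * |t| ^ (1 + α)) := by
      apply intervalIntegral.integral_mono_on had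
      · exact ((hfc.comp (continuous_id.add continuous_const)).intervalIntegrable _ _ :
          IntervalIntegrable _ volume _ _)
      · exact (aux_contOn hκ hα hdc'0).intervalIntegrable_of_Icc had
      · exact hptwise
    have hgint3 : IntervalIntegrable (fun s : ℝ => 1 / (κ * |s| ^ (1 + α))) volume a (d - c') :=
      (aux_contOn hκ hα hdc'0).intervalIntegrable_of_Icc had
    have hgint4 : IntervalIntegrable (fun s : ℝ => 1 / (κ * |s| ^ (1 + α))) volume (d - c') c :=
      (aux_contOn hκ hα hc0).intervalIntegrable_of_Icc hdc.le
    have hstep2 : (0:ℝ) < ∫ s in (d - c')..c, 1 / (κ * |s| ^ (1 + α)) := by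
      apply intervalIntegral.intervalIntegral_pos_of_pos_on hgint4 _ hdc
      intro s hs
      have hs0 : s < 0 := lt_trans hs.2 hc0
      have : (0:ℝ) < |s| := abs_pos.mpr (ne_of_lt hs0)
      have : (0:ℝ) < |s| ^ (1+α) := Real.rpow_pos_of_pos this _
      positivity
    have hsplit2 := intervalIntegral.integral_add_adjacent_intervals hgint3 hgint4
    rw [hacint] at hsplit2
    rw [hshift] at hstep1
    rw [hbdint] at hstep1
    linarith
end

section
/- Let κ > 0, α > 0, δ < 0 and ε* > 0. There exists a constant C₁ > 0, depending only on α, κ, δ and ε*, such that for every ε ∈ [0, ε*] and every x₁ ∈ [0, ℓ_ε): |μ_ε(x₁)| ≤ C₁ (1 + x₁)^{−1/α}. -/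
open Set MeasureTheory

private lemma rpow_bound_aux {α y B t : ℝ} (hα : 0 < α) (hy : 0 < y) (ht : 0 < t)
    (hB : 0 < B) (h : y ^ α ≤ B / t) : y ≤ B ^ (1/α) * t ^ (-(1/α)) := by
  have h1 : (y ^ α) ^ (1/α) ≤ (B / t) ^ (1/α) :=
    Real.rpow_le_rpow (by positivity) h (by positivity)
  have h2 : (y ^ α) ^ (1/α) = y := by rw [one_div, Real.rpow_rpow_inv hy.le hα.ne']
  rw [h2] at h1
  calc y ≤ (B / t) ^ (1/α) := h1
    _ = B ^ (1/α) * t ^ (-(1/α)) := by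
        rw [Real.div_rpow hB.le ht.le, Real.rpow_neg ht.le, div_eq_mul_inv]

/-- there is C₁ > 0 depending only on α, κ, δ, ε* such that
|μ_ε(x₁)| ≤ C₁ (1 + x₁)^{−1/α} for all ε ∈ [0, ε*] and x₁ ∈ [0, ℓ_ε)
(for ε = 0 the domain is [0, ∞)). -/
theorem stmt_5 (κ α δ εstar : ℝ) (hκ : 0 < κ) (hα : 0 < α) (hδ : δ < 0)
    (hεstar : 0 < εstar)
    (xhat : ℝ) (hxhat : xhat = (α * κ)⁻¹ * |δ| ^ (-α))
    (ℓ : ℝ → ℝ)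
    (hℓ : ∀ ε, 0 < ε → ℓ ε = ∫ s in δ..(0 : ℝ), 1 / (κ * |s| ^ (1 + α) + ε))
    (μ : ℝ → ℝ → ℝ)
    (hμ0 : ∀ x₁, μ 0 x₁ = -((α * κ) ^ (-(1 / α)) * (x₁ + xhat) ^ (-(1 / α))))
    (hμ : ∀ ε, 0 < ε → ∀ x₁ ∈ Ico (0 : ℝ) (ℓ ε),
      μ ε x₁ ∈ Ico δ 0 ∧ (∫ s in δ..(μ ε x₁), 1 / (κ * |s| ^ (1 + α) + ε)) = x₁) :
    ∃ C₁ > (0 : ℝ),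
      (∀ x₁ ∈ Ici (0 : ℝ), |μ 0 x₁| ≤ C₁ * (1 + x₁) ^ (-(1 / α))) ∧
      (∀ ε, 0 < ε → ε ≤ εstar → ∀ x₁ ∈ Ico (0 : ℝ) (ℓ ε),
        |μ ε x₁| ≤ C₁ * (1 + x₁) ^ (-(1 / α))) := by
  have hδabs : |δ| = -δ := abs_of_neg hδ
  have hxhat0 : 0 < xhat := by
    rw [hxhat, hδabs]
    have h := Real.rpow_pos_of_pos (neg_pos.mpr hδ) (-α)
    positivity
  set c : ℝ := min 1 xhat with hc
  have hc0 : 0 < c := lt_min one_pos hxhat0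
  set C₁ : ℝ := max ((α*κ)^(-(1/α)) * c^(-(1/α))) (max ((-δ) * 2^(1/α)) ((2/(α*κ))^(1/α)))
    with hC₁
  have hC₁0 : 0 < C₁ := lt_of_lt_of_le (by positivity) (le_max_left _ _)
  refine ⟨C₁, hC₁0, ?_, ?_⟩
  · -- ε = 0 case
    intro x₁ hx₁
    have hx₁0 : (0:ℝ) ≤ x₁ := hx₁
    rw [hμ0, abs_neg, abs_of_nonneg (mul_nonneg (Real.rpow_nonneg (by positivity) _)
      (Real.rpow_nonneg (by linarith) _))]
    have hcle : c * (1 + x₁) ≤ x₁ + xhat := by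
      have h1 : c ≤ 1 := min_le_left _ _
      have h2 : c ≤ xhat := min_le_right _ _
      nlinarith
    have key : (x₁ + xhat) ^ (-(1/α)) ≤ c^(-(1/α)) * (1 + x₁)^(-(1/α)) := by
      calc (x₁ + xhat) ^ (-(1/α)) ≤ (c * (1 + x₁)) ^ (-(1/α)) :=
            Real.rpow_le_rpow_of_nonpos (mul_pos hc0 (by linarith)) hcle
              (neg_nonpos.mpr (by positivity))
        _ = c^(-(1/α)) * (1 + x₁)^(-(1/α)) := Real.mul_rpow hc0.le (by linarith)
    calc (α * κ) ^ (-(1 / α)) * (x₁ + xhat) ^ (-(1 / α))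
        ≤ (α * κ) ^ (-(1 / α)) * (c^(-(1/α)) * (1 + x₁)^(-(1/α))) := by
          have : (0:ℝ) ≤ (α * κ) ^ (-(1 / α)) := by positivity
          exact mul_le_mul_of_nonneg_left key this
      _ = ((α*κ)^(-(1/α)) * c^(-(1/α))) * (1 + x₁)^(-(1/α)) := by ring
      _ ≤ C₁ * (1 + x₁)^(-(1/α)) := by
          gcongr
          exact le_max_left _ _
  · -- ε > 0 case
    intro ε hε _ x₁ hx₁
    obtain ⟨hm, hint⟩ := hμ ε hε x₁ hx₁
    set m : ℝ := μ ε x₁ with hmdef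
    obtain ⟨hδm, hm0⟩ := hm
    have hx₁0 : (0:ℝ) ≤ x₁ := hx₁.1
    have habs : |m| = -m := abs_of_neg hm0
    have hnm0 : 0 < -m := by linarith
    -- Key bound: x₁ ≤ (α κ)⁻¹ (-m)^(-α)
    have key : x₁ ≤ (α*κ)⁻¹ * (-m)^(-α) := by
      -- antiderivative computation
      have hderiv : ∀ s ∈ uIcc δ m,
          HasDerivAt (fun s : ℝ => (α*κ)⁻¹ * (-s)^(-α)) (1 / (κ * (-s)^(1+α))) s := by
        intro s hs
        rw [uIcc_of_le hδm] at hs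
        have hs0 : 0 < -s := by
          have := hs.2; linarith
        have h1 : HasDerivAt (fun s : ℝ => -s) (-1) s := (hasDerivAt_id s).neg
        have h2 : HasDerivAt (fun s : ℝ => (-s)^(-α)) ((-α * (-s)^(-α-1)) * -1) s :=
          (Real.hasDerivAt_rpow_const (Or.inl hs0.ne')).comp s h1
        have h3 := h2.const_mul ((α*κ)⁻¹)
        refine h3.congr_deriv ?_
        have hpow : (-s)^(-α-1) = ((-s)^(1+α))⁻¹ := by
          rw [show -α - 1 = -(1+α) by ring, Real.rpow_neg hs0.le]
        rw [hpow]
        have hpos : (0:ℝ) < (-s)^(1+α) := Real.rpow_pos_of_pos hs0 _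
        field_simp
      have hcont2 : ContinuousOn (fun s : ℝ => 1 / (κ * (-s)^(1+α))) (uIcc δ m) := by
        apply ContinuousOn.div continuousOn_const
        · apply ContinuousOn.mul continuousOn_const
          apply ContinuousOn.rpow_const (continuousOn_id.neg)
          intro s hs
          rw [uIcc_of_le hδm] at hs
          left
          have := hs.2
          intro h; simp only [Pi.neg_apply, id_eq, neg_eq_zero] at h; subst h; exact absurd this (by linarith)
        · intro s hs
          rw [uIcc_of_le hδm] at hs
          have hs0 : 0 < -s := by have := hs.2; linarith
          have : (0:ℝ) < (-s)^(1+α) := Real.rpow_pos_of_pos hs0 _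
          positivity
      have hii2 : IntervalIntegrable (fun s : ℝ => 1 / (κ * (-s)^(1+α))) volume δ m :=
        hcont2.intervalIntegrable
      have heq : ∫ s in δ..m, 1 / (κ * (-s)^(1+α))
          = (α*κ)⁻¹ * (-m)^(-α) - (α*κ)⁻¹ * (-δ)^(-α) :=
        intervalIntegral.integral_eq_sub_of_hasDerivAt hderiv hii2
      have hcont1 : Continuous (fun s : ℝ => 1 / (κ * |s|^(1+α) + ε)) := by
        apply Continuous.div continuous_const
        · exact (continuous_const.mul (continuous_abs.rpow_const
            (fun x => Or.inr (by positivity)))).add continuous_const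
        · intro s
          have : (0:ℝ) ≤ |s|^(1+α) := Real.rpow_nonneg (abs_nonneg s) _
          positivity
      have hmono : x₁ ≤ ∫ s in δ..m, 1 / (κ * (-s)^(1+α)) := by
        rw [← hint]
        apply intervalIntegral.integral_mono_on hδm (hcont1.intervalIntegrable δ m) hii2
        intro s hs
        have hs0 : 0 < -s := by have := hs.2; linarith
        rw [abs_of_neg (by linarith : s < 0)]
        have hpos : (0:ℝ) < κ * (-s)^(1+α) := by
          have : (0:ℝ) < (-s)^(1+α) := Real.rpow_pos_of_pos hs0 _
          positivity
        apply one_div_le_one_div_of_le hpos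
        linarith
      have hδpow : (0:ℝ) ≤ (α*κ)⁻¹ * (-δ)^(-α) :=
        mul_nonneg (by positivity) (Real.rpow_nonneg (by linarith) _)
      calc x₁ ≤ ∫ s in δ..m, 1 / (κ * (-s)^(1+α)) := hmono
        _ = (α*κ)⁻¹ * (-m)^(-α) - (α*κ)⁻¹ * (-δ)^(-α) := heq
        _ ≤ (α*κ)⁻¹ * (-m)^(-α) := by linarith
    rw [habs]
    rcases le_total x₁ 1 with hle | hge
    · -- small x₁: use |m| ≤ -δ
      have h2 : (1:ℝ) ≤ 2^(1/α) * (1+x₁)^(-(1/α)) := by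
        have ht : (0:ℝ) < (1+x₁)^(1/α) := Real.rpow_pos_of_pos (by linarith) _
        have hle2 : (1+x₁)^(1/α) ≤ 2^(1/α) :=
          Real.rpow_le_rpow (by linarith) (by linarith) (by positivity)
        rw [Real.rpow_neg (by linarith)]
        calc (1:ℝ) = (1+x₁)^(1/α) * ((1+x₁)^(1/α))⁻¹ := (mul_inv_cancel₀ ht.ne').symm
          _ ≤ 2^(1/α) * ((1+x₁)^(1/α))⁻¹ := by gcongr
      calc -m ≤ -δ := by linarith
        _ = -δ * 1 := (mul_one _).symm
        _ ≤ -δ * (2^(1/α) * (1+x₁)^(-(1/α))) := by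
            apply mul_le_mul_of_nonneg_left h2 (by linarith)
        _ = ((-δ) * 2^(1/α)) * (1+x₁)^(-(1/α)) := by ring
        _ ≤ C₁ * (1+x₁)^(-(1/α)) := by
            gcongr
            exact le_trans (le_max_left _ _) (le_max_right _ _)
    · -- large x₁
      have hmα : (0:ℝ) < (-m)^α := Real.rpow_pos_of_pos hnm0 _
      have hkey2 : (-m)^α ≤ (2/(α*κ)) / (1+x₁) := by
        rw [div_div, le_div_iff₀ (by positivity)]
        have hrw : (-m)^(-α) = ((-m)^α)⁻¹ := Real.rpow_neg hnm0.le _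
        rw [hrw] at key
        have h1 : 1 + x₁ ≤ 2 * x₁ := by linarith
        have h2 : x₁ * (-m)^α ≤ (α*κ)⁻¹ := by
          calc x₁ * (-m)^α ≤ ((α*κ)⁻¹ * ((-m)^α)⁻¹) * (-m)^α :=
                mul_le_mul_of_nonneg_right key hmα.le
            _ = (α*κ)⁻¹ := by
                field_simp
        calc (-m)^α * (α*κ*(1+x₁)) = (-m)^α * ((1+x₁) * (α*κ)) := by ring
          _ ≤ (-m)^α * ((2*x₁) * (α*κ)) := by
              apply mul_le_mul_of_nonneg_left _ hmα.le
              apply mul_le_mul_of_nonneg_right h1 (by positivity)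
          _ = (x₁ * (-m)^α) * (2 * (α*κ)) := by ring
          _ ≤ (α*κ)⁻¹ * (2 * (α*κ)) := by
              apply mul_le_mul_of_nonneg_right h2 (by positivity)
          _ = 2 := by field_simp
      have := rpow_bound_aux hα hnm0 (by linarith : (0:ℝ) < 1+x₁) (by positivity) hkey2
      calc -m ≤ (2/(α*κ))^(1/α) * (1+x₁)^(-(1/α)) := this
        _ ≤ C₁ * (1+x₁)^(-(1/α)) := by
            gcongr
            exact le_trans (le_max_right _ _) (le_max_right _ _)
end

section
/- Let κ > 0, α > 0, δ < 0 and ε* > 0. There exist constants C₂ > 0 and C₃ > 0, depending only on α, κ, δ and ε*, such that for every ε ∈ [0, ε*] and every x₁ ∈ [0, ℓ_ε): H_ε(μ_ε(x₁)) ≤ C₂ (1 + x₁)^{−1−1/α} and |H₀′(μ_ε(x₁))| ≤ C₃ (1 + x₁)^{−1}, where H₀′(s) = −(1+α)κ(−s)^{α} is the derivative of H₀(s) = κ(−s)^{1+α} for s < 0. -/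
open Set MeasureTheory


lemma ftc_key (κ α : ℝ) (hκ : 0 < κ) (hα : 0 < α) (b a c : ℝ) (hac : a ≤ c) (hc : c < b) :
    ∫ s in a..c, 1/(κ * (b - s) ^ (1+α)) =
      (α*κ)⁻¹ * ((b-c) ^ (-α) - (b-a) ^ (-α)) := by
  have key : ∀ s ∈ uIcc a c, HasDerivAt (fun x => (α*κ)⁻¹ * (b - x) ^ (-α))
      (1/(κ * (b - s) ^ (1+α))) s := by
    intro s hs
    rw [uIcc_of_le hac] at hs
    have hsb : 0 < b - s := by linarith [hs.2]
    have h1 : HasDerivAt (fun x : ℝ => b - x) (-1) s := by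
      simpa using (hasDerivAt_id s).const_sub b
    have h2 : HasDerivAt (fun x : ℝ => (b - x) ^ (-α))
        ((-α) * (b - s) ^ (-α - 1) * (-1)) s := by
      exact (Real.hasDerivAt_rpow_const (Or.inl hsb.ne')).comp s h1
    have h3 := h2.const_mul ((α*κ)⁻¹)
    refine h3.congr_deriv ?_
    have e1 : (b - s) ^ (-α - 1) = ((b - s) ^ (1+α))⁻¹ := by
      rw [← Real.rpow_neg hsb.le]; ring_nf
    rw [e1]
    have h4 : (b - s) ^ (1+α) ≠ 0 := (Real.rpow_pos_of_pos hsb _).ne'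
    field_simp
  have hcont : ContinuousOn (fun s => 1/(κ * (b - s) ^ (1+α))) (uIcc a c) := by
    rw [uIcc_of_le hac]
    apply ContinuousOn.div continuousOn_const
    · exact (continuousOn_const.mul ((continuousOn_const.sub continuousOn_id).rpow_const
        (fun s hs => Or.inl (by have : s ≤ c := hs.2; intro h; simp only [Pi.sub_apply, id] at h; linarith))))
    · intro s hs
      have hsb : 0 < b - s := by have := hs.2; linarith
      exact (mul_pos hκ (Real.rpow_pos_of_pos hsb _)).ne'
  rw [intervalIntegral.integral_eq_sub_of_hasDerivAt key (hcont.intervalIntegrable)]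
  ring

lemma x1_bound (κ α ε δ μ : ℝ) (hκ : 0 < κ) (hα : 0 < α) (hε : 0 < ε)
    (hδμ : δ ≤ μ) (hμ : μ < 0) :
    ∫ s in δ..μ, 1/(κ * |s| ^ (1+α) + ε) ≤
      2 ^ (1+α) * ((α*κ)⁻¹ * (((ε/κ) ^ (1+α)⁻¹ - μ) ^ (-α))) := by
  set b : ℝ := (ε/κ) ^ (1+α)⁻¹ with hb
  have hbpos : 0 < b := Real.rpow_pos_of_pos (div_pos hε hκ) _
  have hbp : b ^ (1+α) = ε/κ := by
    rw [hb, ← Real.rpow_mul (div_pos hε hκ).le, inv_mul_cancel₀ (by positivity), Real.rpow_one]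
  have hμb : μ < b := lt_trans hμ hbpos
  -- pointwise bound
  have hpt : ∀ s ∈ Icc δ μ, 1/(κ * |s| ^ (1+α) + ε) ≤ 2^(1+α) * (1/(κ * (b - s) ^ (1+α))) := by
    intro s hs
    have hs0 : s < 0 := lt_of_le_of_lt hs.2 hμ
    have habs : |s| = -s := abs_of_neg hs0
    have hbs : 0 < b - s := by linarith
    have hden1 : 0 < κ * |s| ^ (1+α) + ε := by positivity
    have hden2 : 0 < κ * (b - s) ^ (1+α) := by positivity
    rw [mul_one_div, div_le_div_iff₀ hden1 hden2, one_mul]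
    -- κ (b-s)^{1+α} ≤ 2^{1+α} (κ|s|^{1+α}+ε)
    have key : (b - s) ^ (1+α) ≤ 2^(1+α) * (b ^ (1+α) + (-s) ^ (1+α)) := by
      have h1 : b - s ≤ 2 * max b (-s) := by
        rcases le_total b (-s) with h | h
        · rw [max_eq_right h]; linarith
        · rw [max_eq_left h]; linarith
      calc (b - s) ^ (1+α) ≤ (2 * max b (-s)) ^ (1+α) := by
            apply Real.rpow_le_rpow hbs.le h1 (by positivity)
        _ = 2^(1+α) * (max b (-s)) ^ (1+α) := by
            rw [Real.mul_rpow (by norm_num) (le_max_of_le_left hbpos.le)]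
        _ ≤ 2^(1+α) * (b ^ (1+α) + (-s) ^ (1+α)) := by
            apply mul_le_mul_of_nonneg_left _ (by positivity)
            rcases max_cases b (-s) with ⟨h, _⟩ | ⟨h, _⟩ <;> rw [h] <;> nlinarith
              [Real.rpow_nonneg hbpos.le (1+α), Real.rpow_nonneg (by linarith : (0:ℝ) ≤ -s) (1+α)]
    calc κ * (b - s) ^ (1+α) ≤ κ * (2^(1+α) * (b ^ (1+α) + (-s) ^ (1+α))) :=
          mul_le_mul_of_nonneg_left key hκ.le
      _ = 2^(1+α) * (κ * (-s)^(1+α) + κ * b^(1+α)) := by ring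
      _ = 2^(1+α) * (κ * |s|^(1+α) + ε) := by
          rw [hbp, habs, mul_div_cancel₀ _ hκ.ne']
  -- integrability
  have hcont1 : ContinuousOn (fun s => 1/(κ * |s| ^ (1+α) + ε)) (Icc δ μ) := by
    apply ContinuousOn.div continuousOn_const
    · exact (continuousOn_const.mul ((continuous_abs.continuousOn).rpow_const
        (fun s hs => Or.inr (by positivity)))).add continuousOn_const
    · intro s hs; positivity
  have hcont2 : ContinuousOn (fun s => 2^(1+α) * (1/(κ * (b - s) ^ (1+α)))) (Icc δ μ) := by
    apply ContinuousOn.mul continuousOn_const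
    apply ContinuousOn.div continuousOn_const
    · exact continuousOn_const.mul ((continuousOn_const.sub continuousOn_id).rpow_const
        (fun s hs => Or.inl (by have := hs.2; intro h; simp only [Pi.sub_apply, id] at h; nlinarith)))
    · intro s hs
      have : 0 < b - s := by have := hs.2; nlinarith
      positivity
  have hi1 : IntervalIntegrable (fun s => 1/(κ * |s| ^ (1+α) + ε)) volume δ μ :=
    hcont1.intervalIntegrable_of_Icc hδμ
  have hi2 : IntervalIntegrable (fun s => 2^(1+α) * (1/(κ * (b - s) ^ (1+α)))) volume δ μ :=
    hcont2.intervalIntegrable_of_Icc hδμ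
  have hint := intervalIntegral.integral_mono_on hδμ hi1 hi2 hpt
  calc ∫ s in δ..μ, 1/(κ * |s| ^ (1+α) + ε)
      ≤ ∫ s in δ..μ, 2^(1+α) * (1/(κ * (b - s) ^ (1+α))) := hint
    _ = 2^(1+α) * ∫ s in δ..μ, 1/(κ * (b - s) ^ (1+α)) := by
        rw [intervalIntegral.integral_const_mul]
    _ = 2^(1+α) * ((α*κ)⁻¹ * ((b-μ)^(-α) - (b-δ)^(-α))) := by
        rw [ftc_key κ α hκ hα b δ μ hδμ hμb]
    _ ≤ 2^(1+α) * ((α*κ)⁻¹ * ((b-μ)^(-α))) := by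
        have h1 : (0:ℝ) ≤ (b-δ)^(-α) := Real.rpow_nonneg (by linarith) _
        have h2 : (0:ℝ) ≤ (α*κ)⁻¹ := by positivity
        have h3 : (0:ℝ) ≤ (2:ℝ)^(1+α) := by positivity
        nlinarith [mul_nonneg (mul_nonneg h3 h2) h1]

lemma final_step (κ α : ℝ) (hκ : 0 < κ) (hα : 0 < α) (A B : ℝ) (hA : 0 < A) (hB : 0 ≤ B)
    (μ x₁ ε : ℝ) (hμ : μ < 0) (hx : 0 ≤ x₁) (hε : 0 ≤ ε)
    (h1 : (1 + x₁) * (-μ) ^ α ≤ A) (h2 : (1 + x₁) ^ ((1+α)/α) * ε ≤ B) :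
    κ * |μ| ^ (1 + α) + ε ≤ (κ * A ^ ((1+α)/α) + B) * (1 + x₁) ^ (-1 - 1/α) ∧
    |-((1 + α) * κ * (-μ) ^ α)| ≤ ((1 + α) * κ * A) * (1 + x₁) ^ (-1 : ℝ) := by
  have hx1 : (0:ℝ) < 1 + x₁ := by linarith
  have hmμ : (0:ℝ) < -μ := by linarith
  set r : ℝ := (1+α)/α with hrdef
  have hr : 0 < r := by positivity
  have hμα : (0:ℝ) ≤ (-μ) ^ α := Real.rpow_nonneg hmμ.le _
  have hbd : (-μ) ^ α ≤ A / (1 + x₁) := by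
    rw [le_div_iff₀ hx1]; linarith [h1]
  have hexp : (-1 - 1/α : ℝ) = -r := by rw [hrdef]; field_simp; ring
  have hpow : (1 + x₁) ^ (-1 - 1/α : ℝ) = ((1 + x₁) ^ r)⁻¹ := by
    rw [hexp, Real.rpow_neg hx1.le]
  have hxr : (0:ℝ) < (1 + x₁) ^ r := Real.rpow_pos_of_pos hx1 _
  constructor
  · have habs : |μ| = -μ := abs_of_neg hμ
    have e1 : (-μ) ^ (1+α) = ((-μ) ^ α) ^ r := by
      rw [← Real.rpow_mul hmμ.le]
      congr 1; rw [hrdef]; field_simp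
    have e2 : ((-μ) ^ α) ^ r ≤ (A / (1 + x₁)) ^ r :=
      Real.rpow_le_rpow hμα hbd hr.le
    have e3 : (A / (1 + x₁)) ^ r = A ^ r / (1 + x₁) ^ r :=
      Real.div_rpow hA.le hx1.le r
    have e4 : ε ≤ B / (1 + x₁) ^ r := by
      rw [le_div_iff₀ hxr]; linarith [h2]
    rw [habs, hpow]
    have e5 : κ * (-μ) ^ (1+α) ≤ κ * (A ^ r / (1 + x₁) ^ r) := by
      rw [e1]; exact mul_le_mul_of_nonneg_left (e2.trans_eq e3) hκ.le
    have e6 : κ * (A ^ r / (1 + x₁) ^ r) + B / (1 + x₁) ^ r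
        = (κ * A ^ r + B) * ((1 + x₁) ^ r)⁻¹ := by
      field_simp
    linarith [add_le_add e5 e4]
  · rw [abs_neg, abs_of_nonneg (by positivity), Real.rpow_neg_one]
    have := mul_le_mul_of_nonneg_left hbd (by positivity : (0:ℝ) ≤ (1+α)*κ)
    calc (1+α) * κ * (-μ) ^ α ≤ (1+α) * κ * (A / (1+x₁)) := this
      _ = (1+α) * κ * A * (1+x₁)⁻¹ := by ring


/-- there exist C₂, C₃ > 0 depending only on α, κ, δ, ε* such that for all
ε ∈ [0, ε*] and x₁ ∈ [0, ℓ_ε): H_ε(μ_ε(x₁)) ≤ C₂ (1+x₁)^{−1−1/α} and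
|H₀′(μ_ε(x₁))| ≤ C₃ (1+x₁)^{−1}, where H_ε(s) = κ|s|^{1+α} + ε and
H₀′(s) = −(1+α)κ(−s)^α for s < 0. -/
theorem stmt_6 (κ α δ εstar : ℝ) (hκ : 0 < κ) (hα : 0 < α) (hδ : δ < 0)
    (hεstar : 0 < εstar)
    (xhat : ℝ) (hxhat : xhat = (α * κ)⁻¹ * |δ| ^ (-α))
    (ℓ : ℝ → ℝ)
    (hℓ : ∀ ε, 0 < ε → ℓ ε = ∫ s in δ..(0 : ℝ), 1 / (κ * |s| ^ (1 + α) + ε))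
    (μ : ℝ → ℝ → ℝ)
    (hμ0 : ∀ x₁, μ 0 x₁ = -((α * κ) ^ (-(1 / α)) * (x₁ + xhat) ^ (-(1 / α))))
    (hμ : ∀ ε, 0 < ε → ∀ x₁ ∈ Ico (0 : ℝ) (ℓ ε),
      μ ε x₁ ∈ Ico δ 0 ∧ (∫ s in δ..(μ ε x₁), 1 / (κ * |s| ^ (1 + α) + ε)) = x₁) :
    ∃ C₂ > (0 : ℝ), ∃ C₃ > (0 : ℝ),
      (∀ x₁ ∈ Ici (0 : ℝ),
        κ * |μ 0 x₁| ^ (1 + α) ≤ C₂ * (1 + x₁) ^ (-1 - 1 / α) ∧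
        |-((1 + α) * κ * (-(μ 0 x₁)) ^ α)| ≤ C₃ * (1 + x₁) ^ (-1 : ℝ)) ∧
      (∀ ε, 0 < ε → ε ≤ εstar → ∀ x₁ ∈ Ico (0 : ℝ) (ℓ ε),
        κ * |μ ε x₁| ^ (1 + α) + ε ≤ C₂ * (1 + x₁) ^ (-1 - 1 / α) ∧
        |-((1 + α) * κ * (-(μ ε x₁)) ^ α)| ≤ C₃ * (1 + x₁) ^ (-1 : ℝ)) := by
  have hxhat0 : 0 < xhat := by
    rw [hxhat]
    exact mul_pos (by positivity) (Real.rpow_pos_of_pos (abs_pos.mpr hδ.ne) _)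
  set K : ℝ := 2 ^ (1+α) * (α*κ)⁻¹ with hK
  have hKpos : 0 < K := by positivity
  set q : ℝ := α/(1+α) with hq
  set r : ℝ := (1+α)/α with hr
  have hqr : q * r = 1 := by rw [hq, hr]; field_simp
  set A₁ : ℝ := (-δ) ^ α + K with hA₁
  have hA₁pos : 0 < A₁ := by
    have : (0:ℝ) ≤ (-δ) ^ α := Real.rpow_nonneg (by linarith) _
    linarith
  set m : ℝ := min 1 xhat with hm
  have hmpos : 0 < m := lt_min one_pos hxhat0
  set A₀ : ℝ := (α*κ)⁻¹ * m⁻¹ with hA₀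
  set A : ℝ := max A₁ A₀ with hA
  have hApos : 0 < A := lt_max_of_lt_left hA₁pos
  set Braw : ℝ := εstar ^ q + K * κ ^ q with hBraw
  have hBrawpos : 0 < Braw := by positivity
  set B : ℝ := Braw ^ r with hB
  have hBpos : 0 < B := Real.rpow_pos_of_pos hBrawpos _
  refine ⟨κ * A ^ ((1+α)/α) + B, by positivity, (1+α) * κ * A, by positivity, ?_, ?_⟩
  · -- ε = 0 case
    intro x₁ hx₁
    have hx : (0:ℝ) ≤ x₁ := hx₁
    have hy : (0:ℝ) < x₁ + xhat := by linarith
    have hμval := hμ0 x₁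
    have hμneg : μ 0 x₁ < 0 := by
      rw [hμval]
      have : 0 < (α * κ) ^ (-(1 / α)) * (x₁ + xhat) ^ (-(1 / α)) :=
        mul_pos (Real.rpow_pos_of_pos (by positivity) _) (Real.rpow_pos_of_pos hy _)
      linarith
    have hpowval : (-(μ 0 x₁)) ^ α = (α*κ)⁻¹ * (x₁ + xhat)⁻¹ := by
      rw [hμval, neg_neg,
        Real.mul_rpow (Real.rpow_nonneg (by positivity) _) (Real.rpow_nonneg hy.le _),
        ← Real.rpow_mul (by positivity : (0:ℝ) ≤ α*κ), ← Real.rpow_mul hy.le]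
      rw [show -(1/α) * α = -1 by field_simp, Real.rpow_neg_one, Real.rpow_neg_one]
    have h1 : (1 + x₁) * (-(μ 0 x₁)) ^ α ≤ A := by
      rw [hpowval]
      have key : (1 + x₁) * (x₁ + xhat)⁻¹ ≤ m⁻¹ := by
        rw [← div_eq_mul_inv, div_le_iff₀ hy, inv_mul_eq_div, le_div_iff₀ hmpos]
        have h1' : m ≤ 1 := min_le_left _ _
        have h2' : m ≤ xhat := min_le_right _ _
        nlinarith
      calc (1 + x₁) * ((α*κ)⁻¹ * (x₁ + xhat)⁻¹)
          = (α*κ)⁻¹ * ((1 + x₁) * (x₁ + xhat)⁻¹) := by ring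
        _ ≤ (α*κ)⁻¹ * m⁻¹ := mul_le_mul_of_nonneg_left key (by positivity)
        _ ≤ A := le_max_right _ _
    have h2 : (1 + x₁) ^ ((1+α)/α) * (0:ℝ) ≤ B := by rw [mul_zero]; exact hBpos.le
    have := final_step κ α hκ hα A B hApos hBpos.le (μ 0 x₁) x₁ 0 hμneg hx le_rfl h1 h2
    refine ⟨by linarith [this.1], this.2⟩
  · -- ε > 0 case
    intro ε hε hεs x₁ hx₁
    obtain ⟨⟨hδμ', hμneg⟩, hint⟩ := hμ ε hε x₁ hx₁
    have hx : (0:ℝ) ≤ x₁ := hx₁.1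
    set M : ℝ := μ ε x₁ with hM
    have hmM : (0:ℝ) < -M := by linarith
    set b : ℝ := (ε/κ) ^ (1+α)⁻¹ with hb
    have hbpos : 0 < b := Real.rpow_pos_of_pos (div_pos hε hκ) _
    have hbM : 0 < b - M := by linarith
    have hbound : x₁ ≤ K * (b - M) ^ (-α) := by
      have := x1_bound κ α ε δ M hκ hα hε hδμ' hμneg
      rw [hint] at this
      calc x₁ ≤ 2 ^ (1+α) * ((α*κ)⁻¹ * ((ε/κ) ^ (1+α)⁻¹ - M) ^ (-α)) := this
        _ = K * (b - M) ^ (-α) := by rw [hK, hb]; ring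
    have hMα : (0:ℝ) ≤ (-M) ^ α := Real.rpow_nonneg hmM.le _
    have h1 : (1 + x₁) * (-M) ^ α ≤ A := by
      have e1 : (b - M) ^ (-α) ≤ (-M) ^ (-α) :=
        Real.rpow_le_rpow_of_nonpos hmM (by linarith) (by linarith)
      have e2 : x₁ * (-M) ^ α ≤ K := by
        have e3 : x₁ * (-M) ^ α ≤ (K * (-M) ^ (-α)) * (-M) ^ α := by
          apply mul_le_mul_of_nonneg_right _ hMα
          calc x₁ ≤ K * (b - M) ^ (-α) := hbound
            _ ≤ K * (-M) ^ (-α) := mul_le_mul_of_nonneg_left e1 hKpos.le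
        have e4 : (K * (-M) ^ (-α)) * (-M) ^ α = K := by
          rw [mul_assoc, ← Real.rpow_add hmM, neg_add_cancel, Real.rpow_zero, mul_one]
        linarith [e3, e4.le]
      have e5 : (-M) ^ α ≤ (-δ) ^ α :=
        Real.rpow_le_rpow hmM.le (by linarith) hα.le
      calc (1 + x₁) * (-M) ^ α = (-M) ^ α + x₁ * (-M) ^ α := by ring
        _ ≤ (-δ) ^ α + K := by linarith
        _ = A₁ := hA₁.symm
        _ ≤ A := le_max_left _ _
    have h2 : (1 + x₁) ^ ((1+α)/α) * ε ≤ B := by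
      have e1 : (b - M) ^ (-α) ≤ b ^ (-α) :=
        Real.rpow_le_rpow_of_nonpos hbpos (by linarith) (by linarith)
      have hbval : b ^ (-α) = κ ^ q * (ε ^ q)⁻¹ := by
        rw [hb, ← Real.rpow_mul (div_pos hε hκ).le]
        rw [show (1+α)⁻¹ * (-α) = -q by rw [hq]; field_simp]
        rw [Real.rpow_neg (div_pos hε hκ).le, Real.div_rpow hε.le hκ.le]
        rw [inv_div]
        exact div_eq_mul_inv _ _
      have e2 : x₁ * ε ^ q ≤ K * κ ^ q := by
        have hεq : (0:ℝ) < ε ^ q := Real.rpow_pos_of_pos hε _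
        have e3 : x₁ ≤ K * (κ ^ q * (ε ^ q)⁻¹) := by
          rw [← hbval]
          exact hbound.trans (mul_le_mul_of_nonneg_left e1 hKpos.le)
        calc x₁ * ε ^ q ≤ (K * (κ ^ q * (ε ^ q)⁻¹)) * ε ^ q :=
              mul_le_mul_of_nonneg_right e3 hεq.le
          _ = K * κ ^ q * ((ε ^ q)⁻¹ * ε ^ q) := by ring
          _ = K * κ ^ q := by rw [inv_mul_cancel₀ hεq.ne', mul_one]
      have e4 : ε ^ q ≤ εstar ^ q := Real.rpow_le_rpow hε.le hεs (by positivity)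
      have e5 : (1 + x₁) * ε ^ q ≤ Braw := by
        rw [hBraw]
        have : (1 + x₁) * ε ^ q = ε ^ q + x₁ * ε ^ q := by ring
        linarith [e2, e4]
      have e6 : ((1 + x₁) * ε ^ q) ^ r ≤ B :=
        Real.rpow_le_rpow (by positivity) e5 (by positivity)
      calc (1 + x₁) ^ ((1+α)/α) * ε = ((1 + x₁) * ε ^ q) ^ r := by
            rw [Real.mul_rpow (by linarith) (Real.rpow_nonneg hε.le _),
              ← Real.rpow_mul hε.le, hqr, Real.rpow_one, hr]
        _ ≤ B := e6
    exact final_step κ α hκ hα A B hApos hBpos.le M x₁ ε hμneg hx hε.le h1 h2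
end

section
/- For every real number β there exists a constant C = C(β) > 0 such that for every real n ≥ 3 and every continuously differentiable function u on the closed rectangle [0, n] × [0, 1]: ∫_{(0,n)×(0,1)} u(x)² (1 + x₁)^{−2} dx ≤ C ( ∫_{(0,n)×(0,1)} |∇u(x)|² dx + ∫_{(0,2)×(0,1)} u(x)² (1 + x₁)^{β} dx ). The constant C is independent of n and u. -/
open Set MeasureTheory intervalIntegral

lemma key1D (n : ℝ) (hn : 3 ≤ n) (g g' : ℝ → ℝ)
    (hderiv : ∀ s ∈ Icc (0:ℝ) n, HasDerivWithinAt g (g' s) (Icc (0:ℝ) n) s)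
    (hg : ContinuousOn g (Icc (0:ℝ) n))
    (hg' : ContinuousOn g' (Icc (0:ℝ) n)) :
    (∫ s in (0:ℝ)..n, g s ^ 2 * ((1+s)^2)⁻¹) ≤
      6 * (∫ s in (0:ℝ)..n, g' s ^ 2) + 4 * ∫ t in (0:ℝ)..1, g t ^ 2 := by
  have h0n : (0:ℝ) ≤ n := by linarith
  have h01 : (0:ℝ) ≤ 1 := by norm_num
  have h1n : (1:ℝ) ≤ n := by linarith
  have hsub1 : Icc (0:ℝ) 1 ⊆ Icc 0 n := Icc_subset_Icc le_rfl h1n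
  have hne : ∀ s ∈ Icc (0:ℝ) n, (1+s) ≠ 0 := fun s hs => by nlinarith [hs.1]
  have hw : ContinuousOn (fun s : ℝ => (1+s)⁻¹) (Icc 0 n) :=
    (continuous_const.add continuous_id).continuousOn.inv₀ hne
  have hw2 : ContinuousOn (fun s : ℝ => ((1+s)^2)⁻¹) (Icc 0 n) :=
    ((continuous_const.add continuous_id).pow 2).continuousOn.inv₀
      (fun s hs => pow_ne_zero 2 (hne s hs))
  -- FTC helper
  have ftc : ∀ (F F' : ℝ → ℝ),
      (∀ s ∈ Icc (0:ℝ) n, HasDerivWithinAt F (F' s) (Icc (0:ℝ) n) s) →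
      ContinuousOn F (Icc 0 n) → ContinuousOn F' (Icc 0 n) →
      ∀ b ∈ Icc (0:ℝ) n, ∫ s in (0:ℝ)..b, F' s = F b - F 0 := by
    intro F F' hF hFc hF'c b hb
    have hsub : Icc (0:ℝ) b ⊆ Icc 0 n := Icc_subset_Icc le_rfl hb.2
    apply integral_eq_sub_of_hasDeriv_right_of_le hb.1 (hFc.mono hsub)
    · intro x hx
      have hxm : x ∈ Icc (0:ℝ) n := ⟨hx.1.le, hx.2.le.trans hb.2⟩
      refine (hF x hxm).mono_of_mem_nhdsWithin ?_
      refine Filter.mem_of_superset (Ioc_mem_nhdsGT_of_mem ⟨le_rfl, lt_of_lt_of_le hx.2 hb.2⟩) ?_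
      exact fun y hy => ⟨hx.1.le.trans hy.1.le, hy.2⟩
    · exact (hF'c.mono hsub).intervalIntegrable_of_Icc hb.1
  -- derivative of g^2
  have hg2deriv : ∀ s ∈ Icc (0:ℝ) n,
      HasDerivWithinAt (fun t => g t ^ 2) (2 * g s * g' s) (Icc (0:ℝ) n) s := by
    intro s hs
    have := (hderiv s hs).pow 2
    show HasDerivWithinAt (g ^ 2) (2 * g s * g' s) (Icc (0:ℝ) n) s
    simpa [mul_comm, mul_assoc] using this
  have hg2c : ContinuousOn (fun t => g t ^ 2) (Icc (0:ℝ) n) := hg.pow 2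
  have hgg'c : ContinuousOn (fun s => 2 * g s * g' s) (Icc (0:ℝ) n) :=
    ((continuousOn_const.mul hg).mul hg')
  -- derivative of F
  set F : ℝ → ℝ := fun t => -(g t^2) * (1+t)⁻¹ with hF
  set F' : ℝ → ℝ := fun s => g s^2 * ((1+s)^2)⁻¹ - 2*g s*g' s*(1+s)⁻¹ with hF'
  have hFderiv : ∀ s ∈ Icc (0:ℝ) n, HasDerivWithinAt F (F' s) (Icc (0:ℝ) n) s := by
    intro s hs
    have hid : HasDerivWithinAt (fun t : ℝ => 1 + t) 1 (Icc (0:ℝ) n) s :=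
      (hasDerivWithinAt_id s _).const_add 1
    have h2 : HasDerivWithinAt (fun t : ℝ => (1+t)⁻¹) (-((1+s)^2)⁻¹) (Icc (0:ℝ) n) s := by
      have h := hid.inv (hne s hs)
      rw [show -1 / (1+s)^2 = -((1+s)^2)⁻¹ by ring] at h; exact h
    have : HasDerivWithinAt F _ (Icc (0:ℝ) n) s := ((hg2deriv s hs).neg).mul h2
    convert this using 1
    simp only [hF', Pi.neg_apply]
    field_simp
    ring
  have hFc : ContinuousOn F (Icc (0:ℝ) n) := (hg2c.neg).mul hw
  have hF'c : ContinuousOn F' (Icc (0:ℝ) n) := (hg2c.mul hw2).sub (hgg'c.mul hw)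
  -- main identity
  have hid1 : ∫ s in (0:ℝ)..n, F' s = -(g n^2) * (1+n)⁻¹ - (-(g 0^2) * (1+0)⁻¹) :=
    ftc F F' hFderiv hFc hF'c n ⟨h0n, le_rfl⟩
  -- integrabilities on [0,n]
  have iA : IntervalIntegrable (fun s => g s^2 * ((1+s)^2)⁻¹) volume 0 n :=
    (hg2c.mul hw2).intervalIntegrable_of_Icc h0n
  have iB : IntervalIntegrable (fun s => 2*g s*g' s*(1+s)⁻¹) volume 0 n :=
    (hgg'c.mul hw).intervalIntegrable_of_Icc h0n
  have iG' : IntervalIntegrable (fun s => g' s ^ 2) volume 0 n :=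
    (hg'.pow 2).intervalIntegrable_of_Icc h0n
  have iG'1 : IntervalIntegrable (fun s => g' s ^ 2) volume 0 1 :=
    ((hg'.mono hsub1).pow 2).intervalIntegrable_of_Icc h01
  have iG1 : IntervalIntegrable (fun s => g s ^ 2) volume 0 1 :=
    ((hg.mono hsub1).pow 2).intervalIntegrable_of_Icc h01
  have hsplit : (∫ s in (0:ℝ)..n, F' s)
      = (∫ s in (0:ℝ)..n, g s^2 * ((1+s)^2)⁻¹) - ∫ s in (0:ℝ)..n, 2*g s*g' s*(1+s)⁻¹ :=
    integral_sub iA iB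
  -- pointwise bound for B
  have hBbound : (∫ s in (0:ℝ)..n, 2*g s*g' s*(1+s)⁻¹)
      ≤ ∫ s in (0:ℝ)..n, ((1/2) * (g s^2 * ((1+s)^2)⁻¹) + 2 * g' s ^2) := by
    apply integral_mono_on h0n iB ((iA.const_mul _).add (iG'.const_mul _))
    intro s hs
    have h : ((1+s)^2)⁻¹ = ((1+s)⁻¹)^2 := by rw [inv_pow]
    rw [h]
    nlinarith [sq_nonneg (g s * (1+s)⁻¹ - 2 * g' s)]
  have hBsplit : (∫ s in (0:ℝ)..n, ((1/2) * (g s^2 * ((1+s)^2)⁻¹) + 2 * g' s ^2))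
      = (1/2) * (∫ s in (0:ℝ)..n, g s^2 * ((1+s)^2)⁻¹) + 2 * ∫ s in (0:ℝ)..n, g' s ^2 := by
    rw [integral_add (iA.const_mul _) (iG'.const_mul _), intervalIntegral.integral_const_mul, intervalIntegral.integral_const_mul]
  have hgn : 0 ≤ g n ^2 * (1+n)⁻¹ := by positivity
  -- step 1 conclusion
  have step1 : (∫ s in (0:ℝ)..n, g s^2 * ((1+s)^2)⁻¹)
      ≤ 2 * g 0 ^2 + 4 * ∫ s in (0:ℝ)..n, g' s ^2 := by
    have := hid1
    rw [hsplit] at this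
    simp only [add_zero, inv_one, mul_one] at this
    nlinarith [hBbound, hBsplit]
  -- bound g 0 ^ 2
  set K : ℝ := ∫ s in (0:ℝ)..1, (g s^2 + g' s ^2) with hKdef
  have hK : ∀ t ∈ Icc (0:ℝ) 1, g 0 ^2 ≤ g t ^2 + K := by
    intro t ht
    have htn : t ∈ Icc (0:ℝ) n := hsub1 ht
    have h1 : ∫ s in (0:ℝ)..t, 2 * g s * g' s = g t ^2 - g 0 ^2 :=
      ftc _ _ hg2deriv hg2c hgg'c t htn
    have hsubt : Icc (0:ℝ) t ⊆ Icc 0 n := Icc_subset_Icc le_rfl htn.2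
    have iGGt : IntervalIntegrable (fun s => 2 * g s * g' s) volume 0 t :=
      (hgg'c.mono hsubt).intervalIntegrable_of_Icc ht.1
    have iSt' : IntervalIntegrable (fun s => g s ^2 + g' s ^2) volume 0 t :=
      (((hg.mono hsubt).pow 2).add ((hg'.mono hsubt).pow 2)).intervalIntegrable_of_Icc ht.1
    have iSt : IntervalIntegrable (fun s => -(g s ^2 + g' s ^2)) volume 0 t :=
      ((((hg.mono hsubt).pow 2).add ((hg'.mono hsubt).pow 2)).neg).intervalIntegrable_of_Icc ht.1
    have iS1 : IntervalIntegrable (fun s => g s ^2 + g' s ^2) volume 0 1 := iG1.add iG'1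
    have iSt1 : IntervalIntegrable (fun s => g s ^2 + g' s ^2) volume t 1 := by
      apply iS1.mono_set
      rw [uIcc_of_le ht.2, uIcc_of_le h01]
      exact Icc_subset_Icc ht.1 le_rfl
    have h2 : (∫ s in (0:ℝ)..t, (-(g s ^2 + g' s ^2))) ≤ ∫ s in (0:ℝ)..t, 2 * g s * g' s := by
      apply integral_mono_on ht.1 iSt iGGt
      intro s hs
      nlinarith [sq_nonneg (g s + g' s)]
    have h3 : (∫ s in (0:ℝ)..t, (g s ^2 + g' s ^2)) ≤ K := by
      rw [hKdef, ← integral_add_adjacent_intervals iSt' iSt1]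
      have : 0 ≤ ∫ s in t..1, (g s ^2 + g' s ^2) := by
        apply integral_nonneg ht.2
        intro s _; positivity
      linarith
    rw [intervalIntegral.integral_neg] at h2
    linarith
  have hKint : g 0 ^2 ≤ (∫ t in (0:ℝ)..1, g t ^2) + K := by
    have h1 : g 0 ^2 = ∫ t in (0:ℝ)..1, (g 0 ^2 : ℝ) := by simp
    have h2 : (∫ t in (0:ℝ)..1, (g 0 ^2 : ℝ))
        ≤ ∫ t in (0:ℝ)..1, (g t ^2 + K) := by
      apply integral_mono_on h01 intervalIntegrable_const (iG1.add intervalIntegrable_const)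
      exact hK
    have h3 : (∫ t in (0:ℝ)..1, (g t ^2 + K)) = (∫ t in (0:ℝ)..1, g t ^2) + K := by
      rw [integral_add iG1 intervalIntegrable_const, intervalIntegral.integral_const]
      simp
    linarith
  have hsum1 : K = (∫ s in (0:ℝ)..1, g s ^2) + ∫ s in (0:ℝ)..1, g' s ^2 := integral_add iG1 iG'1
  -- ∫_0^1 g'^2 ≤ ∫_0^n g'^2
  have iG'2 : IntervalIntegrable (fun s => g' s ^ 2) volume 1 n := by
    apply iG'.mono_set
    rw [uIcc_of_le h1n, uIcc_of_le h0n]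
    exact Icc_subset_Icc h01 le_rfl
  have hmono : (∫ s in (0:ℝ)..1, g' s ^2) ≤ ∫ s in (0:ℝ)..n, g' s ^2 := by
    rw [← integral_add_adjacent_intervals iG'1 iG'2]
    have : 0 ≤ ∫ s in (1:ℝ)..n, g' s ^ 2 := by
      apply integral_nonneg h1n
      intro s _; positivity
    linarith
  linarith [step1, hKint, hsum1, hmono]


-- Fubini helpers
lemma fub_symm (f : ℝ × ℝ → ℝ) {s t : Set ℝ} (hf : IntegrableOn f (s ×ˢ t)) :
    ∫ z in s ×ˢ t, f z = ∫ y in t, ∫ x in s, f (x, y) := by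
  rw [IntegrableOn, Measure.volume_eq_prod, ← Measure.prod_restrict] at hf
  rw [Measure.volume_eq_prod, ← Measure.prod_restrict]
  exact integral_prod_symm f hf

lemma marg (f : ℝ × ℝ → ℝ) {s t : Set ℝ} (hf : IntegrableOn f (s ×ˢ t)) :
    IntegrableOn (fun y => ∫ x in s, f (x, y)) t := by
  rw [IntegrableOn, Measure.volume_eq_prod, ← Measure.prod_restrict] at hf
  exact hf.integral_prod_right

set_option maxHeartbeats 1000000 in
/-- for every β ∈ ℝ there is C = C(β) > 0 (independent of n and u) such
that for every real n ≥ 3 and every u ∈ C¹([0,n]×[0,1]):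
∫_{(0,n)×(0,1)} u² (1+x₁)^{−2} ≤ C (∫_{(0,n)×(0,1)} |∇u|² + ∫_{(0,2)×(0,1)} u² (1+x₁)^β). -/
theorem stmt_11 (β : ℝ) :
    ∃ C > (0 : ℝ), ∀ n : ℝ, 3 ≤ n → ∀ u : ℝ × ℝ → ℝ,
      ContDiffOn ℝ 1 u (Icc (0 : ℝ) n ×ˢ Icc (0 : ℝ) 1) →
      (∫ x in Ioo (0 : ℝ) n ×ˢ Ioo (0 : ℝ) 1, u x ^ 2 * (1 + x.1) ^ (-2 : ℝ)) ≤
        C * ((∫ x in Ioo (0 : ℝ) n ×ˢ Ioo (0 : ℝ) 1,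
              (fderivWithin ℝ u (Icc (0 : ℝ) n ×ˢ Icc (0 : ℝ) 1) x (1, 0)) ^ 2 +
              (fderivWithin ℝ u (Icc (0 : ℝ) n ×ˢ Icc (0 : ℝ) 1) x (0, 1)) ^ 2) +
            ∫ x in Ioo (0 : ℝ) 2 ×ˢ Ioo (0 : ℝ) 1, u x ^ 2 * (1 + x.1) ^ β) := by
  have hm : (0:ℝ) < min 1 (3 ^ β) := lt_min one_pos (Real.rpow_pos_of_pos (by norm_num) β)
  set m : ℝ := min 1 (3 ^ β) with hmdef
  refine ⟨6 + 4 * m⁻¹, by positivity, ?_⟩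
  intro n hn u hu
  have h0n : (0:ℝ) ≤ n := by linarith
  set S : Set (ℝ × ℝ) := Icc (0 : ℝ) n ×ˢ Icc (0 : ℝ) 1 with hSdef
  set R : Set (ℝ × ℝ) := Ioo (0 : ℝ) n ×ˢ Ioo (0 : ℝ) 1 with hRdef
  have hRS : R ⊆ S := prod_mono Ioo_subset_Icc_self Ioo_subset_Icc_self
  have hScomp : IsCompact S := isCompact_Icc.prod isCompact_Icc
  have hRmeas : MeasurableSet R := (measurableSet_Ioo.prod measurableSet_Ioo)
  have hSud : UniqueDiffOn ℝ S :=
    (uniqueDiffOn_Icc (by linarith : (0:ℝ) < n)).prod (uniqueDiffOn_Icc one_pos)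
  have hucont : ContinuousOn u S := hu.continuousOn
  have hfd : ContinuousOn (fderivWithin ℝ u S) S := hu.continuousOn_fderivWithin hSud le_rfl
  have hd1c : ContinuousOn (fun x => fderivWithin ℝ u S x ((1:ℝ), (0:ℝ))) S :=
    (ContinuousLinearMap.apply ℝ ℝ ((1:ℝ),(0:ℝ))).continuous.comp_continuousOn hfd
  have hd2c : ContinuousOn (fun x => fderivWithin ℝ u S x ((0:ℝ), (1:ℝ))) S :=
    (ContinuousLinearMap.apply ℝ ℝ ((0:ℝ),(1:ℝ))).continuous.comp_continuousOn hfd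
  -- the three integrands
  set f : ℝ × ℝ → ℝ := fun x => u x ^ 2 * ((1 + x.1) ^ 2)⁻¹ with hfdef
  set d1 : ℝ × ℝ → ℝ := fun x => (fderivWithin ℝ u S x ((1:ℝ),(0:ℝ))) ^ 2 with hd1def
  set d2 : ℝ × ℝ → ℝ := fun x => (fderivWithin ℝ u S x ((0:ℝ),(1:ℝ))) ^ 2 with hd2def
  have hfc : ContinuousOn f S := by
    apply (hucont.pow 2).mul
    apply ContinuousOn.inv₀
    · exact ((continuous_const.add continuous_fst).pow 2).continuousOn
    · intro x hx
      have : (0:ℝ) ≤ x.1 := (hx.1 : x.1 ∈ Icc (0:ℝ) n).1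
      positivity
  have hfint : IntegrableOn f R := (hfc.integrableOn_compact hScomp).mono_set hRS
  have hd1int : IntegrableOn d1 R := ((hd1c.pow 2).integrableOn_compact hScomp).mono_set hRS
  have hDint : IntegrableOn (fun x => d1 x + d2 x) R :=
    (((hd1c.pow 2).add (hd2c.pow 2)).integrableOn_compact hScomp).mono_set hRS
  have husq : IntegrableOn (fun x => u x ^ 2) (Ioo (0:ℝ) 1 ×ˢ Ioo (0:ℝ) 1) := by
    apply ((hucont.pow 2).integrableOn_compact hScomp).mono_set
    exact Subset.trans (prod_mono (Ioo_subset_Ioo le_rfl (by linarith)) le_rfl) hRS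
  -- rewrite the LHS
  have hLHS : (∫ x in R, u x ^ 2 * (1 + x.1) ^ (-2 : ℝ)) = ∫ x in R, f x := by
    apply setIntegral_congr_fun hRmeas
    intro x hx
    have hx1 : (0:ℝ) < 1 + x.1 := by have := hx.1.1; simp only [hRdef] at *; linarith [hx.1.1]
    simp only [hfdef]
    rw [show (-2:ℝ) = ((-2:ℤ):ℝ) by norm_num, Real.rpow_intCast]
    norm_num [zpow_neg]
  -- slice inequality (uses key1D, to be provided)
  have hslice : ∀ y ∈ Ioo (0:ℝ) 1,
      (∫ x in Ioo (0:ℝ) n, f (x, y)) ≤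
        6 * (∫ x in Ioo (0:ℝ) n, d1 (x, y)) + 4 * ∫ x in Ioo (0:ℝ) 1, u (x, y) ^ 2 := by
    intro y hy
    have hyI : y ∈ Icc (0:ℝ) 1 := Ioo_subset_Icc_self hy
    have hmaps : MapsTo (fun s : ℝ => ((s, y) : ℝ × ℝ)) (Icc (0:ℝ) n) S :=
      fun s hs => ⟨hs, hyI⟩
    have hline : Continuous (fun s : ℝ => ((s, y) : ℝ × ℝ)) :=
      continuous_id.prodMk continuous_const
    have hg : ContinuousOn (fun s => u (s, y)) (Icc (0:ℝ) n) :=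
      hucont.comp hline.continuousOn hmaps
    have hg' : ContinuousOn (fun s => fderivWithin ℝ u S (s, y) ((1:ℝ),(0:ℝ))) (Icc (0:ℝ) n) :=
      hd1c.comp hline.continuousOn hmaps
    have hderiv : ∀ s ∈ Icc (0:ℝ) n,
        HasDerivWithinAt (fun s => u (s, y))
          (fderivWithin ℝ u S (s, y) ((1:ℝ),(0:ℝ))) (Icc (0:ℝ) n) s := by
      intro s hs
      have hd := ((hu.differentiableOn one_ne_zero) (s, y) (hmaps hs)).hasFDerivWithinAt
      have hι : HasDerivWithinAt (fun s : ℝ => ((s, y) : ℝ × ℝ)) ((1:ℝ),(0:ℝ)) (Icc (0:ℝ) n) s :=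
        (hasDerivWithinAt_id s _).prodMk (hasDerivWithinAt_const s _ y)
      have := hd.comp_hasDerivWithinAt s hι hmaps
      exact this
    have h1d := key1D n hn _ _ hderiv hg hg'
    rw [intervalIntegral.integral_of_le h0n, intervalIntegral.integral_of_le (by norm_num : (0:ℝ) ≤ 1),
        intervalIntegral.integral_of_le h0n, integral_Ioc_eq_integral_Ioo,
        integral_Ioc_eq_integral_Ioo, integral_Ioc_eq_integral_Ioo] at h1d
    exact h1d
  -- Fubini
  have hfub : (∫ x in R, f x) = ∫ y in Ioo (0:ℝ) 1, ∫ x in Ioo (0:ℝ) n, f (x, y) :=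
    fub_symm f hfint
  have hfub1 : (∫ x in R, d1 x) = ∫ y in Ioo (0:ℝ) 1, ∫ x in Ioo (0:ℝ) n, d1 (x, y) :=
    fub_symm d1 hd1int
  have hfubu : (∫ x in Ioo (0:ℝ) 1 ×ˢ Ioo (0:ℝ) 1, u x ^ 2)
      = ∫ y in Ioo (0:ℝ) 1, ∫ x in Ioo (0:ℝ) 1, u (x, y) ^ 2 :=
    fub_symm _ husq
  have hmarg_f : IntegrableOn (fun y => ∫ x in Ioo (0:ℝ) n, f (x, y)) (Ioo (0:ℝ) 1) :=
    marg f hfint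
  have hmarg_d1 : IntegrableOn (fun y => ∫ x in Ioo (0:ℝ) n, d1 (x, y)) (Ioo (0:ℝ) 1) :=
    marg d1 hd1int
  have hmarg_u : IntegrableOn (fun y => ∫ x in Ioo (0:ℝ) 1, u (x, y) ^ 2) (Ioo (0:ℝ) 1) :=
    marg _ husq
  -- integrate the slice inequality in y
  have hstep : (∫ x in R, f x) ≤
      6 * (∫ x in R, d1 x) + 4 * ∫ x in Ioo (0:ℝ) 1 ×ˢ Ioo (0:ℝ) 1, u x ^ 2 := by
    rw [hfub, hfub1, hfubu, ← MeasureTheory.integral_const_mul, ← MeasureTheory.integral_const_mul,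
      ← MeasureTheory.integral_add (hmarg_d1.const_mul 6) (hmarg_u.const_mul 4)]
    apply setIntegral_mono_on hmarg_f ((hmarg_d1.const_mul 6).add (hmarg_u.const_mul 4))
      measurableSet_Ioo
    exact hslice
  -- local term comparison
  have hsub21 : Icc (0:ℝ) 2 ×ˢ Icc (0:ℝ) 1 ⊆ S :=
    prod_mono (Icc_subset_Icc le_rfl (by linarith)) le_rfl
  have hloc2 : IntegrableOn (fun x : ℝ × ℝ => u x ^ 2) (Ioo (0:ℝ) 2 ×ˢ Ioo (0:ℝ) 1) := by
    apply (((hucont.mono hsub21).pow 2).integrableOn_compact (isCompact_Icc.prod isCompact_Icc)).mono_set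
    exact prod_mono Ioo_subset_Icc_self Ioo_subset_Icc_self
  have hlocβc : ContinuousOn (fun x : ℝ × ℝ => u x ^ 2 * (1 + x.1) ^ β) (Icc (0:ℝ) 2 ×ˢ Icc (0:ℝ) 1) := by
    apply (((hucont.mono hsub21)).pow 2).mul
    apply ContinuousOn.rpow_const
    · exact (continuous_const.add continuous_fst).continuousOn
    · intro x hx
      left
      have : (0:ℝ) ≤ x.1 := hx.1.1
      positivity
  have hlocβ : IntegrableOn (fun x : ℝ × ℝ => u x ^ 2 * (1 + x.1) ^ β)
      (Ioo (0:ℝ) 2 ×ˢ Ioo (0:ℝ) 1) := by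
    apply (hlocβc.integrableOn_compact (isCompact_Icc.prod isCompact_Icc)).mono_set
    exact prod_mono Ioo_subset_Icc_self Ioo_subset_Icc_self
  have h6 : (∫ x in Ioo (0:ℝ) 1 ×ˢ Ioo (0:ℝ) 1, u x ^ 2)
      ≤ ∫ x in Ioo (0:ℝ) 2 ×ˢ Ioo (0:ℝ) 1, u x ^ 2 := by
    apply setIntegral_mono_set hloc2
    · exact Filter.Eventually.of_forall fun x => sq_nonneg (u x)
    · exact HasSubset.Subset.eventuallyLE (prod_mono (Ioo_subset_Ioo le_rfl (by norm_num)) le_rfl)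
  have h7 : (∫ x in Ioo (0:ℝ) 2 ×ˢ Ioo (0:ℝ) 1, u x ^ 2)
      ≤ m⁻¹ * ∫ x in Ioo (0:ℝ) 2 ×ˢ Ioo (0:ℝ) 1, u x ^ 2 * (1 + x.1) ^ β := by
    rw [← MeasureTheory.integral_const_mul]
    apply setIntegral_mono_on hloc2 (hlocβ.const_mul _) (measurableSet_Ioo.prod measurableSet_Ioo)
    intro x hx
    have hb1 : (1:ℝ) ≤ 1 + x.1 := by linarith [hx.1.1]
    have hb3 : 1 + x.1 ≤ (3:ℝ) := by linarith [hx.1.2]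
    have hmb : m ≤ (1 + x.1) ^ β := by
      rcases le_or_gt 0 β with hβ | hβ
      · exact le_trans (min_le_left _ _) (Real.one_le_rpow hb1 hβ)
      · exact le_trans (min_le_right _ _) (Real.rpow_le_rpow_of_nonpos (by linarith) hb3 hβ.le)
    have h1 : u x ^ 2 * m ≤ u x ^ 2 * (1 + x.1) ^ β :=
      mul_le_mul_of_nonneg_left hmb (sq_nonneg _)
    have h2 : m⁻¹ * (u x ^ 2 * m) ≤ m⁻¹ * (u x ^ 2 * (1 + x.1) ^ β) :=
      mul_le_mul_of_nonneg_left h1 (inv_nonneg.mpr hm.le)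
    calc u x ^ 2 = m⁻¹ * (u x ^ 2 * m) := by field_simp
    _ ≤ _ := h2
  -- nonnegativity
  have hD0 : 0 ≤ ∫ x in R, (d1 x + d2 x) :=
    setIntegral_nonneg hRmeas fun x _ => by positivity
  have hLoc0 : 0 ≤ ∫ x in Ioo (0:ℝ) 2 ×ˢ Ioo (0:ℝ) 1, u x ^ 2 * (1 + x.1) ^ β := by
    apply setIntegral_nonneg (measurableSet_Ioo.prod measurableSet_Ioo)
    intro x hx
    have : (0:ℝ) ≤ 1 + x.1 := by linarith [hx.1.1]
    positivity
  have hd1le : (∫ x in R, d1 x) ≤ ∫ x in R, (d1 x + d2 x) :=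
    setIntegral_mono_on hd1int hDint hRmeas fun x _ => le_add_of_nonneg_right (sq_nonneg _)
  have hminv : (0:ℝ) ≤ m⁻¹ := inv_nonneg.mpr hm.le
  rw [hLHS]
  nlinarith [hstep, h6, h7, hD0, hLoc0, hd1le, hminv]
end

section
/- There exists a constant C > 0 such that for every continuously differentiable, compactly supported function u : ℝ² → ℝ: ∫₀^{+∞} u(x₁, 1)² (1 + x₁)^{−2} dx₁ ≤ C ( ∫_{R₀} |∇u(x)|² dx + ∫_{R₀} u(x)² (1 + x₁)^{−2} dx ), where R₀ = (0, +∞) × (0, 1). -/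
open Set MeasureTheory

/-- weighted trace inequality on the upper side of the semi-infinite
strip R₀ = (0,∞) × (0,1): there is C > 0 such that for every C¹ compactly supported
u : ℝ² → ℝ,
∫₀^∞ u(x₁,1)² (1+x₁)^{−2} dx₁ ≤ C (∫_{R₀} |∇u|² dx + ∫_{R₀} u² (1+x₁)^{−2} dx). -/
theorem stmt_13 :
    ∃ C > (0 : ℝ), ∀ u : ℝ × ℝ → ℝ, ContDiff ℝ 1 u → HasCompactSupport u →
      (∫ x₁ in Ioi (0 : ℝ), u (x₁, 1) ^ 2 * (1 + x₁) ^ (-2 : ℝ)) ≤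
        C * ((∫ x in Ioi (0 : ℝ) ×ˢ Ioo (0 : ℝ) 1,
                (fderiv ℝ u x (1, 0)) ^ 2 + (fderiv ℝ u x (0, 1)) ^ 2) +
             ∫ x in Ioi (0 : ℝ) ×ˢ Ioo (0 : ℝ) 1, u x ^ 2 * (1 + x.1) ^ (-2 : ℝ)) := by
  refine ⟨2, by norm_num, ?_⟩
  intro u hu hsupp
  have hucont : Continuous u := hu.continuous
  have hudiff : Differentiable ℝ u := hu.differentiable one_ne_zero
  have hdcont : Continuous (fderiv ℝ u) := hu.continuous_fderiv one_ne_zero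
  have hdsupp : HasCompactSupport (fderiv ℝ u) := hsupp.fderiv ℝ
  have hd2cont : Continuous (fun x : ℝ × ℝ => fderiv ℝ u x (0, 1)) :=
    (ContinuousLinearMap.apply ℝ ℝ (((0 : ℝ), (1 : ℝ)) : ℝ × ℝ)).continuous.comp hdcont
  have hd1cont : Continuous (fun x : ℝ × ℝ => fderiv ℝ u x (1, 0)) :=
    (ContinuousLinearMap.apply ℝ ℝ (((1 : ℝ), (0 : ℝ)) : ℝ × ℝ)).continuous.comp hdcont
  have hd2supp : HasCompactSupport (fun x : ℝ × ℝ => fderiv ℝ u x (0, 1)) :=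
    hdsupp.comp_left (g := fun L : (ℝ × ℝ) →L[ℝ] ℝ => L (0, 1)) rfl
  have hd1supp : HasCompactSupport (fun x : ℝ × ℝ => fderiv ℝ u x (1, 0)) :=
    hdsupp.comp_left (g := fun L : (ℝ × ℝ) →L[ℝ] ℝ => L (1, 0)) rfl
  -- weight bounds
  have hw0 : ∀ x₁ : ℝ, 0 ≤ x₁ → 0 ≤ (1 + x₁) ^ (-2 : ℝ) :=
    fun x₁ hx => Real.rpow_nonneg (by linarith) _
  have hw1 : ∀ x₁ : ℝ, 0 ≤ x₁ → (1 + x₁) ^ (-2 : ℝ) ≤ 1 :=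
    fun x₁ hx => Real.rpow_le_one_of_one_le_of_nonpos (by linarith) (by norm_num)
  -- derivative along second coordinate
  have hg : ∀ x₁ t : ℝ, HasDerivAt (fun s => u (x₁, s)) (fderiv ℝ u (x₁, t) (0, 1)) t := by
    intro x₁ t
    have h1 : HasDerivAt (fun s : ℝ => ((x₁, s) : ℝ × ℝ)) ((0 : ℝ), (1 : ℝ)) t :=
      (hasDerivAt_const t x₁).prodMk (hasDerivAt_id t)
    exact (hudiff (x₁, t)).hasFDerivAt.comp_hasDerivAt t h1
  -- FTC identity
  have key : ∀ x₁ : ℝ, u (x₁, 1) ^ 2 =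
      ∫ t in Ioo (0 : ℝ) 1,
        (u (x₁, t) ^ 2 + t * (2 * u (x₁, t) * fderiv ℝ u (x₁, t) (0, 1))) := by
    intro x₁
    have hcont1 : Continuous fun t : ℝ => u (x₁, t) :=
      hucont.comp (continuous_const.prodMk continuous_id)
    have hcont2 : Continuous fun t : ℝ => fderiv ℝ u (x₁, t) (0, 1) :=
      hd2cont.comp (continuous_const.prodMk continuous_id)
    have hF : ∀ t ∈ uIcc (0 : ℝ) 1, HasDerivAt (fun s => s * u (x₁, s) ^ 2)
        (u (x₁, t) ^ 2 + t * (2 * u (x₁, t) * fderiv ℝ u (x₁, t) (0, 1))) t := by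
      intro t _
      have := (hasDerivAt_id t).mul ((hg x₁ t).pow 2)
      refine this.congr_deriv ?_
      simp only [id_eq, Pi.pow_apply, Nat.add_one_sub_one, pow_one]
      push_cast
      ring
    have hint : IntervalIntegrable
        (fun t => u (x₁, t) ^ 2 + t * (2 * u (x₁, t) * fderiv ℝ u (x₁, t) (0, 1)))
        volume 0 1 :=
      ((hcont1.pow 2).add
        (continuous_id.mul ((continuous_const.mul hcont1).mul hcont2))).intervalIntegrable 0 1
    have h := intervalIntegral.integral_eq_sub_of_hasDerivAt hF hint
    rw [intervalIntegral.integral_of_le zero_le_one, integral_Ioc_eq_integral_Ioo] at h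
    simpa using h.symm
  -- pointwise inequality on the slice
  have stepA : ∀ x₁ ∈ Ioi (0 : ℝ), u (x₁, 1) ^ 2 * (1 + x₁) ^ (-2 : ℝ) ≤
      ∫ t in Ioo (0 : ℝ) 1,
        ((fderiv ℝ u (x₁, t) (0, 1)) ^ 2 + 2 * u (x₁, t) ^ 2 * (1 + x₁) ^ (-2 : ℝ)) := by
    intro x₁ hx₁
    have hx₁' : (0 : ℝ) ≤ x₁ := le_of_lt hx₁
    have hcont1 : Continuous fun t : ℝ => u (x₁, t) :=
      hucont.comp (continuous_const.prodMk continuous_id)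
    have hcont2 : Continuous fun t : ℝ => fderiv ℝ u (x₁, t) (0, 1) :=
      hd2cont.comp (continuous_const.prodMk continuous_id)
    rw [key x₁, ← integral_mul_const]
    apply setIntegral_mono_on
    · exact ((((hcont1.pow 2).add
        (continuous_id.mul ((continuous_const.mul hcont1).mul hcont2))).mul
          continuous_const).intervalIntegrable 0 1).1.mono_set Ioo_subset_Ioc_self
    · exact (((hcont2.pow 2).add
        ((continuous_const.mul (hcont1.pow 2)).mul
          continuous_const)).intervalIntegrable 0 1).1.mono_set Ioo_subset_Ioc_self
    · exact measurableSet_Ioo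
    · intro t ht
      have h1 : (0:ℝ) < t := ht.1
      have h2 : t < 1 := ht.2
      have h3 := hw0 x₁ hx₁'
      have h4 := hw1 x₁ hx₁'
      have ht2 : t ^ 2 ≤ 1 := by nlinarith
      have hw2 : ((1 + x₁) ^ (-2 : ℝ)) ^ 2 ≤ (1 + x₁) ^ (-2 : ℝ) := by nlinarith
      have h5 : t ^ 2 * ((1 + x₁) ^ (-2 : ℝ)) ^ 2 ≤ (1 + x₁) ^ (-2 : ℝ) := by
        have := mul_le_mul ht2 hw2 (sq_nonneg ((1 + x₁) ^ (-2 : ℝ))) zero_le_one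
        linarith
      nlinarith [sq_nonneg (fderiv ℝ u (x₁, t) (0, 1) - t * u (x₁, t) * (1 + x₁) ^ (-2 : ℝ)),
        mul_le_mul_of_nonneg_left h5 (sq_nonneg (u (x₁, t)))]
  -- integrability on the product set
  have hprodmeas : MeasurableSet (Ioi (0:ℝ) ×ˢ Ioo (0:ℝ) 1) :=
    measurableSet_Ioi.prod measurableSet_Ioo
  have hIu2 : Integrable (fun x : ℝ × ℝ => u x ^ 2) :=
    (hucont.pow 2).integrable_of_hasCompactSupport
      (hsupp.comp_left (g := fun y : ℝ => y ^ 2) (by norm_num) :)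
  have hId2 : Integrable (fun x : ℝ × ℝ => (fderiv ℝ u x (0, 1)) ^ 2) :=
    (hd2cont.pow 2).integrable_of_hasCompactSupport
      (hd2supp.comp_left (g := fun y : ℝ => y ^ 2) (by norm_num) :)
  have hIdd : Integrable (fun x : ℝ × ℝ => (fderiv ℝ u x (1, 0)) ^ 2 + (fderiv ℝ u x (0, 1)) ^ 2) :=
    ((hd1cont.pow 2).add (hd2cont.pow 2)).integrable_of_hasCompactSupport
      ((hd1supp.comp_left (g := fun y : ℝ => y ^ 2) (by norm_num) :).add
        (hd2supp.comp_left (g := fun y : ℝ => y ^ 2) (by norm_num) :))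
  have hwmble : IntegrableOn (fun x : ℝ × ℝ => u x ^ 2 * (1 + x.1) ^ (-2 : ℝ))
      (Ioi (0:ℝ) ×ˢ Ioo (0:ℝ) 1) := by
    have hcw : ContinuousOn (fun x : ℝ × ℝ => u x ^ 2 * (1 + x.1) ^ (-2 : ℝ))
        (Ioi (0:ℝ) ×ˢ Ioo (0:ℝ) 1) := by
      refine ContinuousOn.mul ((hucont.pow 2).continuousOn) ?_
      intro x hx
      have hx1 : (0:ℝ) < x.1 := hx.1
      exact (ContinuousAt.rpow_const ((continuous_const.add continuous_fst).continuousAt)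
        (Or.inl (ne_of_gt (by linarith : (0:ℝ) < 1 + x.1)))).continuousWithinAt
    refine Integrable.mono' hIu2.integrableOn (hcw.aestronglyMeasurable hprodmeas) ?_
    filter_upwards [ae_restrict_mem hprodmeas] with x hx
    have hx1 : (0:ℝ) ≤ x.1 := le_of_lt hx.1
    have h0 := hw0 x.1 hx1
    have h1 := hw1 x.1 hx1
    rw [Real.norm_eq_abs, abs_of_nonneg (mul_nonneg (sq_nonneg _) h0)]
    nlinarith [sq_nonneg (u x)]
  have hfInt : IntegrableOn
      (fun x : ℝ × ℝ => (fderiv ℝ u x (0, 1)) ^ 2 + 2 * u x ^ 2 * (1 + x.1) ^ (-2 : ℝ))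
      (Ioi (0:ℝ) ×ˢ Ioo (0:ℝ) 1) := by
    have := hId2.integrableOn.add (hwmble.const_mul 2)
    simpa [mul_assoc, IntegrableOn, Pi.add_def] using this
  -- Fubini
  have hprod : (volume.restrict (Ioi (0:ℝ))).prod (volume.restrict (Ioo (0:ℝ) 1)) =
      (volume : Measure (ℝ × ℝ)).restrict (Ioi (0:ℝ) ×ˢ Ioo (0:ℝ) 1) := by
    rw [Measure.prod_restrict, ← Measure.volume_eq_prod]
  have hfInt' : Integrable
      (fun x : ℝ × ℝ => (fderiv ℝ u x (0, 1)) ^ 2 + 2 * u x ^ 2 * (1 + x.1) ^ (-2 : ℝ))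
      ((volume.restrict (Ioi (0:ℝ))).prod (volume.restrict (Ioo (0:ℝ) 1))) := by
    rw [hprod]; exact hfInt
  have hFub : (∫ x in Ioi (0:ℝ) ×ˢ Ioo (0:ℝ) 1,
        ((fderiv ℝ u x (0, 1)) ^ 2 + 2 * u x ^ 2 * (1 + x.1) ^ (-2 : ℝ))) =
      ∫ x₁ in Ioi (0:ℝ), ∫ t in Ioo (0:ℝ) 1,
        ((fderiv ℝ u (x₁, t) (0, 1)) ^ 2 + 2 * u (x₁, t) ^ 2 * (1 + x₁) ^ (-2 : ℝ)) := by
    rw [← hprod]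
    exact integral_prod _ hfInt'
  have hHInt : IntegrableOn (fun x₁ : ℝ => ∫ t in Ioo (0:ℝ) 1,
      ((fderiv ℝ u (x₁, t) (0, 1)) ^ 2 + 2 * u (x₁, t) ^ 2 * (1 + x₁) ^ (-2 : ℝ)))
      (Ioi (0:ℝ)) := hfInt'.integral_prod_left
  -- LHS integrable
  have hc1 : Continuous fun x₁ : ℝ => u (x₁, 1) :=
    hucont.comp (continuous_id.prodMk continuous_const)
  have hK : HasCompactSupport fun x₁ : ℝ => u (x₁, 1) := by
    refine HasCompactSupport.intro (hsupp.image continuous_fst) ?_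
    intro x₁ hx₁
    by_contra h
    exact hx₁ ⟨(x₁, 1), subset_tsupport u h, rfl⟩
  have hL : IntegrableOn (fun x₁ : ℝ => u (x₁, 1) ^ 2 * (1 + x₁) ^ (-2 : ℝ)) (Ioi (0:ℝ)) := by
    have hI : Integrable (fun x₁ : ℝ => u (x₁, 1) ^ 2) :=
      (hc1.pow 2).integrable_of_hasCompactSupport
        (hK.comp_left (g := fun y : ℝ => y ^ 2) (by norm_num) :)
    refine Integrable.mono' hI.integrableOn ?_ ?_
    · refine (ContinuousOn.mul ((hc1.pow 2).continuousOn) ?_).aestronglyMeasurable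
        measurableSet_Ioi
      intro x hx
      have hx' : (0:ℝ) < x := hx
      exact (ContinuousAt.rpow_const ((continuous_const.add continuous_id).continuousAt)
        (Or.inl (ne_of_gt (by linarith : (0:ℝ) < 1 + x)))).continuousWithinAt
    · filter_upwards [ae_restrict_mem measurableSet_Ioi] with x hx
      have h0 := hw0 x (le_of_lt hx)
      have h1 := hw1 x (le_of_lt hx)
      rw [Real.norm_eq_abs, abs_of_nonneg (mul_nonneg (sq_nonneg _) h0)]
      nlinarith [sq_nonneg (u (x, 1))]
  -- split the product integral
  have hsplit : (∫ x in Ioi (0:ℝ) ×ˢ Ioo (0:ℝ) 1,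
        ((fderiv ℝ u x (0, 1)) ^ 2 + 2 * u x ^ 2 * (1 + x.1) ^ (-2 : ℝ))) =
      (∫ x in Ioi (0:ℝ) ×ˢ Ioo (0:ℝ) 1, (fderiv ℝ u x (0, 1)) ^ 2) +
        2 * ∫ x in Ioi (0:ℝ) ×ˢ Ioo (0:ℝ) 1, u x ^ 2 * (1 + x.1) ^ (-2 : ℝ) := by
    have h2 : IntegrableOn (fun x : ℝ × ℝ => 2 * u x ^ 2 * (1 + x.1) ^ (-2 : ℝ))
        (Ioi (0:ℝ) ×ˢ Ioo (0:ℝ) 1) := by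
      simpa [mul_assoc, IntegrableOn] using hwmble.const_mul 2
    rw [integral_add hId2.integrableOn h2]
    congr 1
    simp_rw [mul_assoc]
    exact integral_const_mul 2 _
  have hA : (∫ x in Ioi (0:ℝ) ×ˢ Ioo (0:ℝ) 1, (fderiv ℝ u x (0, 1)) ^ 2) ≤
      ∫ x in Ioi (0:ℝ) ×ˢ Ioo (0:ℝ) 1,
        ((fderiv ℝ u x (1, 0)) ^ 2 + (fderiv ℝ u x (0, 1)) ^ 2) :=
    setIntegral_mono_on hId2.integrableOn hIdd.integrableOn hprodmeas
      (fun x _ => by nlinarith [sq_nonneg (fderiv ℝ u x (1, 0))])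
  have hA0 : 0 ≤ ∫ x in Ioi (0:ℝ) ×ˢ Ioo (0:ℝ) 1,
      ((fderiv ℝ u x (1, 0)) ^ 2 + (fderiv ℝ u x (0, 1)) ^ 2) :=
    setIntegral_nonneg hprodmeas (fun x _ => by positivity)
  have hmain : (∫ x₁ in Ioi (0:ℝ), u (x₁, 1) ^ 2 * (1 + x₁) ^ (-2 : ℝ)) ≤
      ∫ x₁ in Ioi (0:ℝ), ∫ t in Ioo (0:ℝ) 1,
        ((fderiv ℝ u (x₁, t) (0, 1)) ^ 2 + 2 * u (x₁, t) ^ 2 * (1 + x₁) ^ (-2 : ℝ)) :=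
    setIntegral_mono_on hL hHInt measurableSet_Ioi stepA
  rw [← hFub] at hmain
  rw [hsplit] at hmain
  linarith
end

section
/- Let κ > 0, α > 2 and a < 0. Then lim_{ε→0⁺} ε^{1 − 3/(1+α)} ∫_a^0 ξ² / (κ(−ξ)^{1+α} + ε) dξ = (1/3) κ^{−3/(1+α)} · (3π/(1+α)) / sin(3π/(1+α)). Equivalently, ∫_a^0 ξ²/(κ(−ξ)^{1+α} + ε) dξ ∼ (1/3) ε^{3/(1+α) − 1} κ^{−3/(1+α)} (3π/(1+α))/sin(3π/(1+α)) as ε → 0⁺. -/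
open Set MeasureTheory Real Filter


lemma beta_reflection {s : ℝ} (h0 : 0 < s) (h1 : s < 1) :
    ∫ u in (0:ℝ)..1, u ^ (s - 1) * (1 - u) ^ (-s) = π / Real.sin (π * s) := by
  have hs : 0 < (s : ℂ).re := by simpa using h0
  have ht : 0 < ((1 : ℂ) - s).re := by simp [Complex.sub_re]; linarith
  have hB := Complex.Gamma_mul_Gamma_eq_betaIntegral hs ht
  rw [show (s : ℂ) + (1 - s) = 1 by ring, Complex.Gamma_one, one_mul] at hB
  have hrefl := Complex.Gamma_mul_Gamma_one_sub (s : ℂ)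
  rw [hrefl] at hB
  unfold Complex.betaIntegral at hB
  have key : ∫ (x : ℝ) in (0:ℝ)..1, (x : ℂ) ^ ((s : ℂ) - 1) * ((1 : ℂ) - x) ^ ((1 - (s:ℂ)) - 1)
      = ((∫ u in (0:ℝ)..1, u ^ (s - 1) * (1 - u) ^ (-s) : ℝ) : ℂ) := by
    rw [← intervalIntegral.integral_ofReal]
    apply intervalIntegral.integral_congr
    intro x hx
    rw [uIcc_of_le (by norm_num : (0:ℝ) ≤ 1)] at hx
    have hx0 : 0 ≤ x := hx.1
    have hx1 : 0 ≤ 1 - x := by linarith [hx.2]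
    have e1 : ((x : ℝ) ^ (s - 1) : ℝ) = ((x:ℂ) ^ ((s:ℂ) - 1) : ℂ) := by
      rw [Complex.ofReal_cpow hx0]; push_cast; ring_nf
    have e2 : (((1 - x) : ℝ) ^ (-s) : ℝ) = (((1:ℂ) - x) ^ ((1 - (s:ℂ)) - 1) : ℂ) := by
      rw [show ((1:ℂ) - (s:ℂ)) - 1 = ((-s : ℝ) : ℂ) by push_cast; ring,
        show ((1:ℂ) - x) = (((1 - x : ℝ)) : ℂ) by push_cast; ring,
        ← Complex.ofReal_cpow hx1]
    push_cast [← e1, ← e2]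
    ring
  rw [key] at hB
  have hsin : Real.sin (π * s) ≠ 0 := by
    apply ne_of_gt
    apply Real.sin_pos_of_pos_of_lt_pi (by positivity)
    calc π * s < π * 1 := by exact mul_lt_mul_of_pos_left h1 Real.pi_pos
    _ = π := mul_one π
  have : ((π / Real.sin (π * s) : ℝ) : ℂ) = (π : ℂ) / Complex.sin (π * s) := by
    push_cast [Complex.ofReal_sin]
    ring_nf
  rw [← this] at hB
  exact_mod_cast hB.symm


lemma mellin_one_add {s : ℝ} (h0 : 0 < s) (h1 : s < 1) :
    ∫ y in Ioi (0:ℝ), y ^ (s - 1) / (1 + y) = ∫ u in Ioo (0:ℝ) 1, u ^ (s - 1) * (1 - u) ^ (-s) := by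
  set f : ℝ → ℝ := fun u => u / (1 - u) with hf
  have himg : f '' Ioo 0 1 = Ioi 0 := by
    ext y; constructor
    · rintro ⟨u, ⟨hu0, hu1⟩, rfl⟩
      exact div_pos hu0 (by linarith)
    · intro hy
      refine ⟨y / (1 + y), ⟨div_pos hy (by linarith [mem_Ioi.mp hy]), ?_⟩, ?_⟩
      · rw [div_lt_one (by linarith [mem_Ioi.mp hy])]; linarith [mem_Ioi.mp hy]
      · have hy' : (0:ℝ) < y := hy
        simp only [hf]
        rw [div_eq_iff]
        · field_simp; ring
        · have : 1 - y / (1 + y) = 1 / (1 + y) := by field_simp; ring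
          rw [this]; positivity
  have hderiv : ∀ u ∈ Ioo (0:ℝ) 1, HasDerivWithinAt f (((1 - u) ^ 2)⁻¹) (Ioo 0 1) u := by
    intro u hu
    have h1u : (1 : ℝ) - u ≠ 0 := sub_ne_zero_of_ne (by linarith [hu.2])
    have : HasDerivAt f ((1 * (1 - u) - u * (-1)) / (1 - u) ^ 2) u := by
      exact (hasDerivAt_id u).div ((hasDerivAt_id u).const_sub 1) h1u
    refine this.hasDerivWithinAt.congr_deriv ?_
    ring
  have hinj : InjOn f (Ioo 0 1) := by
    rintro x ⟨hx0, hx1⟩ y ⟨hy0, hy1⟩ hxy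
    simp only [hf] at hxy
    rw [div_eq_div_iff (by linarith) (by linarith)] at hxy
    nlinarith
  have := integral_image_eq_integral_abs_deriv_smul measurableSet_Ioo hderiv hinj
    (fun y => y ^ (s - 1) / (1 + y))
  rw [himg] at this
  rw [this]
  apply setIntegral_congr_fun measurableSet_Ioo
  intro u hu
  obtain ⟨hu0, hu1⟩ := hu
  have hv0 : (0:ℝ) < 1 - u := by linarith
  have h1p : (1 : ℝ) + u / (1 - u) = 1 / (1 - u) := by field_simp; ring
  simp only [hf, smul_eq_mul, h1p]
  rw [abs_of_pos (by positivity)]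
  rw [Real.div_rpow hu0.le hv0.le, Real.rpow_sub hv0, Real.rpow_one, Real.rpow_neg hv0.le]
  have hvs : (1 - u) ^ s ≠ 0 := (Real.rpow_pos_of_pos hv0 s).ne'
  field_simp


lemma g_cont' {p : ℝ} (hp : 0 < p) :
    ContinuousOn (fun t : ℝ => t ^ 2 / (1 + t ^ p)) (Ici 0) := by
  apply ContinuousOn.div
  · exact (continuous_pow 2).continuousOn
  · exact (continuous_const.add (Real.continuous_rpow_const hp.le)).continuousOn
  · intro t ht
    have : (0:ℝ) ≤ t ^ p := Real.rpow_nonneg ht p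
    positivity

lemma g_integrable' {p : ℝ} (hp : 3 < p) :
    IntegrableOn (fun t : ℝ => t ^ 2 / (1 + t ^ p)) (Ioi 0) := by
  have hc := g_cont' (by linarith : (0:ℝ) < p)
  rw [← Ioc_union_Ioi_eq_Ioi (zero_le_one' ℝ)]
  apply IntegrableOn.union
  · exact ((hc.mono (Icc_subset_Ici_self)).integrableOn_Icc).mono_set Ioc_subset_Icc_self
  · have hbase : IntegrableOn (fun t : ℝ => t ^ (2 - p)) (Ioi 1) := by
      simpa using integrableOn_Ioi_rpow_of_lt (show 2 - p < -1 by linarith) zero_lt_one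
    apply Integrable.mono' hbase
    · exact (hc.mono (fun t (ht : t ∈ Ioi (1:ℝ)) => mem_Ici.mpr (le_of_lt (lt_of_lt_of_le zero_lt_one (le_of_lt ht))))).aestronglyMeasurable measurableSet_Ioi
    · filter_upwards [ae_restrict_mem measurableSet_Ioi] with t ht
      have ht1 : (1:ℝ) < t := ht
      have ht0 : (0:ℝ) < t := by linarith
      have htp : (0:ℝ) < t ^ p := Real.rpow_pos_of_pos ht0 p
      have hnn : (0:ℝ) ≤ t ^ 2 / (1 + t ^ p) := by positivity
      rw [Real.norm_eq_abs, abs_of_nonneg hnn]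
      have e : t ^ (2 - p) = t ^ 2 / t ^ p := by
        rw [Real.rpow_sub ht0]
        norm_num [Real.rpow_natCast t 2]
      rw [e]
      apply div_le_div_of_nonneg_left (by positivity) htp (by linarith)

lemma g_value {p : ℝ} (hp : 3 < p) :
    ∫ t in Ioi (0:ℝ), t ^ 2 / (1 + t ^ p) = (1/p) * (π / Real.sin (π * (3/p))) := by
  have hp0 : (0:ℝ) < p := by linarith
  set s : ℝ := 3 / p with hs
  have hs0 : 0 < s := by positivity
  have hs1 : s < 1 := by rw [hs, div_lt_one hp0]; linarith
  have hps : p * s = 3 := by rw [hs]; field_simp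
  have step1 : ∫ t in Ioi (0:ℝ), t ^ 2 / (1 + t ^ p)
      = ∫ x in Ioi (0:ℝ), (p * x ^ (p - 1)) • ((1/p) * ((x ^ p) ^ (s - 1) / (1 + x ^ p))) := by
    apply setIntegral_congr_fun measurableSet_Ioi
    intro x hx
    have hx0 : (0:ℝ) < x := hx
    have e1 : (x ^ p) ^ (s - 1) = x ^ (p * (s - 1)) := (Real.rpow_mul hx0.le p (s-1)).symm
    have e2 : x ^ (p - 1) * x ^ (p * (s - 1)) = x ^ ((p - 1) + p * (s - 1)) :=
      (Real.rpow_add hx0 _ _).symm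
    have e3 : (p - 1) + p * (s - 1) = 2 := by nlinarith
    have e4 : x ^ ((2:ℕ):ℝ) = x ^ (2:ℕ) := Real.rpow_natCast x 2
    simp only [smul_eq_mul, e1]
    rw [show p * x ^ (p-1) * (1/p * (x ^ (p * (s-1)) / (1 + x ^ p)))
        = (x ^ (p-1) * x ^ (p * (s-1))) / (1 + x ^ p) by field_simp, e2, e3]
    norm_num at e4 ⊢
  have h2 := integral_comp_rpow_Ioi_of_pos
    (g := fun y : ℝ => (1/p) * (y ^ (s - 1) / (1 + y))) hp0
  rw [step1, h2]
  rw [MeasureTheory.integral_const_mul]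
  congr 1
  rw [mellin_one_add hs0 hs1, ← beta_reflection hs0 hs1,
    intervalIntegral.integral_of_le (by norm_num : (0:ℝ) ≤ 1),
    MeasureTheory.integral_Ioc_eq_integral_Ioo]


lemma stmt16_key (κ α a : ℝ) (hκ : 0 < κ) (hα : 2 < α) (ha : a < 0) (ε : ℝ) (hε : 0 < ε) :
    ε ^ (1 - 3 / (1 + α)) * ∫ ξ in a..(0 : ℝ), ξ ^ 2 / (κ * (-ξ) ^ (1 + α) + ε)
    = κ ^ (-(3 / (1 + α))) *
      ∫ t in (0:ℝ)..((-a) / (ε / κ) ^ ((1:ℝ)/(1 + α))), t ^ 2 / (1 + t ^ (1 + α)) := by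
  set p : ℝ := 1 + α with hp
  have hp3 : (3:ℝ) < p := by simp only [hp]; linarith
  have hp0 : (0:ℝ) < p := by linarith
  set l : ℝ := (ε / κ) ^ ((1:ℝ)/p) with hl
  have hl0 : 0 < l := Real.rpow_pos_of_pos (div_pos hε hκ) _
  have hlp : l ^ p = ε / κ := by
    rw [hl, ← Real.rpow_mul (div_pos hε hκ).le, one_div_mul_cancel hp0.ne', Real.rpow_one]
  have h1 : (∫ ξ in a..(0:ℝ), ξ ^ 2 / (κ * (-ξ) ^ p + ε))
      = ∫ x in (0:ℝ)..(-a), x ^ 2 / (κ * x ^ p + ε) := by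
    rw [show (∫ x in (0:ℝ)..(-a), x ^ 2 / (κ * x ^ p + ε))
        = ∫ x in (0:ℝ)..(-a), (fun ξ => ξ ^ 2 / (κ * (-ξ) ^ p + ε)) (-x) by
      apply intervalIntegral.integral_congr
      intro x _
      simp [neg_neg]]
    rw [intervalIntegral.integral_comp_neg (fun ξ => ξ ^ 2 / (κ * (-ξ) ^ p + ε))]
    norm_num
  have h2 : l • (∫ t in (0:ℝ)..(-a/l), (fun x => x ^ 2 / (κ * x ^ p + ε)) (l * t))
      = ∫ x in (0:ℝ)..(-a), x ^ 2 / (κ * x ^ p + ε) := by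
    have h := intervalIntegral.smul_integral_comp_mul_left
      (f := fun x => x ^ 2 / (κ * x ^ p + ε)) (a := (0:ℝ)) (b := -a/l) l
    rwa [mul_zero, show l * (-a/l) = -a by rw [mul_comm]; exact div_mul_cancel₀ (-a) hl0.ne'] at h
  have h3 : (∫ t in (0:ℝ)..(-a/l), (fun x => x ^ 2 / (κ * x ^ p + ε)) (l * t))
      = (l^2 / ε) * ∫ t in (0:ℝ)..(-a/l), t ^ 2 / (1 + t ^ p) := by
    rw [← intervalIntegral.integral_const_mul]
    apply intervalIntegral.integral_congr
    intro t ht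
    rw [uIcc_of_le (div_nonneg (by linarith) hl0.le)] at ht
    have ht0 : 0 ≤ t := ht.1
    have e1 : (l * t) ^ p = l ^ p * t ^ p := Real.mul_rpow hl0.le ht0
    have htp : (0:ℝ) ≤ t ^ p := Real.rpow_nonneg ht0 p
    have hden : (1:ℝ) + t ^ p ≠ 0 := by positivity
    simp only
    rw [e1, hlp, mul_pow, show κ * (ε / κ * t ^ p) + ε = ε * (1 + t ^ p) by field_simp; ring]
    field_simp
  rw [h1, ← h2, h3, smul_eq_mul]
  have hl3 : l * l ^ 2 = ε ^ (3/p) * κ ^ (-(3/p)) := by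
    have e : l * l ^ 2 = l ^ (3:ℝ) := by
      rw [show (3:ℝ) = ((3:ℕ):ℝ) by norm_num, Real.rpow_natCast]; ring
    rw [e, hl, ← Real.rpow_mul (div_pos hε hκ).le, show (1:ℝ)/p * 3 = 3/p by ring,
      Real.div_rpow hε.le hκ.le, Real.rpow_neg hκ.le, div_eq_mul_inv]
  have hee : ε ^ (1 - 3/p) * ε ^ (3/p) = ε := by
    rw [← Real.rpow_add hε]; norm_num
  calc ε ^ (1 - 3/p) * (l * ((l^2/ε) * ∫ t in (0:ℝ)..(-a/l), t ^ 2 / (1 + t ^ p)))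
      = (ε ^ (1 - 3/p) * ε ^ (3/p)) * κ ^ (-(3/p)) / ε
        * ∫ t in (0:ℝ)..(-a/l), t ^ 2 / (1 + t ^ p) := by
        rw [show l * ((l^2/ε) * ∫ t in (0:ℝ)..(-a/l), t ^ 2 / (1 + t ^ p))
            = (l * l^2) / ε * ∫ t in (0:ℝ)..(-a/l), t ^ 2 / (1 + t ^ p) by ring, hl3]
        ring
    _ = κ ^ (-(3/p)) * ∫ t in (0:ℝ)..(-a/l), t ^ 2 / (1 + t ^ p) := by
        rw [hee, mul_comm ε _, mul_div_assoc, div_self hε.ne', mul_one]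

/-- for κ > 0, α > 2 and a < 0,
ε^{1−3/(1+α)} ∫_a^0 ξ²/(κ(−ξ)^{1+α}+ε) dξ → (1/3) κ^{−3/(1+α)} (3π/(1+α))/sin(3π/(1+α))
as ε → 0⁺. -/
theorem stmt_16 (κ α a : ℝ) (hκ : 0 < κ) (hα : 2 < α) (ha : a < 0) :
    Tendsto
      (fun ε : ℝ => ε ^ (1 - 3 / (1 + α)) *
        ∫ ξ in a..(0 : ℝ), ξ ^ 2 / (κ * (-ξ) ^ (1 + α) + ε))
      (nhdsWithin 0 (Ioi 0))
      (nhds ((1 / 3) * κ ^ (-(3 / (1 + α))) *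
        ((3 * π / (1 + α)) / Real.sin (3 * π / (1 + α))))) := by
  have hp0 : (0:ℝ) < 1 + α := by linarith
  have hp3 : (3:ℝ) < 1 + α := by linarith
  -- T tends to infinity
  have hT : Tendsto (fun ε : ℝ => (-a) / (ε / κ) ^ ((1:ℝ)/(1 + α)))
      (nhdsWithin 0 (Ioi 0)) atTop := by
    have h1 : Tendsto (fun ε : ℝ => (ε / κ) ^ ((1:ℝ)/(1+α))) (nhdsWithin 0 (Ioi 0))
        (nhdsWithin 0 (Ioi 0)) := by
      rw [tendsto_nhdsWithin_iff]
      constructor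
      · have hc : Tendsto (fun ε : ℝ => (ε / κ) ^ ((1:ℝ)/(1+α))) (nhds 0)
            (nhds ((0 / κ) ^ ((1:ℝ)/(1+α)))) :=
          ((Real.continuous_rpow_const (by positivity)).comp (continuous_id.div_const κ)).tendsto 0
        rw [zero_div, Real.zero_rpow (by positivity : (1:ℝ)/(1+α) ≠ 0)] at hc
        exact hc.mono_left nhdsWithin_le_nhds
      · filter_upwards [self_mem_nhdsWithin] with ε hε
        exact Real.rpow_pos_of_pos (div_pos hε hκ) _
    have h2 := h1.inv_tendsto_nhdsGT_zero
    have h3 := h2.const_mul_atTop (show (0:ℝ) < -a by linarith)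
    simpa [div_eq_mul_inv] using h3
  have hmain := intervalIntegral_tendsto_integral_Ioi 0 (g_integrable' hp3) hT
  have hlim := hmain.const_mul (κ ^ (-(3 / (1 + α))))
  have hval : κ ^ (-(3 / (1 + α))) * ∫ t in Ioi (0:ℝ), t ^ 2 / (1 + t ^ (1+α))
      = (1 / 3) * κ ^ (-(3 / (1 + α))) *
        ((3 * π / (1 + α)) / Real.sin (3 * π / (1 + α))) := by
    rw [g_value hp3, show π * (3/(1+α)) = 3 * π / (1+α) by ring]
    ring
  rw [hval] at hlim
  apply hlim.congr'
  filter_upwards [self_mem_nhdsWithin] with ε hε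
  exact (stmt16_key κ α a hκ hα ha ε hε).symm
end

section
/- Let κ > 0, α > 0 and δ < 0. With μ₀(x₁) = −(ακ)^{−1/α}(x₁ + x̂₁)^{−1/α}, x̂₁ = (ακ)⁻¹|δ|⁻ᵅ, and ℓ_ε = ∫_δ^0 ds/(κ|s|^{1+α} + ε) for ε > 0, one has lim_{ε→0⁺} ε / (κ(−μ₀(ℓ_ε))^{1+α}) = [ α · (π/(α+1))/sin(π/(α+1)) ]^{(α+1)/α}. In particular the ratio G_ε(ℓ_ε) = H_ε(μ_ε(ℓ_ε⁻)) / H₀(μ₀(ℓ_ε)) = ε / H₀(μ₀(ℓ_ε)) stays bounded as ε → 0⁺. -/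
open Set MeasureTheory Real Filter
open Topology

lemma beta_real {s : ℝ} (hs0 : 0 < s) (hs1 : s < 1) :
    ∫ x in (0:ℝ)..1, x ^ (s-1) * (1-x) ^ (-s) = π / Real.sin (π * s) := by
  have h1 : Complex.betaIntegral (s : ℂ) ((1 - s : ℝ) : ℂ)
      = ((π / Real.sin (π * s) : ℝ) : ℂ) := by
    have hb := Complex.Gamma_mul_Gamma_eq_betaIntegral (s := (s : ℂ)) (t := ((1 - s : ℝ) : ℂ))
      (by simpa using hs0) (by simpa using sub_pos.mpr hs1)
    have hsum : (s : ℂ) + ((1 - s : ℝ) : ℂ) = 1 := by push_cast; ring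
    rw [hsum, Complex.Gamma_one, one_mul] at hb
    rw [← hb, Complex.Gamma_ofReal, Complex.Gamma_ofReal, ← Complex.ofReal_mul,
      Real.Gamma_mul_Gamma_one_sub]
  have h2 : Complex.betaIntegral (s : ℂ) ((1 - s : ℝ) : ℂ)
      = ((∫ x in (0:ℝ)..1, x ^ (s-1) * (1-x) ^ (-s) : ℝ) : ℂ) := by
    rw [Complex.betaIntegral, ← intervalIntegral.integral_ofReal]
    apply intervalIntegral.integral_congr
    intro x hx
    rw [uIcc_of_le (by norm_num : (0:ℝ) ≤ 1)] at hx
    obtain ⟨hx0, hx1⟩ := hx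
    have e1 : ((s : ℂ) - 1) = ((s - 1 : ℝ) : ℂ) := by push_cast; ring
    have e2 : (((1 - s : ℝ) : ℂ) - 1) = ((-s : ℝ) : ℂ) := by push_cast; ring
    have e3 : (1 - (x : ℂ)) = ((1 - x : ℝ) : ℂ) := by push_cast; ring
    show (x:ℂ) ^ ((s:ℂ)-1) * (1 - (x:ℂ)) ^ (((1-s:ℝ):ℂ)-1) = _
    rw [e1, e2, e3, ← Complex.ofReal_cpow hx0, ← Complex.ofReal_cpow (by linarith),
      ← Complex.ofReal_mul]
  have := h2.symm.trans h1
  exact_mod_cast this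

lemma J_val {s : ℝ} (hs0 : 0 < s) (hs1 : s < 1) :
    ∫ y in Ioi (0:ℝ), y ^ (s-1) * (1+y)⁻¹ = π / Real.sin (π * s) := by
  set f : ℝ → ℝ := fun x => x / (1-x) with hf
  have himg : f '' Ioo 0 1 = Ioi (0:ℝ) := by
    ext y
    constructor
    · rintro ⟨x, ⟨hx0, hx1⟩, rfl⟩
      exact div_pos hx0 (by linarith)
    · intro hy
      refine ⟨y / (1+y), ⟨div_pos hy (by linarith [mem_Ioi.mp hy]), ?_⟩, ?_⟩
      · rw [div_lt_one (by linarith [mem_Ioi.mp hy])]; linarith [mem_Ioi.mp hy]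
      · have h1y : (0:ℝ) < 1 + y := by linarith [mem_Ioi.mp hy]
        simp only [hf]
        rw [show (1 - y/(1+y)) = (1+y)⁻¹ by field_simp; ring]
        field_simp
  have hderiv : ∀ x ∈ Ioo (0:ℝ) 1, HasDerivWithinAt f (((1-x)^2)⁻¹) (Ioo 0 1) x := by
    intro x ⟨hx0, hx1⟩
    have h : HasDerivAt f ((1*(1-x) - x*(-1)) / (1-x)^2) x :=
      (hasDerivAt_id x).div ((hasDerivAt_id x).const_sub 1) (by intro h; linarith)
    have : (1*(1-x) - x*(-1)) / (1-x)^2 = ((1-x)^2)⁻¹ := by field_simp; ring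
    rw [this] at h
    exact h.hasDerivWithinAt
  have hinj : InjOn f (Ioo 0 1) := by
    intro a ⟨ha0, ha1⟩ b ⟨hb0, hb1⟩ hab
    simp only [hf] at hab
    rw [div_eq_div_iff (by linarith) (by linarith)] at hab
    nlinarith
  have key := integral_image_eq_integral_abs_deriv_smul measurableSet_Ioo hderiv hinj
    (fun y => y ^ (s-1) * (1+y)⁻¹)
  rw [himg] at key
  rw [key]
  have hcongr : ∀ x ∈ Ioo (0:ℝ) 1,
      |((1-x)^2)⁻¹| • ((f x) ^ (s-1) * (1 + f x)⁻¹) = x ^ (s-1) * (1-x) ^ (-s) := by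
    intro x ⟨hx0, hx1⟩
    have ht0 : (0:ℝ) < 1 - x := by linarith
    have h1 : (1 + f x)⁻¹ = 1 - x := by
      simp only [hf]
      rw [show 1 + x/(1-x) = (1-x)⁻¹ by field_simp; ring]
      rw [inv_inv]
    have h2 : (f x) ^ (s-1) = x ^ (s-1) / (1-x) ^ (s-1) := by
      simp only [hf]; exact Real.div_rpow hx0.le ht0.le _
    rw [smul_eq_mul, h1, h2, abs_of_pos (by positivity)]
    have h3 : (1-x) ^ (-s) = ((1-x) ^ (s-1))⁻¹ * (1-x)⁻¹ := by
      rw [← Real.rpow_neg ht0.le, ← Real.rpow_neg_one (1-x), ← Real.rpow_add ht0]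
      ring_nf
    rw [h3]
    have h4 : ((1-x) ^ (s-1)) ≠ 0 := (Real.rpow_pos_of_pos ht0 _).ne'
    field_simp
  rw [setIntegral_congr_fun measurableSet_Ioo hcongr,
    ← integral_Ioc_eq_integral_Ioo, ← intervalIntegral.integral_of_le (by norm_num : (0:ℝ) ≤ 1)]
  exact beta_real hs0 hs1

lemma I_val {p : ℝ} (hp : 1 < p) :
    ∫ t in Ioi (0:ℝ), (1 + t ^ p)⁻¹ = (π / p) / Real.sin (π / p) := by
  have hp0 : (0:ℝ) < p := by linarith
  set s : ℝ := 1 / p with hs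
  have hs0 : 0 < s := by positivity
  have hs1 : s < 1 := by rw [hs, div_lt_one hp0]; linarith
  have key := integral_comp_rpow_Ioi (fun y => s * (y ^ (s-1) * (1+y)⁻¹)) hp0.ne'
  have hL : ∫ x in Ioi (0:ℝ), (|p| * x ^ (p - 1)) • (s * ((x ^ p) ^ (s-1) * (1 + x ^ p)⁻¹))
      = ∫ x in Ioi (0:ℝ), (1 + x ^ p)⁻¹ := by
    apply setIntegral_congr_fun measurableSet_Ioi
    intro x hx
    have hx0 : (0:ℝ) < x := hx
    have h1 : (x ^ p) ^ (s-1) = x ^ (p * (s-1)) := (Real.rpow_mul hx0.le _ _).symm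
    have h2 : |p| * x ^ (p-1) * (s * (x ^ (p*(s-1)) * (1+x^p)⁻¹))
        = (p * s) * (x ^ (p-1) * x ^ (p*(s-1))) * (1+x^p)⁻¹ := by
      rw [abs_of_pos hp0]; ring
    have h3 : x ^ (p-1) * x ^ (p*(s-1)) = x ^ ((p-1) + p*(s-1)) := (Real.rpow_add hx0 _ _).symm
    have h4 : (p-1) + p*(s-1) = 0 := by
      rw [hs]; field_simp; ring
    have h5 : p * s = 1 := by rw [hs]; field_simp
    simp only [smul_eq_mul]
    rw [h1, h2, h3, h4, h5, Real.rpow_zero]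
    ring
  rw [hL] at key
  rw [key, MeasureTheory.integral_const_mul, J_val hs0 hs1]
  rw [hs, mul_one_div]
  ring

lemma I_int {p : ℝ} (hp : 1 < p) :
    IntegrableOn (fun t : ℝ => (1 + t ^ p)⁻¹) (Ioi 0) := by
  have hp0 : (0:ℝ) < p := by linarith
  have hcont : ContinuousOn (fun t : ℝ => (1 + t ^ p)⁻¹) (Ici 0) := by
    apply ContinuousOn.inv₀
    · exact continuousOn_const.add fun x hx =>
        (Real.continuousAt_rpow_const x p (Or.inr hp0.le)).continuousWithinAt
    · intro x hx
      have : (0:ℝ) ≤ x ^ p := Real.rpow_nonneg hx _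
      positivity
  have h1 : IntegrableOn (fun t : ℝ => (1 + t ^ p)⁻¹) (Ioc 0 1) :=
    ((hcont.mono (Icc_subset_Ici_self)).integrableOn_Icc).mono_set Ioc_subset_Icc_self
  have h2 : IntegrableOn (fun t : ℝ => (1 + t ^ p)⁻¹) (Ioi 1) := by
    apply Integrable.mono' (integrableOn_Ioi_rpow_of_lt (by linarith : -p < -1) one_pos)
    · exact (hcont.mono fun x hx => le_of_lt (by exact lt_trans one_pos (mem_Ioi.mp hx))).aestronglyMeasurable
        measurableSet_Ioi
    · filter_upwards [ae_restrict_mem measurableSet_Ioi] with t ht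
      have ht0 : (0:ℝ) < t := lt_trans one_pos ht
      have htp : (0:ℝ) < t ^ p := Real.rpow_pos_of_pos ht0 _
      rw [Real.norm_eq_abs, abs_of_pos (by positivity), Real.rpow_neg ht0.le]
      exact inv_anti₀ htp (by linarith)
  have := h1.union h2
  rwa [Ioc_union_Ioi_eq_Ioi (by norm_num : (0:ℝ) ≤ 1)] at this

lemma ratio_eq {κ α ε G : ℝ} (hκ : 0 < κ) (hα : 0 < α) (hε : 0 < ε) (hG : 0 < G) :
    ε / (κ * ((α*κ) ^ (-(1/α)) * ((((ε/κ)^(1/(1+α))) * ε⁻¹) * G) ^ (-(1/α))) ^ (1+α))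
      = (α * G) ^ ((1+α)/α) := by
  set p : ℝ := 1 + α with hp
  have hp0 : (0:ℝ) < p := by positivity
  have hA : (0:ℝ) < α * κ := by positivity
  set c : ℝ := (ε/κ) ^ (1/p) with hc
  have hc0 : (0:ℝ) < c := Real.rpow_pos_of_pos (div_pos hε hκ) _
  set D : ℝ := c * ε⁻¹ with hD
  have hD0 : (0:ℝ) < D := by positivity
  -- expand the power of the product
  have h1 : ((α*κ) ^ (-(1/α)) * (D * G) ^ (-(1/α))) ^ p
      = (α*κ) ^ (-(p/α)) * (D * G) ^ (-(p/α)) := by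
    rw [Real.mul_rpow (Real.rpow_nonneg hA.le _) (Real.rpow_nonneg (by positivity) _),
      ← Real.rpow_mul hA.le, ← Real.rpow_mul (by positivity : (0:ℝ) ≤ D * G)]
    rw [show -(1/α) * p = -(p/α) by ring]
  rw [h1]
  have hDG : (D * G) ^ (-(p/α)) = ((D*G) ^ (p/α))⁻¹ := by
    rw [Real.rpow_neg (by positivity : (0:ℝ) ≤ D * G)]
  have hAneg : (α*κ) ^ (-(p/α)) = ((α*κ) ^ (p/α))⁻¹ := by
    rw [Real.rpow_neg hA.le]
  rw [hDG, hAneg]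
  have hDq : D ^ (p/α) = (κ ^ (1/α))⁻¹ * ε⁻¹ := by
    rw [hD, Real.mul_rpow hc0.le (by positivity), hc, ← Real.rpow_mul (by positivity : (0:ℝ) ≤ ε/κ)]
    rw [show 1/p * (p/α) = 1/α by field_simp]
    rw [Real.div_rpow hε.le hκ.le, Real.inv_rpow hε.le]
    rw [div_eq_mul_inv, mul_assoc, ← Real.rpow_neg hε.le]
    have hee : ε ^ (1/α) * ε ^ (-(p/α)) = ε⁻¹ := by
      rw [← Real.rpow_add hε, show 1/α + -(p/α) = -1 by rw [hp]; field_simp; ring,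
        Real.rpow_neg_one]
    rw [show ε ^ (1/α) * ((κ ^ (1/α))⁻¹ * ε ^ (-(p/α)))
        = (κ ^ (1/α))⁻¹ * (ε ^ (1/α) * ε ^ (-(p/α))) by ring, hee]
  have hsplit : (D * G) ^ (p/α) = D ^ (p/α) * G ^ (p/α) := Real.mul_rpow hD0.le hG.le
  have hAq : (α*κ) ^ (p/α) = α ^ (p/α) * κ ^ (p/α) := Real.mul_rpow hα.le hκ.le
  have hRHS : (α * G) ^ (p/α) = α ^ (p/α) * G ^ (p/α) := Real.mul_rpow hα.le hG.le
  rw [hsplit, hDq, hAq, hRHS]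
  have hκq : κ ^ (p/α) = κ * κ ^ (1/α) := by
    rw [show p/α = 1 + 1/α by rw [hp]; field_simp; ring, Real.rpow_add hκ, Real.rpow_one]
  rw [hκq]
  have e1 : (0:ℝ) < α ^ (p/α) := Real.rpow_pos_of_pos hα _
  have e2 : (0:ℝ) < κ ^ (1/α) := Real.rpow_pos_of_pos hκ _
  have e3 : (0:ℝ) < G ^ (p/α) := Real.rpow_pos_of_pos hG _
  field_simp

lemma ell_eq {κ α δ ε : ℝ} (hκ : 0 < κ) (hα : 0 < α) (hδ : δ < 0) (hε : 0 < ε) :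
    (∫ s in δ..(0:ℝ), 1 / (κ * |s| ^ (1+α) + ε))
      = (ε/κ)^(1/(1+α)) * (ε⁻¹ * ∫ t in (0:ℝ)..(-δ / ((ε/κ)^(1/(1+α)))), (1 + t ^ (1+α))⁻¹) := by
  set p : ℝ := 1 + α with hp
  have hp0 : (0:ℝ) < p := by positivity
  set c : ℝ := (ε/κ) ^ (1/p) with hc
  have hc0 : (0:ℝ) < c := Real.rpow_pos_of_pos (div_pos hε hκ) _
  set T : ℝ := -δ / c with hT
  have hT0 : (0:ℝ) < T := div_pos (by linarith) hc0
  -- flip to [0, -δ]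
  have e1 := intervalIntegral.integral_comp_neg (a := (0:ℝ)) (b := -δ)
    (fun s => 1 / (κ * |s| ^ p + ε))
  simp only [abs_neg, neg_neg, neg_zero] at e1
  rw [← e1]
  -- scaling substitution x = c * t
  have e2 := intervalIntegral.smul_integral_comp_mul_left (a := (0:ℝ)) (b := T)
    (fun x => 1 / (κ * |x| ^ p + ε)) c
  have hcT : c * T = -δ := by rw [hT]; field_simp
  rw [mul_zero, hcT] at e2
  rw [← e2, smul_eq_mul]
  congr 1
  have e3 : ∀ t ∈ uIcc (0:ℝ) T, 1 / (κ * |c * t| ^ p + ε) = ε⁻¹ * (1 + t ^ p)⁻¹ := by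
    intro t ht
    rw [uIcc_of_le hT0.le] at ht
    obtain ⟨ht0, _⟩ := ht
    have habs : |c * t| = c * t := abs_of_nonneg (by positivity)
    have hcp : c ^ p = ε / κ := by
      rw [hc, ← Real.rpow_mul (by positivity : (0:ℝ) ≤ ε/κ), one_div_mul_cancel hp0.ne',
        Real.rpow_one]
    rw [habs, Real.mul_rpow hc0.le ht0, hcp]
    rw [show κ * (ε / κ * t ^ p) + ε = ε * (1 + t ^ p) by field_simp; ring]
    rw [one_div, mul_inv]
  rw [intervalIntegral.integral_congr e3, intervalIntegral.integral_const_mul]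

/-- with μ₀(x₁) = −(ακ)^{−1/α}(x₁+x̂₁)^{−1/α}, x̂₁ = (ακ)⁻¹|δ|^{−α}, and
ℓ_ε = ∫_δ^0 ds/(κ|s|^{1+α}+ε), one has
ε / (κ(−μ₀(ℓ_ε))^{1+α}) → [α (π/(α+1))/sin(π/(α+1))]^{(α+1)/α} as ε → 0⁺.
In particular the ratio ε/H₀(μ₀(ℓ_ε)) stays bounded as ε → 0⁺. -/
theorem stmt_19 (κ α δ : ℝ) (hκ : 0 < κ) (hα : 0 < α) (hδ : δ < 0)
    (xhat : ℝ) (hxhat : xhat = (α * κ)⁻¹ * |δ| ^ (-α))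
    (μ₀ : ℝ → ℝ)
    (hμ₀ : ∀ x₁, μ₀ x₁ = -((α * κ) ^ (-(1 / α)) * (x₁ + xhat) ^ (-(1 / α))))
    (ℓ : ℝ → ℝ)
    (hℓ : ∀ ε, 0 < ε → ℓ ε = ∫ s in δ..(0 : ℝ), 1 / (κ * |s| ^ (1 + α) + ε)) :
    Tendsto (fun ε : ℝ => ε / (κ * (-(μ₀ (ℓ ε))) ^ (1 + α))) (nhdsWithin 0 (Ioi 0))
      (nhds ((α * ((π / (α + 1)) / Real.sin (π / (α + 1)))) ^ ((α + 1) / α))) ∧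
    ∃ M : ℝ, ∀ᶠ ε in nhdsWithin (0 : ℝ) (Ioi 0),
      ε / (κ * (-(μ₀ (ℓ ε))) ^ (1 + α)) ≤ M := by
  set p : ℝ := 1 + α with hp
  have hp0 : (0:ℝ) < p := by positivity
  have hp1 : (1:ℝ) < p := by rw [hp]; linarith
  have habsδ : (0:ℝ) < |δ| := abs_pos.mpr hδ.ne
  have hxhat0 : 0 < xhat := by
    rw [hxhat]
    have h1 : (0:ℝ) < |δ| ^ (-α) := Real.rpow_pos_of_pos habsδ _
    positivity
  set C : ℝ := (π/p) / Real.sin (π/p) with hC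
  set c : ℝ → ℝ := fun ε => (ε/κ) ^ (1/p) with hcdef
  set Fn : ℝ → ℝ := fun ε => ∫ t in (0:ℝ)..(-δ / c ε), (1 + t ^ p)⁻¹ with hFn
  set Gn : ℝ → ℝ := fun ε => Fn ε + (ε * (c ε)⁻¹) * xhat with hGn
  have hc0 : ∀ ε : ℝ, 0 < ε → 0 < c ε := fun ε hε =>
    Real.rpow_pos_of_pos (div_pos hε hκ) _
  have hkey : ∀ ε ∈ Ioi (0:ℝ), ε / (κ * (-(μ₀ (ℓ ε))) ^ p) = (α * Gn ε) ^ (p/α) := by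
    intro ε hε
    have hε' : (0:ℝ) < ε := hε
    have hcε := hc0 ε hε'
    have hF0 : 0 ≤ Fn ε :=
      intervalIntegral.integral_nonneg (div_pos (neg_pos.mpr hδ) hcε).le
        (fun t ht => by have := Real.rpow_nonneg ht.1 p; positivity)
    have hG0 : 0 < Gn ε := by
      have h1 : 0 < ε * (c ε)⁻¹ * xhat := by positivity
      simp only [hGn]
      linarith
    have hℓε : ℓ ε = c ε * (ε⁻¹ * Fn ε) := by
      rw [hℓ ε hε']
      exact ell_eq hκ hα hδ hε'
    rw [hμ₀ (ℓ ε), neg_neg]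
    have hBe : ℓ ε + xhat = ((ε/κ)^(1/(1+α)) * ε⁻¹) * Gn ε := by
      rw [hℓε]
      simp only [hGn, hcdef, hp]
      have hcne : ((ε/κ)^(1/(1+α)) : ℝ) ≠ 0 := by
        have := hc0 ε hε'; simp only [hcdef, hp] at this; exact this.ne'
      field_simp
    rw [show (1:ℝ) + α = 1 + α from rfl] at hBe
    rw [hBe]
    exact ratio_eq hκ hα hε' hG0
  -- limit of c within Ioi 0
  have hcTend : Tendsto c (𝓝[>] (0:ℝ)) (𝓝[>] (0:ℝ)) := by
    have h0 : Tendsto c (𝓝 (0:ℝ)) (𝓝 0) := by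
      have hbase : Tendsto (fun ε : ℝ => ε / κ) (𝓝 0) (𝓝 0) := by
        simpa using (continuous_id.div_const κ).tendsto 0
      have hrp : ContinuousAt (fun x : ℝ => x ^ (1/p)) 0 :=
        Real.continuousAt_rpow_const 0 (1/p) (Or.inr (by positivity))
      have := hrp.tendsto.comp hbase
      simpa [hcdef, Function.comp_def, Real.zero_rpow (show (p:ℝ)⁻¹ ≠ 0 by positivity)] using this
    refine tendsto_nhdsWithin_of_tendsto_nhds_of_eventually_within _
      (h0.mono_left nhdsWithin_le_nhds) ?_
    filter_upwards [self_mem_nhdsWithin] with ε hε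
    exact hc0 ε hε
  have hTtop : Tendsto (fun ε => -δ / c ε) (𝓝[>] (0:ℝ)) atTop := by
    have hinv : Tendsto (fun ε => (c ε)⁻¹) (𝓝[>] (0:ℝ)) atTop :=
      tendsto_inv_nhdsGT_zero.comp hcTend
    have := hinv.const_mul_atTop (neg_pos.mpr hδ)
    simpa [div_eq_mul_inv] using this
  have hFTend : Tendsto Fn (𝓝[>] (0:ℝ)) (𝓝 C) := by
    have := intervalIntegral_tendsto_integral_Ioi 0 (I_int hp1) hTtop
    rwa [I_val hp1] at this
  have hsmall : Tendsto (fun ε => ε * (c ε)⁻¹ * xhat) (𝓝[>] (0:ℝ)) (𝓝 0) := by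
    have heq : ∀ ε ∈ Ioi (0:ℝ), κ^(1/p) * xhat * ε ^ (α/p) = ε * (c ε)⁻¹ * xhat := by
      intro ε hε
      have hε' : (0:ℝ) < ε := hε
      have h1 : (c ε)⁻¹ = κ^(1/p) * ε ^ (-(1/p)) := by
        simp only [hcdef]
        rw [Real.div_rpow hε'.le hκ.le, inv_div, div_eq_mul_inv, ← Real.rpow_neg hε'.le]
      rw [h1]
      have h2 : ε * (κ^(1/p) * ε ^ (-(1/p))) = κ^(1/p) * (ε ^ (1:ℝ) * ε ^ (-(1/p))) := by
        rw [Real.rpow_one]; ring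
      rw [h2, ← Real.rpow_add hε', show (1:ℝ) + -(1/p) = α/p by rw [hp]; field_simp; ring]
      ring
    have h0 : Tendsto (fun ε : ℝ => κ^(1/p) * xhat * ε ^ (α/p)) (𝓝[>] (0:ℝ)) (𝓝 0) := by
      have hrp : ContinuousAt (fun x : ℝ => x ^ (α/p)) 0 :=
        Real.continuousAt_rpow_const 0 (α/p) (Or.inr (by positivity))
      have h1 : Tendsto (fun ε : ℝ => ε ^ (α/p)) (𝓝 (0:ℝ)) (𝓝 0) := by
        have := hrp.tendsto
        simpa [Real.zero_rpow (by positivity : (α/p : ℝ) ≠ 0)] using this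
      have h2 : Tendsto (fun ε : ℝ => κ^(1/p) * xhat * ε ^ (α/p)) (𝓝[>] (0:ℝ))
          (𝓝 (κ^(1/p) * xhat * 0)) :=
        (Tendsto.const_mul _ h1).mono_left nhdsWithin_le_nhds
      simpa using h2
    exact h0.congr' (by filter_upwards [self_mem_nhdsWithin] with ε hε; exact heq ε hε)
  have hGTend : Tendsto Gn (𝓝[>] (0:ℝ)) (𝓝 C) := by
    have := hFTend.add hsmall
    simpa [hGn] using this
  have hfinal : Tendsto (fun ε => (α * Gn ε) ^ (p/α)) (𝓝[>] (0:ℝ)) (𝓝 ((α*C) ^ (p/α))) := by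
    have hcont : ContinuousAt (fun y : ℝ => y ^ (p/α)) (α*C) :=
      Real.continuousAt_rpow_const _ _ (Or.inr (by positivity))
    exact hcont.tendsto.comp (hGTend.const_mul α)
  have hTend : Tendsto (fun ε : ℝ => ε / (κ * (-(μ₀ (ℓ ε))) ^ p)) (𝓝[>] (0:ℝ))
      (𝓝 ((α*C) ^ (p/α))) :=
    hfinal.congr' (by filter_upwards [self_mem_nhdsWithin] with ε hε
                      exact (hkey ε hε).symm)
  have htarget : ((α * ((π / (α + 1)) / Real.sin (π / (α + 1)))) ^ ((α + 1) / α) : ℝ)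
      = (α*C) ^ (p/α) := by
    rw [hC, hp, add_comm α 1]
  refine ⟨htarget ▸ hTend, ⟨(α*C) ^ (p/α) + 1, ?_⟩⟩
  exact hTend.eventually (eventually_le_nhds (lt_add_one _))
end
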